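/- arXiv:2007.01854 — 5 statements merged into one kernel-verified Lean document; each statement's English description precedes it below -/
import Mathlib

section
/- Fix an integer base b ≥ 2 and positive real biases p_0, …, p_{b−1} with Σ_{i<b} p_i = 1. Let x : ℕ → {0,…,b−1} be an infinite base-b sequence. Suppose that for every integer k ≥ 1 and every block w of length k in base b, the frequency of w among the consecutive non-overlapping length-k blocks of x starting at index 0 satisfies lim_{ℓ→∞} (1/ℓ)·#{ j < ℓ : x(jk + i) = w(i) for all i < k } = ∏_{i<k} p_{w(i)} (i.e., x is biased simply normal in base b^k with the product biases, for every k). Then for every integer r ≥ 1 and every block v of length r in base b, lim_{n→∞} occ(x[0:n−1], v)/n = ∏_{i<r} p_{v(i)}, where occ(x[0:n−1], v) counts all (overlapping) occurrences of v among the first n digits of x. -/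
open Filter Finset

/-- `occ x n v` is the number of (possibly overlapping) occurrences of the block
`v : Fin r → Fin b` among the first `n` digits of the sequence `x : ℕ → Fin b`,
i.e. the number of starting indices `m` with `m + r ≤ n` such that
`x (m+i) = v i` for all `i < r`. -/
def occ {b : ℕ} (x : ℕ → Fin b) (n : ℕ) {r : ℕ} (v : Fin r → Fin b) : ℕ :=
  ((Finset.range (n + 1 - r)).filter (fun m => ∀ i : Fin r, x (m + i) = v i)).card

private def winEmb {r k : ℕ} (s : ℕ) (hs : s + r ≤ k) (i : Fin r) : Fin k :=
  ⟨s + i, by omega⟩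

private lemma winEmb_inj {r k : ℕ} (s : ℕ) (hs : s + r ≤ k) :
    Function.Injective (winEmb s hs) := by
  intro i j h
  simp only [winEmb, Fin.mk.injEq] at h
  exact Fin.ext (by omega)

private lemma sum_mu {b r k : ℕ} (p : Fin b → ℝ) (hsum : ∑ i, p i = 1)
    (v : Fin r → Fin b) (s : ℕ) (hs : s + r ≤ k) :
    ∑ w ∈ Finset.univ.filter
        (fun w : Fin k → Fin b => ∀ i : Fin r, w (winEmb s hs i) = v i),
      ∏ i, p (w i) = ∏ i, p (v i) := by
  classical
  set e := winEmb s hs with he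
  set f : Fin k → Fin b → ℝ :=
    fun i z => if ∀ j : Fin r, e j = i → z = v j then p z else 0 with hf
  have key : ∀ w : Fin k → Fin b,
      (∏ i, f i (w i)) =
        if (∀ j : Fin r, w (e j) = v j) then ∏ i, p (w i) else 0 := by
    intro w
    by_cases hw : ∀ j : Fin r, w (e j) = v j
    · rw [if_pos hw]
      refine Finset.prod_congr rfl (fun i _ => ?_)
      rw [hf]
      exact if_pos (fun j hj => by rw [← hj]; exact hw j)
    · rw [if_neg hw]
      push_neg at hw
      obtain ⟨j, hj⟩ := hw
      refine Finset.prod_eq_zero (Finset.mem_univ (e j)) ?_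
      rw [hf]
      exact if_neg (fun hcon => hj (hcon j rfl))
  have step1 :
      ∑ w ∈ Finset.univ.filter
        (fun w : Fin k → Fin b => ∀ i : Fin r, w (e i) = v i),
        ∏ i, p (w i) = ∑ w : Fin k → Fin b, ∏ i, f i (w i) := by
    rw [Finset.sum_filter]
    exact Finset.sum_congr rfl (fun w _ => (key w).symm)
  rw [step1, ← Fintype.piFinset_univ, ← Finset.prod_univ_sum (fun _ => Finset.univ) f]
  have hoff : ∀ i : Fin k, i ∈ (Finset.image e Finset.univ)ᶜ → (∑ z, f i z) = 1 := by
    intro i hi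
    rw [Finset.mem_compl] at hi
    have : ∀ z, f i z = p z := by
      intro z
      rw [hf]
      refine if_pos (fun j hj => absurd ?_ hi)
      rw [← hj]
      exact Finset.mem_image_of_mem e (Finset.mem_univ j)
    simp only [this]
    exact hsum
  have hon : ∀ j : Fin r, (∑ z, f (e j) z) = p (v j) := by
    intro j
    have hfz : ∀ z, f (e j) z = if z = v j then p z else 0 := by
      intro z
      rw [hf]
      refine if_congr ⟨fun h => h j rfl, fun h j' hj' => ?_⟩ rfl rfl
      have : j' = j := winEmb_inj s hs hj'
      rw [this] at hj' ⊢
      exact h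
    simp only [hfz]
    rw [Finset.sum_ite_eq' Finset.univ (v j) p, if_pos (Finset.mem_univ _)]
  rw [← Finset.prod_mul_prod_compl (Finset.image e Finset.univ) (fun i => ∑ z, f i z)]
  rw [Finset.prod_eq_one hoff, mul_one]
  rw [Finset.prod_image (fun a _ c _ h => winEmb_inj s hs h)]
  exact Finset.prod_congr rfl (fun j _ => hon j)

private def cntAP {b : ℕ} (x : ℕ → Fin b) (k s : ℕ) {r : ℕ} (v : Fin r → Fin b) (ℓ : ℕ) : ℕ :=
  ((Finset.range ℓ).filter (fun j => ∀ i : Fin r, x (j * k + s + i) = v i)).card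

private lemma cntAP_eq_sum {b r k : ℕ} (x : ℕ → Fin b) (v : Fin r → Fin b)
    (s : ℕ) (hs : s + r ≤ k) (ℓ : ℕ) :
    cntAP x k s v ℓ =
      ∑ w ∈ Finset.univ.filter
          (fun w : Fin k → Fin b => ∀ i : Fin r, w (winEmb s hs i) = v i),
        ((Finset.range ℓ).filter (fun j => ∀ i : Fin k, x (j * k + i) = w i)).card := by
  classical
  simp only [cntAP, Finset.card_filter]
  conv_rhs => rw [Finset.sum_comm (β := ℕ)]
  refine Finset.sum_congr (rfl : Finset.range ℓ = Finset.range ℓ) (fun j _ => ?_)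
  have hcond : ∀ w : Fin k → Fin b,
      (∀ i : Fin k, x (j * k + i) = w i) ↔ w = fun i : Fin k => x (j * k + i) := by
    intro w
    constructor
    · intro h; funext i; exact (h i).symm
    · intro h i; rw [h]
  rw [Finset.sum_congr rfl (fun w _ => if_congr (hcond w) rfl rfl)]
  rw [Finset.sum_ite_eq' _ (fun i : Fin k => x (j * k + i)) (fun _ => 1)]
  congr 1
  rw [Finset.mem_filter]
  simp [winEmb, Nat.add_assoc]

private lemma tendsto_cntAP {b r k : ℕ} (p : Fin b → ℝ) (hsum : ∑ i, p i = 1)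
    (x : ℕ → Fin b)
    (hx : ∀ w : Fin k → Fin b,
      Filter.Tendsto (fun ℓ : ℕ =>
          (((Finset.range ℓ).filter (fun j => ∀ i : Fin k, x (j * k + i) = w i)).card : ℝ) / ℓ)
        Filter.atTop (nhds (∏ i, p (w i))))
    (v : Fin r → Fin b) (s : ℕ) (hs : s + r ≤ k) :
    Filter.Tendsto (fun ℓ : ℕ => (cntAP x k s v ℓ : ℝ) / ℓ)
      Filter.atTop (nhds (∏ i, p (v i))) := by
  classical
  have h := tendsto_finset_sum
    (Finset.univ.filter (fun w : Fin k → Fin b => ∀ i : Fin r, w (winEmb s hs i) = v i))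
    (fun w _ => hx w)
  rw [sum_mu p hsum v s hs] at h
  refine h.congr (fun ℓ => ?_)
  rw [cntAP_eq_sum x v s hs ℓ, Nat.cast_sum, Finset.sum_div]

private lemma occ_lower {b r k : ℕ} (x : ℕ → Fin b) (v : Fin r → Fin b)
    (hr : 1 ≤ r) (hrk : r ≤ k) (n : ℕ) :
    ∑ s ∈ Finset.range (k - r + 1), cntAP x k s v (n / k) ≤ occ x n v := by
  classical
  have hk : 0 < k := lt_of_lt_of_le hr hrk
  set t : ℕ → Finset ℕ := fun s =>
    ((Finset.range (n / k)).filter (fun j => ∀ i : Fin r, x (j * k + s + i) = v i)).image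
      (fun j => j * k + s) with ht
  have hcard : ∀ s, (t s).card = cntAP x k s v (n / k) := by
    intro s
    rw [ht]
    exact Finset.card_image_of_injective _ (fun j₁ j₂ h => by
      simp only [Nat.add_right_cancel_iff] at h
      exact Nat.eq_of_mul_eq_mul_right hk h)
  have hmod : ∀ s ∈ Finset.range (k - r + 1), ∀ m ∈ t s, m % k = s := by
    intro s hs m hm
    rw [ht] at hm
    simp only [Finset.mem_image, Finset.mem_filter, Finset.mem_range] at hm
    obtain ⟨j, _, rfl⟩ := hm
    rw [Finset.mem_range] at hs
    have hsk : s < k := by omega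
    rw [Nat.add_mod, Nat.mul_mod_left, Nat.zero_add, Nat.mod_mod_of_dvd _ (dvd_refl k),
      Nat.mod_eq_of_lt hsk]
  have hdisj : ∀ s₁ ∈ Finset.range (k - r + 1), ∀ s₂ ∈ Finset.range (k - r + 1),
      s₁ ≠ s₂ → Disjoint (t s₁) (t s₂) := by
    intro s₁ h₁ s₂ h₂ hne
    rw [Finset.disjoint_left]
    intro m hm₁ hm₂
    exact hne ((hmod s₁ h₁ m hm₁).symm.trans (hmod s₂ h₂ m hm₂))
  have hsub : (Finset.range (k - r + 1)).biUnion t ⊆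
      (Finset.range (n + 1 - r)).filter (fun m => ∀ i : Fin r, x (m + i) = v i) := by
    intro m hm
    simp only [Finset.mem_biUnion, Finset.mem_range] at hm
    obtain ⟨s, hs, hm⟩ := hm
    rw [ht] at hm
    simp only [Finset.mem_image, Finset.mem_filter, Finset.mem_range] at hm
    obtain ⟨j, ⟨hj, hQ⟩, rfl⟩ := hm
    rw [Finset.mem_filter, Finset.mem_range]
    refine ⟨?_, fun i => hQ i⟩
    have h1 : (j + 1) * k ≤ (n / k) * k := Nat.mul_le_mul_right k hj
    have h2 : (n / k) * k ≤ n := Nat.div_mul_le_self n k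
    have h3 : j * k + k ≤ n := by rw [add_mul, one_mul] at h1; omega
    omega
  calc ∑ s ∈ Finset.range (k - r + 1), cntAP x k s v (n / k)
      = ∑ s ∈ Finset.range (k - r + 1), (t s).card :=
        Finset.sum_congr rfl (fun s _ => (hcard s).symm)
    _ = ((Finset.range (k - r + 1)).biUnion t).card := (Finset.card_biUnion hdisj).symm
    _ ≤ occ x n v := Finset.card_le_card hsub

private lemma occ_upper {b r k : ℕ} (x : ℕ → Fin b) (v : Fin r → Fin b)
    (hr : 1 ≤ r) (hrk : r ≤ k) (n : ℕ) :
    occ x n v ≤ (∑ s ∈ Finset.range (k - r + 1), cntAP x k s v (n / k + 1))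
        + (r - 1) * (n / k + 1) := by
  classical
  have hk : 0 < k := lt_of_lt_of_le hr hrk
  set A : Finset ℕ := (Finset.range (k - r + 1)).biUnion (fun s =>
    ((Finset.range (n / k + 1)).filter (fun j => ∀ i : Fin r, x (j * k + s + i) = v i)).image
      (fun j => j * k + s)) with hA
  set B : Finset ℕ := ((Finset.Ico (k - r + 1) k) ×ˢ (Finset.range (n / k + 1))).image
      (fun q : ℕ × ℕ => q.2 * k + q.1) with hB
  have hsub : (Finset.range (n + 1 - r)).filter (fun m => ∀ i : Fin r, x (m + i) = v i)
      ⊆ A ∪ B := by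
    intro m hm
    rw [Finset.mem_filter, Finset.mem_range] at hm
    obtain ⟨hmn, hP⟩ := hm
    have hmle : m ≤ n := by omega
    have hjle : m / k ≤ n / k := Nat.div_le_div_right hmle
    have hmdm : m / k * k + m % k = m := Nat.div_add_mod' m k
    have hsk : m % k < k := Nat.mod_lt m hk
    by_cases hcase : m % k ≤ k - r
    · apply Finset.mem_union_left
      rw [hA]
      simp only [Finset.mem_biUnion, Finset.mem_range, Finset.mem_image, Finset.mem_filter]
      exact ⟨m % k, by omega, m / k, ⟨by omega, fun i => by rw [hmdm]; exact hP i⟩, hmdm⟩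
    · apply Finset.mem_union_right
      rw [hB]
      simp only [Finset.mem_image, Finset.mem_product, Finset.mem_Ico, Finset.mem_range]
      exact ⟨(m % k, m / k), ⟨⟨by omega, hsk⟩, by omega⟩, hmdm⟩
  have hAcard : A.card ≤ ∑ s ∈ Finset.range (k - r + 1), cntAP x k s v (n / k + 1) :=
    le_trans Finset.card_biUnion_le
      (Finset.sum_le_sum (fun s _ => Finset.card_image_le))
  have hBcard : B.card ≤ (r - 1) * (n / k + 1) := by
    refine le_trans Finset.card_image_le ?_
    rw [Finset.card_product, Nat.card_Ico, Finset.card_range]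
    have : k - (k - r + 1) = r - 1 := by omega
    rw [this]
  calc occ x n v ≤ (A ∪ B).card := Finset.card_le_card hsub
    _ ≤ A.card + B.card := Finset.card_union_le _ _
    _ ≤ _ := Nat.add_le_add hAcard hBcard

private lemma tendsto_nat_div_atTop {k : ℕ} (hk : 0 < k) :
    Filter.Tendsto (fun n : ℕ => n / k) Filter.atTop Filter.atTop :=
  Filter.tendsto_atTop_atTop.mpr
    (fun m => ⟨m * k, fun n hn => (Nat.le_div_iff_mul_le hk).mpr hn⟩)

private lemma tendsto_succ_div_self :
    Filter.Tendsto (fun ℓ : ℕ => ((ℓ : ℝ) + 1) / ℓ) Filter.atTop (nhds 1) := by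
  have h : Filter.Tendsto (fun ℓ : ℕ => 1 + 1 / (ℓ : ℝ)) Filter.atTop (nhds 1) := by
    have h0 := tendsto_one_div_atTop_nhds_zero_nat (𝕜 := ℝ)
    have h1 := (tendsto_const_nhds (x := (1 : ℝ)) (f := Filter.atTop (α := ℕ))).add h0
    simpa using h1
  refine h.congr' ?_
  filter_upwards [Filter.eventually_ge_atTop 1] with ℓ hℓ
  have hℓ0 : (ℓ : ℝ) ≠ 0 := Nat.cast_ne_zero.mpr (by omega)
  field_simp

set_option maxHeartbeats 1000000 in
/-- If `x` is biased simply normal in base `b^k` (with the product biases) for every `k ≥ 1`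
— i.e. each length-`k` block `w` occurs among the consecutive non-overlapping length-`k`
blocks of `x` with limiting frequency `∏_{i<k} p_{w i}` — then every block `v` of length
`r ≥ 1` occurs in `x` (counting all overlapping occurrences) with limiting frequency
`∏_{i<r} p_{v i}`. -/
theorem blocks_freq_of_biased_simply_normal_all_powers (b : ℕ) (hb : 2 ≤ b)
    (p : Fin b → ℝ) (hp : ∀ i, 0 < p i) (hsum : ∑ i, p i = 1) (x : ℕ → Fin b)
    (hx : ∀ k : ℕ, 1 ≤ k → ∀ w : Fin k → Fin b,
      Tendsto
        (fun ℓ : ℕ =>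
          (((Finset.range ℓ).filter (fun j => ∀ i : Fin k, x (j * k + i) = w i)).card : ℝ) / ℓ)
        atTop (nhds (∏ i, p (w i)))) :
    ∀ r : ℕ, 1 ≤ r → ∀ v : Fin r → Fin b,
      Tendsto (fun n : ℕ => (occ x n v : ℝ) / n) atTop (nhds (∏ i, p (v i))) := by
  intro r hr v
  classical
  set L := ∏ i, p (v i) with hL
  have hL0 : 0 ≤ L := Finset.prod_nonneg (fun i _ => (hp (v i)).le)
  have hple : ∀ i, p i ≤ 1 := fun i => by
    rw [← hsum]; exact Finset.single_le_sum (fun j _ => (hp j).le) (Finset.mem_univ i)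
  have hL1 : L ≤ 1 := Finset.prod_le_one (fun i _ => (hp (v i)).le) (fun i _ => hple (v i))
  have hr1 : (1 : ℝ) ≤ r := by exact_mod_cast hr
  rw [Metric.tendsto_atTop]
  intro ε hε
  obtain ⟨k, hrk, hk4⟩ : ∃ k : ℕ, r ≤ k ∧ (r : ℝ) / k ≤ ε / 4 := by
    refine ⟨max r (⌈4 * (r : ℝ) / ε⌉₊ + 1), le_max_left _ _, ?_⟩
    set K := max r (⌈4 * (r : ℝ) / ε⌉₊ + 1) with hK
    have hkpos : (0 : ℝ) < K := by
      have : 1 ≤ K := le_trans hr (le_max_left _ _)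
      exact_mod_cast lt_of_lt_of_le Nat.zero_lt_one (by exact_mod_cast this)
    have hk1 : 4 * (r : ℝ) / ε ≤ (K : ℝ) := by
      have hnat : ⌈4 * (r : ℝ) / ε⌉₊ ≤ K :=
        le_trans (Nat.le_succ _) (le_max_right _ _)
      calc 4 * (r : ℝ) / ε ≤ (⌈4 * (r : ℝ) / ε⌉₊ : ℝ) := Nat.le_ceil _
        _ ≤ (K : ℝ) := by exact_mod_cast hnat
    rw [div_le_iff₀ hε] at hk1
    rw [div_le_div_iff₀ hkpos (by norm_num : (0 : ℝ) < 4)]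
    nlinarith
  have hk : 0 < k := lt_of_lt_of_le hr hrk
  have hk0 : (0 : ℝ) < k := by exact_mod_cast hk
  set c := k - r + 1 with hcdef
  have hcc : (c : ℝ) = (k : ℝ) - r + 1 := by
    rw [hcdef]; push_cast [Nat.cast_sub hrk]; ring
  have hT : ∀ s ∈ Finset.range c,
      Tendsto (fun ℓ : ℕ => (cntAP x k s v ℓ : ℝ) / ℓ) atTop (nhds L) := by
    intro s hs
    rw [Finset.mem_range] at hs
    exact tendsto_cntAP p hsum x (hx k hk) v s (by omega)
  have hsum1 : Tendsto (fun ℓ : ℕ => ∑ s ∈ Finset.range c, (cntAP x k s v ℓ : ℝ) / ℓ)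
      atTop (nhds ((c : ℝ) * L)) := by
    have h := tendsto_finset_sum (Finset.range c) hT
    simpa [Finset.sum_const, nsmul_eq_mul] using h
  -- lower comparison sequence
  have hFdiv : Tendsto (fun ℓ : ℕ => (ℓ : ℝ) / (ℓ + 1)) atTop (nhds 1) :=
    tendsto_natCast_div_add_atTop (1 : ℝ)
  have hF : Tendsto
      (fun ℓ : ℕ => (∑ s ∈ Finset.range c, (cntAP x k s v ℓ : ℝ)) / (((ℓ : ℝ) + 1) * k))
      atTop (nhds ((c : ℝ) * L / k)) := by
    have h1 := (hsum1.mul hFdiv).div_const (k : ℝ)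
    rw [mul_one] at h1
    refine h1.congr' ?_
    filter_upwards [Filter.eventually_ge_atTop 1] with ℓ hℓ
    have hℓ0 : (ℓ : ℝ) ≠ 0 := Nat.cast_ne_zero.mpr (by omega)
    rw [← Finset.sum_div]
    field_simp
  -- upper comparison sequence
  have hshift : ∀ s ∈ Finset.range c,
      Tendsto (fun ℓ : ℕ => (cntAP x k s v (ℓ + 1) : ℝ) / ((ℓ : ℝ) + 1)) atTop (nhds L) := by
    intro s hs
    have h := (hT s hs).comp (Filter.tendsto_add_atTop_nat 1)
    refine h.congr (fun ℓ => ?_)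
    simp [Function.comp]
  have hsum2 : Tendsto
      (fun ℓ : ℕ => ∑ s ∈ Finset.range c, (cntAP x k s v (ℓ + 1) : ℝ) / ((ℓ : ℝ) + 1))
      atTop (nhds ((c : ℝ) * L)) := by
    have h := tendsto_finset_sum (Finset.range c) hshift
    simpa [Finset.sum_const, nsmul_eq_mul] using h
  have hplus := hsum2.add (tendsto_const_nhds (x := (r : ℝ) - 1))
  have hG : Tendsto
      (fun ℓ : ℕ =>
        ((∑ s ∈ Finset.range c, (cntAP x k s v (ℓ + 1) : ℝ)) + ((r : ℝ) - 1) * ((ℓ : ℝ) + 1))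
          / ((ℓ : ℝ) * k))
      atTop (nhds (((c : ℝ) * L + ((r : ℝ) - 1)) / k)) := by
    have h1 := (hplus.mul tendsto_succ_div_self).div_const (k : ℝ)
    rw [mul_one] at h1
    refine h1.congr' ?_
    filter_upwards [Filter.eventually_ge_atTop 1] with ℓ hℓ
    have hℓ0 : (ℓ : ℝ) ≠ 0 := Nat.cast_ne_zero.mpr (by omega)
    rw [← Finset.sum_div]
    field_simp
  have hdivk := tendsto_nat_div_atTop hk
  have hFc := hF.comp hdivk
  have hGc := hG.comp hdivk
  have hFe : ∀ᶠ n : ℕ in atTop,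
      |(∑ s ∈ Finset.range c, (cntAP x k s v (n / k) : ℝ)) / ((((n / k : ℕ) : ℝ) + 1) * k)
        - (c : ℝ) * L / k| < ε / 4 := by
    have h := hFc.eventually (eventually_abs_sub_lt ((c : ℝ) * L / k)
      (by positivity : (0 : ℝ) < ε / 4))
    refine h.mono (fun n hn => ?_)
    simpa [Function.comp] using hn
  have hGe : ∀ᶠ n : ℕ in atTop,
      |((∑ s ∈ Finset.range c, (cntAP x k s v (n / k + 1) : ℝ))
          + ((r : ℝ) - 1) * (((n / k : ℕ) : ℝ) + 1)) / (((n / k : ℕ) : ℝ) * k)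
        - ((c : ℝ) * L + ((r : ℝ) - 1)) / k| < ε / 4 := by
    have h := hGc.eventually (eventually_abs_sub_lt (((c : ℝ) * L + ((r : ℝ) - 1)) / k)
      (by positivity : (0 : ℝ) < ε / 4))
    refine h.mono (fun n hn => ?_)
    simpa [Function.comp] using hn
  -- key numeric estimates
  have key1 : ((c : ℝ) * L + ((r : ℝ) - 1)) / k ≤ L + ε / 4 := by
    have h1 : ((c : ℝ) * L + ((r : ℝ) - 1)) / k ≤ L + (r : ℝ) / k := by
      rw [div_le_iff₀ hk0, add_mul, div_mul_cancel₀ _ hk0.ne']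
      nlinarith [hL0, hL1, hr1]
    linarith
  have key2 : L - ε / 4 ≤ (c : ℝ) * L / k := by
    have h1 : L - (r : ℝ) / k ≤ (c : ℝ) * L / k := by
      rw [le_div_iff₀ hk0, sub_mul, div_mul_cancel₀ _ hk0.ne']
      nlinarith [hL0, hL1, hr1]
    linarith
  rw [Filter.eventually_atTop] at hFe hGe
  obtain ⟨N₁, hN₁⟩ := hFe
  obtain ⟨N₂, hN₂⟩ := hGe
  refine ⟨max (max N₁ N₂) (max k 1), fun n hn => ?_⟩
  have hnN₁ : N₁ ≤ n := le_trans (le_trans (le_max_left _ _) (le_max_left _ _)) hn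
  have hnN₂ : N₂ ≤ n := le_trans (le_trans (le_max_right _ _) (le_max_left _ _)) hn
  have hnk : k ≤ n := le_trans (le_trans (le_max_left _ _) (le_max_right _ _)) hn
  have hn1 : 1 ≤ n := le_trans (le_trans (le_max_right _ _) (le_max_right _ _)) hn
  have hn0 : (0 : ℝ) < n := by exact_mod_cast hn1
  set ℓ := n / k with hℓdef
  have hℓ1 : 1 ≤ ℓ := (Nat.one_le_div_iff hk).mpr hnk
  have hℓ0 : (0 : ℝ) < (ℓ : ℝ) := by exact_mod_cast hℓ1
  -- the two comparison values
  have hFval := hN₁ n hnN₁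
  have hGval := hN₂ n hnN₂
  rw [← hℓdef] at hFval hGval
  -- lower bound : F ≤ occ/n
  have hlow : (∑ s ∈ Finset.range c, (cntAP x k s v ℓ : ℝ)) / (((ℓ : ℝ) + 1) * k)
      ≤ (occ x n v : ℝ) / n := by
    have hnat := occ_lower x v hr hrk n
    have hcast : (∑ s ∈ Finset.range c, (cntAP x k s v ℓ : ℝ)) ≤ (occ x n v : ℝ) := by
      rw [← Nat.cast_sum]
      exact_mod_cast hnat
    have hnle : (n : ℝ) ≤ ((ℓ : ℝ) + 1) * k := by
      have h1 : ℓ * k + n % k = n := by rw [hℓdef]; exact Nat.div_add_mod' n k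
      have h2 : n % k < k := Nat.mod_lt n hk
      have h3 : n ≤ (ℓ + 1) * k := by rw [add_mul, one_mul]; omega
      exact_mod_cast h3
    exact div_le_div₀ (Nat.cast_nonneg _) hcast hn0 hnle
  -- upper bound : occ/n ≤ G
  have hhigh : (occ x n v : ℝ) / n ≤
      ((∑ s ∈ Finset.range c, (cntAP x k s v (ℓ + 1) : ℝ))
        + ((r : ℝ) - 1) * ((ℓ : ℝ) + 1)) / ((ℓ : ℝ) * k) := by
    have hnat := occ_upper x v hr hrk n
    have hcast : (occ x n v : ℝ) ≤
        (∑ s ∈ Finset.range c, (cntAP x k s v (ℓ + 1) : ℝ))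
          + ((r : ℝ) - 1) * ((ℓ : ℝ) + 1) := by
      have h := (Nat.cast_le (α := ℝ)).mpr hnat
      push_cast [Nat.cast_sub hr] at h
      convert h using 2 <;> push_cast <;> ring
    have hden : (0 : ℝ) < (ℓ : ℝ) * k := by positivity
    have hdle : (ℓ : ℝ) * k ≤ n := by
      have h1 : ℓ * k ≤ n := Nat.div_mul_le_self n k
      exact_mod_cast h1
    have hnum0 : (0 : ℝ) ≤
        (∑ s ∈ Finset.range c, (cntAP x k s v (ℓ + 1) : ℝ))
          + ((r : ℝ) - 1) * ((ℓ : ℝ) + 1) := by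
      have h1 : (0 : ℝ) ≤ ∑ s ∈ Finset.range c, (cntAP x k s v (ℓ + 1) : ℝ) :=
        Finset.sum_nonneg (fun s _ => Nat.cast_nonneg _)
      nlinarith [hℓ0]
    exact div_le_div₀ hnum0 hcast hden hdle
  rw [Real.dist_eq, abs_lt]
  rw [abs_lt] at hFval hGval
  obtain ⟨hF1, hF2⟩ := hFval
  obtain ⟨hG1, hG2⟩ := hGval
  constructor
  · linarith
  · linarith
end

section
/- Fix an integer base b ≥ 2 and positive real biases p_0, …, p_{b−1} with Σ_{i<b} p_i = 1. Let x : ℕ → {0,…,b−1} be an infinite base-b sequence. Suppose that for every integer r ≥ 1 and every block v of length r in base b, lim_{n→∞} occ(x[0:n−1], v)/n = ∏_{i<r} p_{v(i)}. Then x is biased normal with respect to p_0, …, p_{b−1}: for every integer k ≥ 1, every starting offset m ≥ 0, and every block w of length k in base b, lim_{N→∞} (1/N)·#{ j < N : x(m + jk + i) = w(i) for all i < k } = ∏_{i<k} p_{w(i)}. -/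
open Filter Finset

namespace BN
variable {b : ℕ}

noncomputable def Mu (p : Fin b → ℝ) {n : ℕ} (u : Fin n → Fin b) : ℝ := ∏ i, p (u i)

def extF {n : ℕ} (d : Fin b) (u : Fin n → Fin b) : ℕ → Fin b :=
  fun i => if h : i < n then u ⟨i, h⟩ else d

def Ms (t s : ℕ) : ℕ := if s = 0 then t else t - 1

def Sj (k t s j : ℕ) : Finset (Fin (t*k)) :=
  univ.filter (fun i' => j*k+s ≤ i'.1 ∧ i'.1 < j*k+s+k)

lemma Mu_nonneg (p : Fin b → ℝ) (hp : ∀ i, 0 < p i) {n : ℕ} (u : Fin n → Fin b) : 0 ≤ Mu p u :=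
  Finset.prod_nonneg fun i _ => (hp (u i)).le

lemma sum_Mu_ind (p : Fin b → ℝ) (hsum : ∑ i, p i = 1) {n : ℕ} (S : Finset (Fin n))
    (g : Fin n → Fin b) :
    ∑ u : Fin n → Fin b, Mu p u * (if ∀ i ∈ S, u i = g i then (1:ℝ) else 0)
      = ∏ i ∈ S, p (g i) := by
  classical
  have key : ∀ u : Fin n → Fin b,
      Mu p u * (if ∀ i ∈ S, u i = g i then (1:ℝ) else 0)
        = ∏ i, (if i ∈ S then (if u i = g i then p (u i) else 0) else p (u i)) := by
    intro u
    by_cases h : ∀ i ∈ S, u i = g i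
    · rw [if_pos h, mul_one, Mu]
      refine Finset.prod_congr rfl fun i _ => ?_
      by_cases hi : i ∈ S
      · simp [hi, h i hi]
      · simp [hi]
    · rw [if_neg h, mul_zero]
      push_neg at h
      obtain ⟨i₀, hi₀, hne⟩ := h
      exact (Finset.prod_eq_zero (Finset.mem_univ i₀) (by simp [hi₀, hne])).symm
  rw [Finset.sum_congr rfl fun u _ => key u]
  have := (Finset.prod_univ_sum (fun _ : Fin n => (univ : Finset (Fin b)))
    (fun i c => (if i ∈ S then (if c = g i then p c else 0) else p c))).symm
  rw [Fintype.piFinset_univ] at this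
  rw [this]
  have : ∀ i : Fin n, (∑ c, (if i ∈ S then (if c = g i then p c else 0) else p c))
      = if i ∈ S then p (g i) else 1 := by
    intro i
    by_cases hi : i ∈ S
    · simp only [hi, if_true]
      rw [Finset.sum_ite_eq' univ (g i) p]; simp
    · simp [hi, hsum]
  rw [Finset.prod_congr rfl fun i _ => this i, Finset.prod_ite_mem, Finset.univ_inter]


lemma sum_Mu_one (p : Fin b → ℝ) (hsum : ∑ i, p i = 1) (n : ℕ) (d : Fin b) :
    ∑ u : Fin n → Fin b, Mu p u = 1 := by
  have := sum_Mu_ind p hsum (∅ : Finset (Fin n)) (fun _ => d)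
  simpa using this

section slots
variable {k t s j j' : ℕ} (w : Fin k → Fin b) (d : Fin b)

lemma slot_lt (hk : 0 < k) (hs : s < k) (hj : j < Ms t s) {i : ℕ} (hi : i < k) :
    j*k+s+i < t*k := by
  rcases Nat.eq_zero_or_pos s with h0 | h0
  · subst h0
    have hj' : j < t := by simpa [Ms] using hj
    have h1 : (j+1)*k ≤ t*k := Nat.mul_le_mul_right k hj'
    have h2 : (j+1)*k = j*k+k := by ring
    omega
  · have hj' : j < t - 1 := by simpa [Ms, Nat.pos_iff_ne_zero.1 h0] using hj
    have h1 : (j+2)*k ≤ t*k := Nat.mul_le_mul_right k (by omega)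
    have h2 : (j+2)*k = j*k+k+k := by ring
    omega


lemma slot_iff (hk : 0 < k) (hs : s < k) (hj : j < Ms t s) (u : Fin (t*k) → Fin b) :
    (∀ i : Fin k, extF d u (j*k+s+i.1) = w i) ↔
      (∀ i' ∈ Sj k t s j, u i' = w ⟨(i'.1 - (j*k+s)) % k, Nat.mod_lt _ hk⟩) := by
  constructor
  · intro h i' hi'
    simp only [Sj, mem_filter, mem_univ, true_and] at hi'
    have hlt : i'.1 - (j*k+s) < k := by omega
    have h2 : (⟨(i'.1 - (j*k+s)) % k, Nat.mod_lt _ hk⟩ : Fin k)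
        = ⟨i'.1 - (j*k+s), hlt⟩ := Fin.ext (Nat.mod_eq_of_lt hlt)
    rw [h2, ← h ⟨i'.1 - (j*k+s), hlt⟩]
    show u i' = extF d u (j*k+s+(i'.1-(j*k+s)))
    have harg : j*k+s+(i'.1 - (j*k+s)) = i'.1 := by omega
    rw [harg]
    simp [extF, i'.2]
  · intro h i
    have hlt : j*k+s+i.1 < t*k := slot_lt hk hs hj i.2
    rw [extF]
    simp only [dif_pos hlt]
    have hmem : (⟨j*k+s+i.1, hlt⟩ : Fin (t*k)) ∈ Sj k t s j := by
      simp only [Sj, mem_filter, mem_univ, true_and]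
      exact ⟨by omega, by omega⟩
    rw [h _ hmem]
    congr 1
    apply Fin.ext
    simp only
    rw [Nat.add_sub_cancel_left, Nat.mod_eq_of_lt i.2]

lemma prod_Sj (p : Fin b → ℝ) (hk : 0 < k) (hs : s < k) (hj : j < Ms t s) :
    ∏ i' ∈ Sj k t s j, p (w ⟨(i'.1 - (j*k+s)) % k, Nat.mod_lt _ hk⟩)
      = ∏ i : Fin k, p (w i) := by
  refine Finset.prod_bij (fun i' hi' => (⟨(i'.1 - (j*k+s)) % k, Nat.mod_lt _ hk⟩ : Fin k))
    (fun _ _ => mem_univ _) ?_ ?_ (fun _ _ => rfl)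
  · intro a ha a' ha' hh
    simp only [Sj, mem_filter, mem_univ, true_and] at ha ha'
    have h1 : a.1 - (j*k+s) < k := by omega
    have h2 : a'.1 - (j*k+s) < k := by omega
    rw [Fin.mk.injEq, Nat.mod_eq_of_lt h1, Nat.mod_eq_of_lt h2] at hh
    exact Fin.ext (by omega)
  · intro i _
    have hlt : j*k+s+i.1 < t*k := slot_lt hk hs hj i.2
    refine ⟨⟨j*k+s+i.1, hlt⟩, ?_, ?_⟩
    · simp only [Sj, mem_filter, mem_univ, true_and]; exact ⟨by omega, by omega⟩
    · apply Fin.ext; simp only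
      rw [Nat.add_sub_cancel_left, Nat.mod_eq_of_lt i.2]


noncomputable def slotInd (w : Fin k → Fin b) (d : Fin b) (t s j : ℕ)
    (u : Fin (t*k) → Fin b) : ℝ :=
  if (∀ i : Fin k, extF d u (j*k+s+i.1) = w i) then 1 else 0

lemma Sj_disj (hjj' : j ≠ j') : Disjoint (Sj k t s j) (Sj k t s j') := by
  rw [Finset.disjoint_left]
  intro a ha ha'
  simp only [Sj, mem_filter, mem_univ, true_and] at ha ha'
  rcases Nat.lt_or_ge j j' with h | h
  · have h1 : (j+1)*k ≤ j'*k := Nat.mul_le_mul_right k h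
    have h2 : (j+1)*k = j*k+k := by ring
    omega
  · have h' : j' < j := by omega
    have h1 : (j'+1)*k ≤ j*k := Nat.mul_le_mul_right k h'
    have h2 : (j'+1)*k = j'*k+k := by ring
    omega

lemma E_slot (p : Fin b → ℝ) (hsum : ∑ i, p i = 1) (hk : 0 < k) (hs : s < k)
    (hj : j < Ms t s) :
    ∑ u : Fin (t*k) → Fin b, Mu p u * slotInd w d t s j u = ∏ i, p (w i) := by
  classical
  have h1 : ∀ u : Fin (t*k) → Fin b, slotInd w d t s j u =
      (if ∀ i' ∈ Sj k t s j, u i' = w ⟨(i'.1 - (j*k+s)) % k, Nat.mod_lt _ hk⟩ then (1:ℝ) else 0) := by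
    intro u
    exact if_congr (slot_iff w d hk hs hj u) rfl rfl
  rw [Finset.sum_congr rfl fun u _ => by rw [h1 u]]
  rw [sum_Mu_ind p hsum]
  exact prod_Sj w p hk hs hj

lemma E_pair (p : Fin b → ℝ) (hsum : ∑ i, p i = 1) (hk : 0 < k) (hs : s < k)
    (hj : j < Ms t s) (hj' : j' < Ms t s) (hne : j ≠ j') :
    ∑ u : Fin (t*k) → Fin b, Mu p u * (slotInd w d t s j u * slotInd w d t s j' u)
      = (∏ i, p (w i))^2 := by
  classical
  set g : Fin (t*k) → Fin b := fun i' =>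
    if j*k+s ≤ i'.1 ∧ i'.1 < j*k+s+k then w ⟨(i'.1 - (j*k+s)) % k, Nat.mod_lt _ hk⟩
    else w ⟨(i'.1 - (j'*k+s)) % k, Nat.mod_lt _ hk⟩ with hg
  have hgj : ∀ i' ∈ Sj k t s j, g i' = w ⟨(i'.1 - (j*k+s)) % k, Nat.mod_lt _ hk⟩ := by
    intro i' hi'
    simp only [Sj, mem_filter, mem_univ, true_and] at hi'
    simp [hg, hi'.1, hi'.2]
  have hgj' : ∀ i' ∈ Sj k t s j', g i' = w ⟨(i'.1 - (j'*k+s)) % k, Nat.mod_lt _ hk⟩ := by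
    intro i' hi'
    have hdis := Sj_disj (k := k) (t := t) (s := s) hne
    have : i' ∉ Sj k t s j := Finset.disjoint_right.1 hdis hi'
    simp only [Sj, mem_filter, mem_univ, true_and, not_and, not_lt] at this
    simp only [Sj, mem_filter, mem_univ, true_and] at hi'
    by_cases hc : j*k+s ≤ i'.1 ∧ i'.1 < j*k+s+k
    · omega
    · simp [hg, hc]
  have key : ∀ u : Fin (t*k) → Fin b,
      slotInd w d t s j u * slotInd w d t s j' u =
        (if ∀ i' ∈ Sj k t s j ∪ Sj k t s j', u i' = g i' then (1:ℝ) else 0) := by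
    intro u
    have hiff : ((∀ i : Fin k, extF d u (j*k+s+i.1) = w i) ∧
        (∀ i : Fin k, extF d u (j'*k+s+i.1) = w i)) ↔
        (∀ i' ∈ Sj k t s j ∪ Sj k t s j', u i' = g i') := by
      rw [slot_iff w d hk hs hj u, slot_iff w d hk hs hj' u]
      constructor
      · rintro ⟨hA, hB⟩ i' hi'
        rcases Finset.mem_union.1 hi' with h | h
        · rw [hgj i' h]; exact hA i' h
        · rw [hgj' i' h]; exact hB i' h
      · intro h
        constructor
        · intro i' hi'; rw [← hgj i' hi']; exact h i' (Finset.mem_union_left _ hi')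
        · intro i' hi'; rw [← hgj' i' hi']; exact h i' (Finset.mem_union_right _ hi')
    rw [slotInd, slotInd]
    by_cases hA : ∀ i : Fin k, extF d u (j*k+s+i.1) = w i
    · by_cases hB : ∀ i : Fin k, extF d u (j'*k+s+i.1) = w i
      · rw [if_pos hA, if_pos hB, if_pos (hiff.1 ⟨hA, hB⟩)]; norm_num
      · rw [if_pos hA, if_neg hB, if_neg (fun h => hB (hiff.2 h).2)]; norm_num
    · rw [if_neg hA, if_neg (fun h => hA (hiff.2 h).1), zero_mul]
  rw [Finset.sum_congr rfl fun u _ => by rw [key u]]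
  rw [sum_Mu_ind p hsum]
  rw [Finset.prod_union (Sj_disj hne)]
  rw [Finset.prod_congr rfl (fun i' hi' => by rw [hgj i' hi'] : ∀ i' ∈ Sj k t s j, p (g i') = p (w ⟨(i'.1 - (j*k+s)) % k, Nat.mod_lt _ hk⟩)),
    Finset.prod_congr rfl (fun i' hi' => by rw [hgj' i' hi'] : ∀ i' ∈ Sj k t s j', p (g i') = p (w ⟨(i'.1 - (j'*k+s)) % k, Nat.mod_lt _ hk⟩))]
  rw [prod_Sj w p hk hs hj, prod_Sj w p hk hs hj']
  ring

lemma slotInd_sq (u : Fin (t*k) → Fin b) :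
    slotInd w d t s j u * slotInd w d t s j u = slotInd w d t s j u := by
  rw [slotInd]; split <;> norm_num

lemma var_slot (p : Fin b → ℝ) (hsum : ∑ i, p i = 1) (hk : 0 < k) (hs : s < k) :
    ∑ u : Fin (t*k) → Fin b,
      Mu p u * ((∑ j ∈ range (Ms t s), slotInd w d t s j u) - (Ms t s) * (∏ i, p (w i)))^2
      = (Ms t s) * (∏ i, p (w i)) - (Ms t s) * (∏ i, p (w i))^2 := by
  classical
  set P := ∏ i, p (w i) with hP
  set M := Ms t s with hM
  set F : (Fin (t*k) → Fin b) → ℝ := fun u => ∑ j ∈ range M, slotInd w d t s j u with hF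
  have h0 : ∑ u : Fin (t*k) → Fin b, Mu p u = 1 := sum_Mu_one p hsum _ d
  have h1 : ∑ u : Fin (t*k) → Fin b, Mu p u * F u = M * P := by
    simp only [hF, Finset.mul_sum]
    rw [Finset.sum_comm]
    rw [Finset.sum_congr rfl fun j hj => E_slot w d p hsum hk hs (mem_range.1 hj)]
    rw [Finset.sum_const, card_range, nsmul_eq_mul]
  have h2 : ∑ u : Fin (t*k) → Fin b, Mu p u * (F u)^2
      = (M:ℝ)^2 * P^2 + M * P - M * P^2 := by
    have expand : ∀ u, Mu p u * (F u)^2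
        = ∑ j ∈ range M, ∑ j'' ∈ range M, Mu p u * (slotInd w d t s j u * slotInd w d t s j'' u) := by
      intro u
      rw [sq, hF, Finset.sum_mul_sum]
      rw [Finset.mul_sum]
      refine Finset.sum_congr rfl fun j _ => ?_
      rw [Finset.mul_sum]
    rw [Finset.sum_congr rfl fun u _ => expand u]
    rw [Finset.sum_comm]
    have inner : ∀ j ∈ range M, ∑ u : Fin (t*k) → Fin b, ∑ j'' ∈ range M,
        Mu p u * (slotInd w d t s j u * slotInd w d t s j'' u)
        = M * P^2 + (P - P^2) := by
      intro j hj
      rw [Finset.sum_comm]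
      have : ∀ j'' ∈ range M, ∑ u : Fin (t*k) → Fin b,
          Mu p u * (slotInd w d t s j u * slotInd w d t s j'' u)
          = if j'' = j then P else P^2 := by
        intro j'' hj''
        by_cases h : j'' = j
        · subst h
          rw [if_pos rfl]
          rw [Finset.sum_congr rfl fun u _ => by rw [slotInd_sq]]
          exact E_slot w d p hsum hk hs (mem_range.1 hj'')
        · rw [if_neg h]
          exact E_pair w d p hsum hk hs (mem_range.1 hj) (mem_range.1 hj'') (Ne.symm h)
      rw [Finset.sum_congr rfl this]
      have : ∀ j'' ∈ range M, (if j'' = j then P else P^2) = P^2 + (if j'' = j then P - P^2 else 0) := by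
        intro j'' _; split <;> ring
      rw [Finset.sum_congr rfl this, Finset.sum_add_distrib, Finset.sum_const, card_range,
        Finset.sum_ite_eq' (range M) j (fun _ => P - P^2), if_pos hj, nsmul_eq_mul]
    rw [Finset.sum_congr rfl inner, Finset.sum_const, card_range, nsmul_eq_mul]
    ring
  have expand2 : ∀ u, Mu p u * (F u - M*P)^2
      = Mu p u * (F u)^2 - (2*M*P) * (Mu p u * F u) + (M*P)^2 * Mu p u := fun u => by ring
  rw [Finset.sum_congr rfl fun u _ => expand2 u]
  rw [Finset.sum_add_distrib, Finset.sum_sub_distrib, ← Finset.mul_sum, ← Finset.mul_sum,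
    h0, h1, h2]
  ring

/-- aligned (stride `k`, phase `s`) occurrences of `w` in the first `t*k` symbols of `u`. -/
def slotCnt (w : Fin k → Fin b) (t : ℕ) (u : ℕ → Fin b) (s : ℕ) : ℕ :=
  ((range (Ms t s)).filter (fun j => ∀ i : Fin k, u (j*k+s+i.1) = w i)).card

lemma slotCnt_eq_sum (u : Fin (t*k) → Fin b) (s : ℕ) :
    (slotCnt w t (extF d u) s : ℝ) = ∑ j ∈ range (Ms t s), slotInd w d t s j u := by
  rw [slotCnt, Finset.card_filter]
  push_cast
  rfl

lemma slotCnt_congr {u u' : ℕ → Fin b} (hk : 0 < k) (hs : s < k)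
    (h : ∀ i < t*k, u i = u' i) : slotCnt w t u s = slotCnt w t u' s := by
  rw [slotCnt, slotCnt]
  congr 1
  apply Finset.filter_congr
  intro j hj
  have hj' : j < Ms t s := mem_range.1 hj
  have harg : ∀ i : Fin k, j*k+s+i.1 < t*k := by
    intro i
    rcases Nat.eq_zero_or_pos s with h0 | h0
    · subst h0
      have hjt : j < t := by simpa [Ms] using hj'
      have h1 : (j+1)*k ≤ t*k := Nat.mul_le_mul_right k hjt
      have h2 : (j+1)*k = j*k+k := by ring
      have := i.2; omega
    · have hjt : j < t - 1 := by simpa [Ms, Nat.pos_iff_ne_zero.1 h0] using hj'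
      have h1 : (j+2)*k ≤ t*k := Nat.mul_le_mul_right k (by omega)
      have h2 : (j+2)*k = j*k+k+k := by ring
      have := i.2; omega
  constructor
  · intro hh i; rw [← h _ (harg i)]; exact hh i
  · intro hh i; rw [h _ (harg i)]; exact hh i

noncomputable def BadSet (p : Fin b → ℝ) (w : Fin k → Fin b) (t : ℕ) (d : Fin b) (ε : ℝ) :
    Finset (Fin (t*k) → Fin b) :=
  univ.filter (fun u => ∃ s, s < k ∧
    ε * t < |(slotCnt w t (extF d u) s : ℝ) - Ms t s * (∏ i, p (w i))|)

lemma badset_weight (p : Fin b → ℝ) (hp : ∀ i, 0 < p i) (hsum : ∑ i, p i = 1)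
    (hk : 0 < k) (ht : 0 < t) {ε : ℝ} (hε : 0 < ε) (hP1 : (∏ i, p (w i)) ≤ 1) :
    ∑ u ∈ BadSet p w t d ε, Mu p u ≤ k * (∏ i, p (w i)) / (ε^2 * t) := by
  classical
  set P := ∏ i, p (w i) with hPdef
  have hP0 : 0 ≤ P := Finset.prod_nonneg fun i _ => (hp (w i)).le
  set Bads : ℕ → Finset (Fin (t*k) → Fin b) := fun s =>
    univ.filter (fun u => ε * t < |(slotCnt w t (extF d u) s : ℝ) - Ms t s * P|) with hBads
  have step1 : ∀ s, s < k → ∑ u ∈ Bads s, Mu p u ≤ P / (ε^2 * t) := by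
    intro s hs
    have ht0 : (0:ℝ) < t := by exact_mod_cast ht
    have key : (ε*t)^2 * ∑ u ∈ Bads s, Mu p u ≤ t * P := by
      calc (ε*t)^2 * ∑ u ∈ Bads s, Mu p u
          = ∑ u ∈ Bads s, (ε*t)^2 * Mu p u := by rw [Finset.mul_sum]
        _ ≤ ∑ u ∈ Bads s, Mu p u *
            ((∑ j ∈ range (Ms t s), slotInd w d t s j u) - (Ms t s) * P)^2 := by
            refine Finset.sum_le_sum fun u hu => ?_
            simp only [hBads, mem_filter, mem_univ, true_and] at hu
            rw [slotCnt_eq_sum] at hu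
            have h1 : (ε*t)^2 ≤ ((∑ j ∈ range (Ms t s), slotInd w d t s j u) - (Ms t s) * P)^2 := by
              rw [← sq_abs ((∑ j ∈ range (Ms t s), slotInd w d t s j u) - (Ms t s) * P)]
              have hεt : 0 ≤ ε * t := by positivity
              exact pow_le_pow_left₀ hεt hu.le 2
            calc (ε*t)^2 * Mu p u ≤ ((∑ j ∈ range (Ms t s), slotInd w d t s j u) - (Ms t s) * P)^2 * Mu p u :=
                  mul_le_mul_of_nonneg_right h1 (Mu_nonneg p hp u)
              _ = _ := by ring
        _ ≤ ∑ u : Fin (t*k) → Fin b, Mu p u *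
            ((∑ j ∈ range (Ms t s), slotInd w d t s j u) - (Ms t s) * P)^2 := by
            refine Finset.sum_le_sum_of_subset_of_nonneg (Finset.subset_univ _) fun u _ _ => ?_
            have := Mu_nonneg p hp u
            positivity
        _ = (Ms t s) * P - (Ms t s) * P^2 := var_slot w d p hsum hk hs
        _ ≤ t * P := by
            have hMs : (Ms t s : ℝ) ≤ t := by
              have : Ms t s ≤ t := by rw [Ms]; split <;> omega
              exact_mod_cast this
            nlinarith
    have h2 : ∑ u ∈ Bads s, Mu p u ≤ t*P/((ε*t)^2) := by
      rw [le_div_iff₀ (by positivity), mul_comm]; exact key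
    have h3 : t*P/((ε*t)^2) = P/(ε^2*t) := by field_simp
    exact h2.trans_eq h3
  have union : ∑ u ∈ BadSet p w t d ε, Mu p u ≤ ∑ s ∈ range k, ∑ u ∈ Bads s, Mu p u := by
    calc ∑ u ∈ BadSet p w t d ε, Mu p u
        ≤ ∑ u ∈ BadSet p w t d ε, ∑ s ∈ range k, (if u ∈ Bads s then Mu p u else 0) := by
          refine Finset.sum_le_sum fun u hu => ?_
          simp only [BadSet, mem_filter, mem_univ, true_and] at hu
          obtain ⟨s, hs, hbad⟩ := hu
          have hmem : u ∈ Bads s := by simp only [hBads, mem_filter, mem_univ, true_and]; exact hbad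
          calc Mu p u = (if u ∈ Bads s then Mu p u else 0) := by rw [if_pos hmem]
            _ ≤ ∑ s' ∈ range k, (if u ∈ Bads s' then Mu p u else 0) := by
                refine Finset.single_le_sum (f := fun s' => if u ∈ Bads s' then Mu p u else 0) (fun s' _ => ?_) (mem_range.2 hs)
                split
                · exact Mu_nonneg p hp u
                · exact le_refl 0
      _ ≤ ∑ u : Fin (t*k) → Fin b, ∑ s ∈ range k, (if u ∈ Bads s then Mu p u else 0) := by
          refine Finset.sum_le_sum_of_subset_of_nonneg (Finset.subset_univ _) fun u _ _ => ?_
          refine Finset.sum_nonneg fun s _ => ?_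
          split
          · exact Mu_nonneg p hp u
          · exact le_refl 0
      _ = ∑ s ∈ range k, ∑ u : Fin (t*k) → Fin b, (if u ∈ Bads s then Mu p u else 0) :=
          Finset.sum_comm
      _ = ∑ s ∈ range k, ∑ u ∈ Bads s, Mu p u := by
          refine Finset.sum_congr rfl fun s _ => ?_
          rw [Finset.sum_ite_mem, Finset.univ_inter]
  calc ∑ u ∈ BadSet p w t d ε, Mu p u ≤ ∑ s ∈ range k, ∑ u ∈ Bads s, Mu p u := union
    _ ≤ ∑ s ∈ range k, P / (ε^2*t) := Finset.sum_le_sum fun s hs => step1 s (mem_range.1 hs)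
    _ = k * P / (ε^2*t) := by rw [Finset.sum_const, card_range, nsmul_eq_mul]; ring

end slots

/-- number of multiples of `k` in a window of length `L` -/
lemma card_mult_le (k a L : ℕ) (hk : 0 < k) :
    ((Finset.Ico a (a+L)).filter (fun q => q % k = 0)).card ≤ L/k + 1 := by
  classical
  have : ((Finset.Ico a (a+L)).filter (fun q => q % k = 0)).card ≤ (range (L/k+1)).card := by
    apply Finset.card_le_card_of_injOn (fun q => (q - a)/k)
    · intro q hq
      simp only [Finset.mem_coe, mem_filter, Finset.mem_Ico] at hq
      simp only [Finset.mem_coe, mem_range]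
      have h1 : q - a ≤ L := by omega
      have := Nat.div_le_div_right (c := k) h1
      have := Nat.div_le_div_right (c := k) (le_refl L)
      omega
    · intro q hq q' hq' heq
      simp only [Finset.coe_filter, Set.mem_setOf_eq, Finset.mem_Ico] at hq hq'
      obtain ⟨⟨haq, hqL⟩, hqm⟩ := hq
      obtain ⟨⟨haq', hqL'⟩, hqm'⟩ := hq'
      obtain ⟨e, he⟩ := Nat.dvd_of_mod_eq_zero hqm
      obtain ⟨e', he'⟩ := Nat.dvd_of_mod_eq_zero hqm'
      have hd1 := Nat.div_add_mod (q - a) k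
      have hd2 := Nat.div_add_mod (q' - a) k
      have hm1 : (q - a) % k < k := Nat.mod_lt _ hk
      have hm2 : (q' - a) % k < k := Nat.mod_lt _ hk
      have heq' : (q - a)/k = (q' - a)/k := heq
      rw [heq'] at hd1
      obtain ⟨c1, hc1⟩ : ∃ c, k * ((q' - a)/k) = c := ⟨_, rfl⟩
      rw [hc1] at hd1 hd2
      have hclose : q < q' + k ∧ q' < q + k := by omega
      have h1 : e < e' + 1 := by
        have : k * e < k * (e' + 1) := by rw [Nat.mul_add, ← he, ← he']; omega
        exact Nat.lt_of_mul_lt_mul_left this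
      have h2 : e' < e + 1 := by
        have : k * e' < k * (e + 1) := by rw [Nat.mul_add, ← he, ← he']; omega
        exact Nat.lt_of_mul_lt_mul_left this
      have : e = e' := by omega
      rw [he, he', this]
  simpa using this

/-- number of elements satisfying a condition implying `· % k = 0` in a window of
length less than `(t-1)*k+1` is at most `t`. -/
lemma card_cond_window_le {k t : ℕ} (cond : ℕ → Prop) [DecidablePred cond]
    (hcond : ∀ p, cond p → p % k = 0) (hk : 0 < k) (ht : 1 ≤ t) (a L : ℕ)
    (hL : L ≤ (t-1)*k) :
    ((Finset.Ico a (a+L)).filter cond).card ≤ t := by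
  calc ((Finset.Ico a (a+L)).filter cond).card
      ≤ ((Finset.Ico a (a+L)).filter (fun q => q % k = 0)).card := by
        apply Finset.card_le_card
        intro q hq
        simp only [mem_filter] at hq ⊢
        exact ⟨hq.1, hcond q hq.2⟩
    _ ≤ L/k + 1 := card_mult_le k a L hk
    _ ≤ t := by
        have h1 : L/k ≤ ((t-1)*k)/k := Nat.div_le_div_right hL
        have h2 : ((t-1)*k)/k = t-1 := Nat.mul_div_cancel _ hk
        omega

lemma D_bounds {k t : ℕ} (cond : ℕ → Prop) [DecidablePred cond]
    (hcond : ∀ p, cond p → p % k = 0) (hk : 0 < k) (ht : 1 ≤ t) (n : ℕ) :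
    (∑ q ∈ range n, ((range ((t-1)*k+1)).filter (fun o => cond (q+o))).card
        ≤ ((t-1)*k+1) * ((range n).filter cond).card + ((t-1)*k+1) * t) ∧
    (((t-1)*k+1) * ((range n).filter cond).card
        ≤ (∑ q ∈ range n, ((range ((t-1)*k+1)).filter (fun o => cond (q+o))).card)
          + ((t-1)*k+1) * t) := by
  classical
  set K := (t-1)*k+1 with hK
  set A : ℕ := ((range n).filter cond).card with hA
  have swap : ∑ q ∈ range n, ((range K).filter (fun o => cond (q+o))).card
      = ∑ o ∈ range K, ((range n).filter (fun q => cond (q+o))).card := by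
    simp only [Finset.card_filter]
    rw [Finset.sum_comm]
  have hEIco : ∀ o, ((range n).filter (fun q => cond (q+o))).card
      = ((Finset.Ico o (n+o)).filter cond).card := by
    intro o
    apply Finset.card_bij (fun q _ => q + o)
    · intro q hq
      simp only [mem_filter, mem_range] at hq
      simp only [mem_filter, Finset.mem_Ico]
      exact ⟨⟨by omega, by omega⟩, hq.2⟩
    · intro q hq q' hq' h; omega
    · intro q' hq'
      simp only [mem_filter, Finset.mem_Ico] at hq'
      refine ⟨q' - o, ?_, by omega⟩
      simp only [mem_filter, mem_range]
      refine ⟨by omega, ?_⟩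
      have hh : q' - o + o = q' := by omega
      rw [hh]; exact hq'.2
  have hupper : ∀ o ∈ range K, ((range n).filter (fun q => cond (q+o))).card ≤ A + t := by
    intro o ho
    have ho' : o < K := mem_range.1 ho
    rw [hEIco o]
    calc ((Finset.Ico o (n+o)).filter cond).card
        ≤ (((range n).filter cond) ∪ ((Finset.Ico n (n+o)).filter cond)).card := by
          apply Finset.card_le_card
          intro q hq
          simp only [mem_filter, Finset.mem_Ico] at hq
          rcases Nat.lt_or_ge q n with h | h
          · exact Finset.mem_union_left _ (by simp only [mem_filter, mem_range]; exact ⟨h, hq.2⟩)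
          · exact Finset.mem_union_right _ (by simp only [mem_filter, Finset.mem_Ico]; exact ⟨⟨h, hq.1.2⟩, hq.2⟩)
      _ ≤ A + t := by
          refine (Finset.card_union_le _ _).trans ?_
          have := card_cond_window_le cond hcond hk ht n o (by omega)
          omega
  have hlower : ∀ o ∈ range K, A ≤ ((range n).filter (fun q => cond (q+o))).card + t := by
    intro o ho
    have ho' : o < K := mem_range.1 ho
    rw [hEIco o]
    have hsub : (range n).filter cond ⊆
        ((Finset.Ico o (n+o)).filter cond) ∪ ((Finset.Ico 0 (0+o)).filter cond) := by
      intro q hq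
      simp only [mem_filter, mem_range] at hq
      rcases Nat.lt_or_ge q o with h | h
      · exact Finset.mem_union_right _ (by simp only [mem_filter, Finset.mem_Ico]; exact ⟨⟨by omega, by omega⟩, hq.2⟩)
      · exact Finset.mem_union_left _ (by simp only [mem_filter, Finset.mem_Ico]; exact ⟨⟨h, by omega⟩, hq.2⟩)
    calc A ≤ (((Finset.Ico o (n+o)).filter cond) ∪ ((Finset.Ico 0 (0+o)).filter cond)).card :=
          Finset.card_le_card hsub
      _ ≤ ((Finset.Ico o (n+o)).filter cond).card + t := by
          refine (Finset.card_union_le _ _).trans ?_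
          have := card_cond_window_le cond hcond hk ht 0 o (by omega)
          omega
  constructor
  · rw [swap]
    calc ∑ o ∈ range K, ((range n).filter (fun q => cond (q+o))).card
        ≤ ∑ o ∈ range K, (A + t) := Finset.sum_le_sum hupper
      _ = K * A + K * t := by rw [Finset.sum_const, card_range, smul_eq_mul]; ring
  · rw [swap]
    calc K * A = ∑ _o ∈ range K, A := by rw [Finset.sum_const, card_range, smul_eq_mul]
      _ ≤ ∑ o ∈ range K, (((range n).filter (fun q => cond (q+o))).card + t) :=
          Finset.sum_le_sum hlower
      _ = (∑ o ∈ range K, ((range n).filter (fun q => cond (q+o))).card) + K * t := by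
          rw [Finset.sum_add_distrib, Finset.sum_const, card_range, smul_eq_mul]

lemma phase_iff {k : ℕ} (hk : 0 < k) (q o : ℕ) :
    (q + o) % k = 0 ↔ o % k = (k - q % k) % k := by
  have hr : q % k < k := Nat.mod_lt _ hk
  have hro : o % k < k := Nat.mod_lt _ hk
  have h1 : (q + o) % k = (q % k + o % k) % k := by rw [Nat.add_mod]
  have h2 : (q % k + o % k) % k =
      if q % k + o % k < k then q % k + o % k else q % k + o % k - k := by
    split
    · exact Nat.mod_eq_of_lt ‹_›
    · rw [Nat.mod_eq_sub_mod (by omega)]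
      exact Nat.mod_eq_of_lt (by omega)
  have h3 : (k - q % k) % k = if q % k = 0 then 0 else k - q % k := by
    split
    · rw [‹q % k = 0›]; simp
    · exact Nat.mod_eq_of_lt (by omega)
  rw [h1, h2, h3]
  split <;> split <;> omega

lemma c_eq_slotCnt (x : ℕ → Fin b) {k t : ℕ} (w : Fin k → Fin b) (hk : 0 < k) (ht : 1 ≤ t)
    (m q : ℕ) :
    ((range ((t-1)*k+1)).filter
        (fun o => (q+o) % k = 0 ∧ ∀ i : Fin k, x (m+(q+o)+i.1) = w i)).card
      = slotCnt w t (fun i => x (m+q+i)) ((k - q % k) % k) := by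
  classical
  set s := (k - q % k) % k with hs
  have hsk : s < k := Nat.mod_lt _ hk
  rw [slotCnt]
  apply Finset.card_bij' (fun o _ => o / k) (fun j _ => j * k + s)
  · intro o ho
    simp only [mem_filter, mem_range] at ho ⊢
    obtain ⟨holt, hmod, hmatch⟩ := ho
    have hos : o % k = s := (phase_iff hk q o).1 hmod
    have hdm := Nat.div_add_mod o k
    rw [hos] at hdm
    obtain ⟨c1, hc1⟩ : ∃ c, k * (o / k) = c := ⟨_, rfl⟩
    rw [hc1] at hdm
    constructor
    · -- o / k < Ms t s
      rcases Nat.eq_zero_or_pos s with h0 | h0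
      · have : o ≤ (t-1)*k := by omega
        have h4 : o / k ≤ ((t-1)*k)/k := Nat.div_le_div_right this
        have h5 : ((t-1)*k)/k = t-1 := Nat.mul_div_cancel _ hk
        have hMs : Ms t s = t := by simp [Ms, h0]
        rw [hMs]
        omega
      · have hne : s ≠ 0 := by omega
        have hMs : Ms t s = t - 1 := by simp [Ms, hne]
        rw [hMs]
        -- c1 = o - s ≤ (t-1)*k - s < (t-1)*k so k*(o/k) < (t-1)*k hence o/k < t-1
        have h4 : k * (o / k) < k * (t-1) := by
          rw [hc1]
          have : (t-1) * k = k * (t-1) := Nat.mul_comm _ _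
          omega
        exact Nat.lt_of_mul_lt_mul_left h4
    · intro i
      have harg : m + q + (o/k*k + s + i.1) = m + (q+o) + i.1 := by
        have : o/k*k = c1 := by rw [Nat.mul_comm]; exact hc1
        omega
      show x (m + q + (o/k*k + s + i.1)) = w i
      rw [harg]
      exact hmatch i
  · intro j hj
    simp only [mem_filter, mem_range] at hj ⊢
    obtain ⟨hjlt, hmatch⟩ := hj
    have hjk : j * k + s ≤ (t-1)*k := by
      rcases Nat.eq_zero_or_pos s with h0 | h0
      · rw [show Ms t s = t by simp [Ms, h0]] at hjlt
        have := Nat.mul_le_mul_right k (show j ≤ t-1 by omega)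
        omega
      · have hne : s ≠ 0 := by omega
        rw [show Ms t s = t - 1 by simp [Ms, hne]] at hjlt
        have := Nat.mul_le_mul_right k (show j + 1 ≤ t-1 by omega)
        have h2 : (j+1)*k = j*k + k := by ring
        omega
    refine ⟨by omega, ?_, ?_⟩
    · rw [phase_iff hk]
      rw [show j*k+s = s+j*k by ring, Nat.add_mul_mod_self_right]
      exact Nat.mod_eq_of_lt hsk
    · intro i
      have harg : m + (q + (j*k+s)) + i.1 = m + q + (j*k+s+i.1) := by omega
      rw [harg]
      exact hmatch i
  · intro o ho
    simp only [mem_filter, mem_range] at ho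
    have hos : o % k = s := (phase_iff hk q o).1 ho.2.1
    have hdm := Nat.div_add_mod o k
    rw [hos] at hdm
    rw [Nat.mul_comm] at hdm
    omega
  · intro j hj
    rw [Nat.mul_comm j k, Nat.mul_add_div hk, Nat.div_eq_of_lt hsk, Nat.add_zero]

lemma tendsto_occ_add (x : ℕ → Fin b) {r : ℕ} (v : Fin r → Fin b) (L : ℝ)
    (h : Tendsto (fun n : ℕ => (occ x n v : ℝ)/n) atTop (nhds L)) (c : ℕ) :
    Tendsto (fun n : ℕ => (occ x (n+c) v : ℝ)/n) atTop (nhds L) := by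
  have h1 : Tendsto (fun n : ℕ => (occ x (n+c) v : ℝ)/(n+c)) atTop (nhds L) := by
    have := h.comp (tendsto_add_atTop_nat c)
    refine this.congr fun n => ?_
    simp only [Function.comp_apply]
    push_cast
    ring_nf
  have h2 : Tendsto (fun n : ℕ => ((n:ℝ)+c)/n) atTop (nhds 1) := by
    have hz : Tendsto (fun n : ℕ => (1:ℝ) + (c:ℝ)/n) atTop (nhds (1 + 0)) :=
      tendsto_const_nhds.add (tendsto_const_div_atTop_nhds_zero_nat (c:ℝ))
    rw [add_zero] at hz
    refine hz.congr' ?_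
    filter_upwards [eventually_ge_atTop 1] with n hn
    have hn0 : (0:ℝ) < n := by exact_mod_cast hn
    field_simp
  have h3 := h1.mul h2
  rw [mul_one] at h3
  refine h3.congr' ?_
  filter_upwards [eventually_ge_atTop 1] with n hn
  have hn0 : (0:ℝ) < n := by exact_mod_cast hn
  have hnc : (0:ℝ) < (n:ℝ)+c := by positivity
  field_simp

lemma badn_le (x : ℕ → Fin b) {t k : ℕ} (htk : 1 ≤ t*k) (m n : ℕ)
    (Bad : Finset (Fin (t*k) → Fin b)) :
    ((range n).filter (fun q => (fun i : Fin (t*k) => x (m+q+i.1)) ∈ Bad)).card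
      ≤ ∑ u ∈ Bad, occ x (m+n+t*k-1) u := by
  classical
  have step1 : ((range n).filter (fun q => (fun i : Fin (t*k) => x (m+q+i.1)) ∈ Bad)).card
      = ∑ u ∈ Bad, ((range n).filter (fun q => (fun i : Fin (t*k) => x (m+q+i.1)) = u)).card := by
    rw [Finset.card_filter]
    have : ∀ q, (if (fun i : Fin (t*k) => x (m+q+i.1)) ∈ Bad then 1 else 0)
        = ∑ u ∈ Bad, (if (fun i : Fin (t*k) => x (m+q+i.1)) = u then 1 else 0) := by
      intro q
      rw [Finset.sum_ite_eq Bad (fun i : Fin (t*k) => x (m+q+i.1)) (fun _ => 1)]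
    rw [Finset.sum_congr rfl fun q _ => this q, Finset.sum_comm]
    refine Finset.sum_congr rfl fun u _ => ?_
    rw [Finset.card_filter]
  rw [step1]
  refine Finset.sum_le_sum fun u _ => ?_
  rw [occ]
  have hrange : m + n + t*k - 1 + 1 - t*k = m + n := by omega
  rw [hrange]
  apply Finset.card_le_card_of_injOn (fun q => m + q)
  · intro q hq
    simp only [Finset.mem_coe, mem_filter, mem_range] at hq ⊢
    refine ⟨by omega, fun i => ?_⟩
    have := congrFun hq.2 i
    exact this
  · intro q _ q' _ h
    have h' : m + q = m + q' := h
    omega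

end BN
namespace BN
lemma arith_upper (P ε ε₀ tr kr : ℝ) (hP0 : 0 < P) (hε₀ : 0 < ε₀) (hk1 : 1 ≤ kr)
    (ht2 : 2 ≤ tr) (hεk : ε ≤ kr*ε₀/16) (htP : P ≤ (tr-1)*(ε₀/8)) :
    tr*(P+ε)*kr ≤ (P + (ε₀/4)*kr)*((tr-1)*kr+1) := by
  have haux1 : ε*(tr*kr) ≤ (kr*ε₀/16)*(tr*kr) :=
    mul_le_mul_of_nonneg_right hεk (by positivity)
  have haux2 : P*kr ≤ ((tr-1)*(ε₀/8))*kr :=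
    mul_le_mul_of_nonneg_right htP (by positivity)
  have h3 : (0:ℝ) ≤ ε₀*((tr-1)*(kr*(kr-1))) := by
    apply mul_nonneg hε₀.le
    apply mul_nonneg (by linarith)
    apply mul_nonneg (by positivity) (by linarith)
  have h4 : (0:ℝ) ≤ ε₀*((kr*kr)*(tr-2)) := by
    apply mul_nonneg hε₀.le
    apply mul_nonneg (by positivity) (by linarith)
  nlinarith [haux1, haux2, h3, h4, hP0.le]

lemma arith_lower (P ε ε₀ tr kr : ℝ) (hP0 : 0 < P) (hε₀ : 0 < ε₀) (hk1 : 1 ≤ kr)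
    (ht2 : 2 ≤ tr) (hεk : ε ≤ kr*ε₀/16) (htP : P ≤ (tr-1)*(ε₀/8)) :
    P*((tr-1)*kr+1) ≤ ((tr-1)*P - ε*tr + (ε₀/4)*((tr-1)*kr+1))*kr := by
  have haux1 : (ε*tr)*kr ≤ ((kr*ε₀/16)*tr)*kr := by
    apply mul_le_mul_of_nonneg_right _ (by positivity)
    exact mul_le_mul_of_nonneg_right hεk (by positivity)
  have h3 : (0:ℝ) ≤ ε₀*((tr-1)*(kr*(kr-1))) := by
    apply mul_nonneg hε₀.le
    apply mul_nonneg (by linarith)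
    apply mul_nonneg (by positivity) (by linarith)
  have h4 : (0:ℝ) ≤ ε₀*((kr*kr)*(tr-2)) := by
    apply mul_nonneg hε₀.le
    apply mul_nonneg (by positivity) (by linarith)
  have h6 : (0:ℝ) ≤ ε₀*((tr-1)*((kr*kr)-1)) := by
    apply mul_nonneg hε₀.le
    apply mul_nonneg (by linarith)
    nlinarith
  nlinarith [haux1, htP, h3, h4, h6, hP0.le]

lemma arith_R1 (P ε tr kr : ℝ) (hP1 : P ≤ 1) (hk1 : 1 ≤ kr) (ht2 : 2 ≤ tr)
    (hε : 0 < ε) : (tr-1)*P - ε*tr ≤ (tr-1)*kr + 1 := by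
  have h5 : (tr-1)*P ≤ (tr-1)*kr :=
    mul_le_mul_of_nonneg_left (hP1.trans hk1) (by linarith)
  nlinarith [mul_pos hε (show (0:ℝ) < tr by linarith)]

lemma arith_factor (P ε tr : ℝ) (hP0 : 0 < P) (hεP : ε ≤ P/2) (ht2 : 2 ≤ tr) :
    (0:ℝ) ≤ (tr-1)*P - ε*tr := by
  have h1 : ε*tr ≤ (P/2)*tr := mul_le_mul_of_nonneg_right hεP (by linarith)
  nlinarith
end BN
open BN

set_option maxHeartbeats 1000000

/-- If every block `v` of length `r ≥ 1` occurs in `x` (counting all overlapping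
occurrences) with limiting frequency `∏_{i<r} p_{v i}`, then `x` is biased normal with
respect to `p`: for every `k ≥ 1`, every offset `m`, and every block `w` of length `k`, the
frequency of `w` among the consecutive length-`k` blocks of `x` starting at positions
`m, m+k, m+2k, …` equals `∏_{i<k} p_{w i}`. -/
theorem biased_normal_of_blocks_freq (b : ℕ) (hb : 2 ≤ b)
    (p : Fin b → ℝ) (hp : ∀ i, 0 < p i) (hsum : ∑ i, p i = 1) (x : ℕ → Fin b)
    (hx : ∀ r : ℕ, 1 ≤ r → ∀ v : Fin r → Fin b,
      Tendsto (fun n : ℕ => (occ x n v : ℝ) / n) atTop (nhds (∏ i, p (v i)))) :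
    ∀ k : ℕ, 1 ≤ k → ∀ m : ℕ, ∀ w : Fin k → Fin b,
      Tendsto
        (fun N : ℕ =>
          (((Finset.range N).filter (fun j => ∀ i : Fin k, x (m + j * k + i) = w i)).card : ℝ) / N)
        atTop (nhds (∏ i, p (w i))) := by
  classical
  intro k hk m w
  have hk0 : 0 < k := hk
  set P : ℝ := ∏ i, p (w i) with hPdef
  have hP0 : 0 < P := Finset.prod_pos fun i _ => hp _
  have hp1 : ∀ i, p i ≤ 1 := by
    intro i
    rw [← hsum]
    exact Finset.single_le_sum (fun j _ => (hp j).le) (mem_univ i)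
  have hP1 : P ≤ 1 := Finset.prod_le_one (fun i _ => (hp _).le) (fun i _ => hp1 _)
  set cond : ℕ → Prop := fun pp => pp % k = 0 ∧ ∀ i : Fin k, x (m + pp + i.1) = w i with hcond
  set A : ℕ → ℕ := fun n => ((range n).filter cond).card with hA
  suffices key : Tendsto (fun n : ℕ => (A n : ℝ)/n) atTop (nhds (P/k)) by
    have hZ : ∀ N : ℕ, ((range N).filter
        (fun j => ∀ i : Fin k, x (m + j * k + i) = w i)).card = A (N*k) := by
      intro N
      rw [hA]
      apply Finset.card_bij (fun j _ => j * k)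
      · intro j hj
        simp only [mem_filter, mem_range] at hj ⊢
        refine ⟨Nat.mul_lt_mul_right hk0 |>.2 hj.1, ?_, hj.2⟩
        exact Nat.mul_mod_left j k
      · intro j _ j' _ h
        exact Nat.eq_of_mul_eq_mul_right hk0 h
      · intro pp hpp
        simp only [mem_filter, mem_range] at hpp
        obtain ⟨hlt, hmod, hmatch⟩ := hpp
        refine ⟨pp / k, ?_, ?_⟩
        · simp only [mem_filter, mem_range]
          constructor
          · exact (Nat.div_lt_iff_lt_mul hk0).2 hlt
          · intro i
            have : pp / k * k = pp := Nat.div_mul_cancel (Nat.dvd_of_mod_eq_zero hmod)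
            rw [this]
            exact hmatch i
        · exact Nat.div_mul_cancel (Nat.dvd_of_mod_eq_zero hmod)
    have hmulk : Tendsto (fun N : ℕ => N * k) atTop atTop :=
      tendsto_atTop_mono (fun n => Nat.le_mul_of_pos_right n hk0) tendsto_id
    have hcomp : Tendsto (fun N : ℕ => (A (N*k) : ℝ)/((N*k : ℕ) : ℝ)) atTop (nhds (P/k)) :=
      key.comp hmulk
    have hmul := hcomp.const_mul (k:ℝ)
    have hval : (k:ℝ) * (P/k) = P := by
      field_simp
    rw [hval] at hmul
    refine hmul.congr fun N => ?_
    rw [hZ N]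
    rcases Nat.eq_zero_or_pos N with h0 | h0
    · subst h0
      simp
    · have hN : (0:ℝ) < N := by exact_mod_cast h0
      have hkR : (0:ℝ) < k := by exact_mod_cast hk0
      push_cast
      field_simp
  -- central statement: the density of stride-`k` matches tends to `P/k`
  refine Metric.tendsto_nhds.2 fun ε₀ hε₀ => ?_
  have hkR : (0:ℝ) < k := by exact_mod_cast hk0
  have hk1 : (1:ℝ) ≤ k := by exact_mod_cast hk0
  set ε : ℝ := min (P/2) ((k:ℝ)*ε₀/16) with hεdef
  have hεpos : 0 < ε := lt_min (by positivity) (by positivity)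
  have hεP : ε ≤ P/2 := min_le_left _ _
  have hεk : ε ≤ (k:ℝ)*ε₀/16 := min_le_right _ _
  obtain ⟨t, ht⟩ := exists_nat_ge (max (max 2 (8*P/ε₀ + 1)) (16*(k:ℝ)*P/(ε₀*ε^2)))
  have ht2 : 2 ≤ t := by
    have h1 : (2:ℝ) ≤ t := le_trans ((le_max_left _ _).trans (le_max_left _ _)) ht
    exact_mod_cast h1
  have htR : (2:ℝ) ≤ t := by exact_mod_cast ht2
  have ht0R : (0:ℝ) < t := by linarith
  have htP : P ≤ ((t:ℝ)-1)*(ε₀/8) := by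
    have h1 : 8*P/ε₀ + 1 ≤ (t:ℝ) := le_trans ((le_max_right _ _).trans (le_max_left _ _)) ht
    have h2 : 8*P/ε₀ ≤ (t:ℝ) - 1 := by linarith
    have h3 : 8*P ≤ ((t:ℝ)-1)*ε₀ := (div_le_iff₀ hε₀).1 h2
    linarith
  have htδ : (k:ℝ)*P/(ε^2*(t:ℝ)) ≤ ε₀/16 := by
    have h1 : 16*(k:ℝ)*P/(ε₀*ε^2) ≤ (t:ℝ) := le_trans (le_max_right _ _) ht
    have h2 : 16*(k:ℝ)*P ≤ (t:ℝ)*(ε₀*ε^2) := (div_le_iff₀ (by positivity)).1 h1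
    rw [div_le_div_iff₀ (by positivity) (by norm_num)]
    nlinarith
  have htk1 : 1 ≤ t*k := Nat.mul_pos (by omega) hk0
  set d : Fin b := w ⟨0, hk0⟩ with hddef
  have hKcast : (((t-1)*k+1 : ℕ):ℝ) = ((t:ℝ)-1)*(k:ℝ)+1 := by
    push_cast [Nat.cast_sub (show 1 ≤ t by omega)]
    ring
  have hK0 : (0:ℝ) < (((t-1)*k+1 : ℕ):ℝ) := by
    rw [hKcast]; nlinarith
  have hδw : ∑ u ∈ BadSet p w t d ε, Mu p u ≤ (k:ℝ)*P/(ε^2*t) :=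
    badset_weight (w := w) (d := d) p hp hsum hk0 (by omega) hεpos hP1
  -- eventual bound on the proportion of bad windows
  have hβev : ∀ᶠ n : ℕ in atTop,
      ((((range n).filter (fun q => (fun i : Fin (t*k) => x (m+q+i.1)) ∈ BadSet p w t d ε)).card : ℝ))/n
        ≤ ε₀/8 := by
    have hlim : Tendsto (fun n : ℕ => (∑ u ∈ BadSet p w t d ε, (occ x (n + (m+t*k-1)) u : ℝ))/n)
        atTop (nhds (∑ u ∈ BadSet p w t d ε, Mu p u)) := by
      simp only [Finset.sum_div]
      apply tendsto_finset_sum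
      intro u _
      exact tendsto_occ_add x u (Mu p u) (hx (t*k) htk1 u) (m+t*k-1)
    have hev1 : ∀ᶠ n : ℕ in atTop,
        (∑ u ∈ BadSet p w t d ε, (occ x (n + (m+t*k-1)) u : ℝ))/n < ε₀/8 :=
      hlim.eventually_lt_const (by
        have : (k:ℝ)*P/(ε^2*t) ≤ ε₀/16 := htδ
        linarith)
    filter_upwards [hev1, eventually_ge_atTop 1] with n h1 hn1
    have hn0 : (0:ℝ) < n := by exact_mod_cast hn1
    have hbb : ((((range n).filter (fun q => (fun i : Fin (t*k) => x (m+q+i.1)) ∈ BadSet p w t d ε)).card : ℝ))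
        ≤ ∑ u ∈ BadSet p w t d ε, (occ x (n + (m+t*k-1)) u : ℝ) := by
      have h2 := badn_le x htk1 m n (BadSet p w t d ε)
      have harg : m+n+t*k-1 = n+(m+t*k-1) := by omega
      rw [harg] at h2
      exact_mod_cast h2
    calc ((((range n).filter (fun q => (fun i : Fin (t*k) => x (m+q+i.1)) ∈ BadSet p w t d ε)).card : ℝ))/n
        ≤ (∑ u ∈ BadSet p w t d ε, (occ x (n + (m+t*k-1)) u : ℝ))/n := by gcongr
      _ ≤ ε₀/8 := h1.le
  -- bounds for good windows
  have hgood : ∀ q : ℕ, (fun i : Fin (t*k) => x (m+q+i.1)) ∉ BadSet p w t d ε →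
      (((t:ℝ)-1)*P - ε*t ≤ ((((range ((t-1)*k+1)).filter (fun o => cond (q+o))).card : ℝ)) ∧
        ((((range ((t-1)*k+1)).filter (fun o => cond (q+o))).card : ℝ)) ≤ (t:ℝ)*P + ε*t) := by
    intro q hq
    have hs' : (k - q % k) % k < k := Nat.mod_lt _ hk0
    have hceq : ((range ((t-1)*k+1)).filter (fun o => cond (q+o))).card
        = slotCnt w t (extF d (fun i : Fin (t*k) => x (m+q+i.1))) ((k - q%k)%k) := by
      simp only [hcond]
      rw [c_eq_slotCnt x w hk0 (by omega) m q]
      apply slotCnt_congr w hk0 hs'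
      intro i hi
      rw [extF]
      simp only [dif_pos hi]
    simp only [BadSet, mem_filter, mem_univ, true_and] at hq
    push_neg at hq
    have hqs := hq ((k - q%k)%k) hs'
    rw [← hPdef] at hqs
    rw [← hceq] at hqs
    have hMs1 : ((t:ℝ)-1) ≤ (Ms t ((k - q%k)%k) : ℝ) := by
      have h1 : t - 1 ≤ Ms t ((k - q%k)%k) := by rw [Ms]; split <;> omega
      calc ((t:ℝ)-1) = ((t-1 : ℕ) : ℝ) := by
            push_cast [Nat.cast_sub (show 1 ≤ t by omega)]; ring
        _ ≤ _ := by exact_mod_cast h1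
    have hMs2 : (Ms t ((k - q%k)%k) : ℝ) ≤ t := by
      have h1 : Ms t ((k - q%k)%k) ≤ t := by rw [Ms]; split <;> omega
      exact_mod_cast h1
    have habs := abs_le.1 hqs
    have hYP1 : ((t:ℝ)-1)*P ≤ (Ms t ((k - q%k)%k) : ℝ)*P :=
      mul_le_mul_of_nonneg_right hMs1 hP0.le
    have hYP2 : (Ms t ((k - q%k)%k) : ℝ)*P ≤ (t:ℝ)*P :=
      mul_le_mul_of_nonneg_right hMs2 hP0.le
    constructor
    · linarith [habs.1]
    · linarith [habs.2]
  have hcK : ∀ q : ℕ, ((range ((t-1)*k+1)).filter (fun o => cond (q+o))).card ≤ (t-1)*k+1 := by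
    intro q
    exact (Finset.card_filter_le _ _).trans (card_range _).le
  have htn : ∀ᶠ n : ℕ in atTop, (t:ℝ)/n < ε₀/16 :=
    (tendsto_const_div_atTop_nhds_zero_nat (t:ℝ)).eventually_lt_const (by positivity)
  filter_upwards [hβev, htn, eventually_ge_atTop 1] with n hβ htn' hn1
  have hn0 : (0:ℝ) < n := by exact_mod_cast hn1
  obtain ⟨hDb1, hDb2⟩ := D_bounds cond (fun _ h => h.1) hk0 (show 1 ≤ t by omega) n
  -- split the double-count over good and bad windows
  have hsplitsum := Finset.sum_filter_add_sum_filter_not (range n)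
    (fun q => (fun i : Fin (t*k) => x (m+q+i.1)) ∈ BadSet p w t d ε)
    (fun q => ((range ((t-1)*k+1)).filter (fun o => cond (q+o))).card)
  have hcardsplit := Finset.card_filter_add_card_filter_not (s := range n)
    (p := fun q => (fun i : Fin (t*k) => x (m+q+i.1)) ∈ BadSet p w t d ε)
  rw [card_range] at hcardsplit
  simp only [hA]
  set Kn : ℕ := (t-1)*k+1 with hKn
  set An : ℕ := ((range n).filter cond).card with hAn
  set bn : ℕ := ((range n).filter
    (fun q => (fun i : Fin (t*k) => x (m+q+i.1)) ∈ BadSet p w t d ε)).card with hbn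
  set Dn : ℕ := ∑ q ∈ range n, ((range Kn).filter (fun o => cond (q+o))).card with hDn
  have hbnlen : bn ≤ n := by
    rw [hbn]
    exact (Finset.card_filter_le _ _).trans (card_range n).le
  have hgoodcard : (((range n).filter
      (fun q => ¬((fun i : Fin (t*k) => x (m+q+i.1)) ∈ BadSet p w t d ε))).card : ℝ)
      = (n:ℝ) - bn := by
    have h1 : bn + ((range n).filter
        (fun q => ¬((fun i : Fin (t*k) => x (m+q+i.1)) ∈ BadSet p w t d ε))).card = n :=
      hcardsplit
    have h2 : ((range n).filter
        (fun q => ¬((fun i : Fin (t*k) => x (m+q+i.1)) ∈ BadSet p w t d ε))).card = n - bn := by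
      omega
    rw [h2, Nat.cast_sub hbnlen]
  have hD1R : (Dn:ℝ) ≤ (Kn:ℝ)*An + (Kn:ℝ)*t := by exact_mod_cast hDb1
  have hD2R : (Kn:ℝ)*An ≤ (Dn:ℝ) + (Kn:ℝ)*t := by exact_mod_cast hDb2
  have hDcast : (Dn:ℝ) =
      (∑ q ∈ (range n).filter (fun q => (fun i : Fin (t*k) => x (m+q+i.1)) ∈ BadSet p w t d ε),
        (((range Kn).filter (fun o => cond (q+o))).card : ℝ))
      + (∑ q ∈ (range n).filter (fun q => ¬((fun i : Fin (t*k) => x (m+q+i.1)) ∈ BadSet p w t d ε)),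
        (((range Kn).filter (fun o => cond (q+o))).card : ℝ)) := by
    rw [← hsplitsum]
    push_cast
    ring
  have hbadsum : (∑ q ∈ (range n).filter
        (fun q => (fun i : Fin (t*k) => x (m+q+i.1)) ∈ BadSet p w t d ε),
        (((range Kn).filter (fun o => cond (q+o))).card : ℝ)) ≤ (bn:ℝ)*(Kn:ℝ) := by
    calc _ ≤ ∑ _q ∈ (range n).filter
          (fun q => (fun i : Fin (t*k) => x (m+q+i.1)) ∈ BadSet p w t d ε), (Kn:ℝ) :=
          Finset.sum_le_sum (fun q _ => by exact_mod_cast hcK q)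
      _ = (bn:ℝ)*(Kn:ℝ) := by
          rw [Finset.sum_const, nsmul_eq_mul, ← hbn]
  have hgoodsum_le : (∑ q ∈ (range n).filter
        (fun q => ¬((fun i : Fin (t*k) => x (m+q+i.1)) ∈ BadSet p w t d ε)),
        (((range Kn).filter (fun o => cond (q+o))).card : ℝ))
      ≤ ((n:ℝ) - bn) * ((t:ℝ)*P + ε*t) := by
    calc _ ≤ ∑ _q ∈ (range n).filter
          (fun q => ¬((fun i : Fin (t*k) => x (m+q+i.1)) ∈ BadSet p w t d ε)),
            ((t:ℝ)*P + ε*t) :=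
          Finset.sum_le_sum (fun q hq => (hgood q (by
            have := (Finset.mem_filter.1 hq).2
            simpa using this)).2)
      _ = ((n:ℝ) - bn) * ((t:ℝ)*P + ε*t) := by
          rw [Finset.sum_const, nsmul_eq_mul, hgoodcard]
  have hgoodsum_ge : ((n:ℝ) - bn) * (((t:ℝ)-1)*P - ε*t)
      ≤ ∑ q ∈ (range n).filter
        (fun q => ¬((fun i : Fin (t*k) => x (m+q+i.1)) ∈ BadSet p w t d ε)),
        (((range Kn).filter (fun o => cond (q+o))).card : ℝ) := by
    calc ((n:ℝ) - bn) * (((t:ℝ)-1)*P - ε*t)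
        = ∑ _q ∈ (range n).filter
          (fun q => ¬((fun i : Fin (t*k) => x (m+q+i.1)) ∈ BadSet p w t d ε)),
            (((t:ℝ)-1)*P - ε*t) := by
          rw [Finset.sum_const, nsmul_eq_mul, hgoodcard]
      _ ≤ _ :=
          Finset.sum_le_sum (fun q hq => (hgood q (by
            have := (Finset.mem_filter.1 hq).2
            simpa using this)).1)
  have hbadsum_nonneg : (0:ℝ) ≤ ∑ q ∈ (range n).filter
        (fun q => (fun i : Fin (t*k) => x (m+q+i.1)) ∈ BadSet p w t d ε),
        (((range Kn).filter (fun o => cond (q+o))).card : ℝ) :=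
    Finset.sum_nonneg fun q _ => by positivity
  have hβ0 : (0:ℝ) ≤ (bn:ℝ)/n := by positivity
  clear_value P ε
  have hbnn : (bn:ℝ) ≤ n := by exact_mod_cast hbnlen
  have hfactor : (0:ℝ) ≤ ((t:ℝ)-1)*P - ε*t := arith_factor P ε t hP0 hεP htR
  have hupper : (Dn:ℝ) ≤ ((n:ℝ) - bn)*((t:ℝ)*P + ε*t) + (bn:ℝ)*Kn := by
    rw [hDcast]; linarith
  have hlower : ((n:ℝ)-bn)*(((t:ℝ)-1)*P-ε*t) ≤ (Dn:ℝ) := by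
    rw [hDcast]; linarith
  have hupper' : (Dn:ℝ) ≤ (n:ℝ)*((t:ℝ)*P + ε*t) + (bn:ℝ)*Kn := by
    have h1 : ((n:ℝ) - bn)*((t:ℝ)*P + ε*t) ≤ (n:ℝ)*((t:ℝ)*P + ε*t) := by
      apply mul_le_mul_of_nonneg_right _ (by positivity)
      linarith
    linarith
  -- upper estimate
  have hup2 : (An:ℝ)/n ≤ (t:ℝ)*(P+ε)/Kn + (bn:ℝ)/n + (t:ℝ)/n := by
    have e1 : (t:ℝ)*(P+ε)/(Kn:ℝ) + (bn:ℝ)/n + (t:ℝ)/n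
        = ((n:ℝ)*((t:ℝ)*P+ε*t) + (bn:ℝ)*Kn + (Kn:ℝ)*t)/((Kn:ℝ)*n) := by
      field_simp
    rw [e1, div_le_div_iff₀ hn0 (by positivity)]
    calc (An:ℝ)*((Kn:ℝ)*n) = ((Kn:ℝ)*An)*n := by ring
      _ ≤ ((n:ℝ)*((t:ℝ)*P+ε*t) + (bn:ℝ)*Kn + (Kn:ℝ)*t)*n := by
          apply mul_le_mul_of_nonneg_right _ hn0.le
          linarith
  have hS1 : (t:ℝ)*(P+ε)/Kn ≤ P/k + ε₀/4 := by
    have e2 : (P + (ε₀/4)*k)/(k:ℝ) = P/(k:ℝ) + ε₀/4 := by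
      rw [add_div, mul_div_cancel_right₀ _ (ne_of_gt hkR)]
    rw [← e2, div_le_div_iff₀ hK0 hkR, hKcast]
    exact arith_upper P ε ε₀ t k hP0 hε₀ hk1 htR hεk htP
  -- lower estimate
  set R : ℝ := (((t:ℝ)-1)*P-ε*t)/(Kn:ℝ) with hRdef
  have hR0 : (0:ℝ) ≤ R := div_nonneg hfactor hK0.le
  have hR1 : R ≤ 1 := by
    rw [hRdef, div_le_one hK0, hKcast]
    exact arith_R1 P ε t k hP1 hk1 htR hεpos
  have hlow2 : (1 - (bn:ℝ)/n)*R - (t:ℝ)/n ≤ (An:ℝ)/n := by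
    have e3 : (1 - (bn:ℝ)/n)*R - (t:ℝ)/n
        = (((n:ℝ)-bn)*(((t:ℝ)-1)*P-ε*t) - (Kn:ℝ)*t)/((Kn:ℝ)*n) := by
      rw [hRdef]
      field_simp
    rw [e3, div_le_div_iff₀ (by positivity) hn0]
    calc (((n:ℝ)-bn)*(((t:ℝ)-1)*P-ε*t) - (Kn:ℝ)*t)*n ≤ ((Kn:ℝ)*An)*n := by
          apply mul_le_mul_of_nonneg_right _ hn0.le
          linarith
      _ = (An:ℝ)*((Kn:ℝ)*n) := by ring
  have hPkR : P/k - R ≤ ε₀/4 := by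
    have e4 : ((((t:ℝ)-1)*P-ε*t) + (ε₀/4)*(Kn:ℝ))/(Kn:ℝ)
        = (((t:ℝ)-1)*P-ε*t)/(Kn:ℝ) + ε₀/4 := by
      rw [add_div, mul_div_cancel_right₀ _ (ne_of_gt hK0)]
    rw [sub_le_iff_le_add', hRdef, ← e4, div_le_div_iff₀ hkR hK0, hKcast]
    exact arith_lower P ε ε₀ t k hP0 hε₀ hk1 htR hεk htP
  have hβR : ((bn:ℝ)/n)*R ≤ (bn:ℝ)/n := mul_le_of_le_one_right hβ0 hR1
  have hexpand : (1 - (bn:ℝ)/n)*R = R - ((bn:ℝ)/n)*R := by ring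
  rw [Real.dist_eq, abs_sub_lt_iff]
  constructor
  · linarith [hup2, hS1, hβ, htn'.le]
  · linarith [hlow2, hPkR, hβR, hβ, htn'.le, hexpand.le, hexpand.ge]
end

section
/- Fix an integer base b ≥ 2 and positive real biases p_0, …, p_{b−1} with Σ_{i<b} p_i = 1. For an infinite base-b sequence x : ℕ → {0,…,b−1}, the following are equivalent: (1) x is biased normal with respect to p_0, …, p_{b−1}, i.e., for every k ≥ 1, every offset m ≥ 0, and every block w of length k, lim_{N→∞} (1/N)·#{ j < N : x(m + jk + i) = w(i) for all i < k } = ∏_{i<k} p_{w(i)}; (2) for every k ≥ 1 and every block w of length k, lim_{ℓ→∞} (1/ℓ)·#{ j < ℓ : x(jk + i) = w(i) for all i < k } = ∏_{i<k} p_{w(i)} (biased simple normality in base b^k for every k); (3) for every r ≥ 1 and every block v of length r, lim_{n→∞} occ(x[0:n−1], v)/n = ∏_{i<r} p_{v(i)}. -/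
open Filter Finset

namespace BN


/-- extension of a finite word to `ℕ` -/
def ext {b : ℕ} (hb : 0 < b) {L : ℕ} (u : Fin L → Fin b) (t : ℕ) : Fin b :=
  if h : t < L then u ⟨t, h⟩ else ⟨0, hb⟩

lemma ext_lt {b : ℕ} (hb : 0 < b) {L : ℕ} (u : Fin L → Fin b) {t : ℕ} (h : t < L) :
    ext hb u t = u ⟨t, h⟩ := dif_pos h

/- ## analytic helpers -/

lemma tendsto_of_abs_le {f : ℕ → ℝ} {a : ℝ}
    (h : ∀ ε : ℝ, 0 < ε → ∀ᶠ n in atTop, |f n - a| ≤ ε) :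
    Tendsto f atTop (nhds a) := by
  rw [Metric.tendsto_nhds]
  intro ε hε
  filter_upwards [h (ε / 2) (by linarith)] with n hn
  rw [Real.dist_eq]
  linarith

lemma cast_sub_ge (m n : ℕ) : (m : ℝ) - n ≤ ((m - n : ℕ) : ℝ) := by
  rcases le_total n m with h | h
  · rw [Nat.cast_sub h]
  · have h1 : m - n = 0 := Nat.sub_eq_zero_of_le h
    have h2 : (m : ℝ) ≤ n := by exact_mod_cast h
    rw [h1]
    push_cast
    linarith

lemma tendsto_div_of_bounded_sub {f : ℕ → ℝ} {c C : ℝ}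
    (h : ∀ᶠ n in atTop, |f n - c * n| ≤ C) :
    Tendsto (fun n : ℕ => f n / n) atTop (nhds c) := by
  have h0 : Tendsto (fun n : ℕ => (f n - c * n) / n) atTop (nhds 0) := by
    apply squeeze_zero_norm' ?_ (tendsto_const_div_atTop_nhds_zero_nat C)
    filter_upwards [h, eventually_ge_atTop 1] with n h1 h2
    have hn : (0:ℝ) < n := by exact_mod_cast h2
    rw [norm_div, Real.norm_eq_abs, Real.norm_natCast]
    gcongr
  have h1 : Tendsto (fun n : ℕ => c + (f n - c * n) / n) atTop (nhds (c + 0)) :=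
    tendsto_const_nhds.add h0
  rw [add_zero] at h1
  apply h1.congr'
  filter_upwards [eventually_ge_atTop 1] with n hn
  have hn' : ((n:ℝ)) ≠ 0 := by
    have : (0:ℝ) < n := by exact_mod_cast hn
    linarith
  field_simp
  ring

lemma tendsto_natdiv {K : ℕ} (hK : 0 < K) :
    Tendsto (fun n : ℕ => ((n / K : ℕ) : ℝ) / n) atTop (nhds (1 / K)) := by
  apply tendsto_div_of_bounded_sub (C := 1)
  filter_upwards with n
  have hd := Nat.div_add_mod n K
  have hm := Nat.mod_lt n hK
  have hK' : (0:ℝ) < K := by exact_mod_cast hK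
  have hcast : (K:ℝ) * ((n / K : ℕ):ℝ) + ((n % K : ℕ):ℝ) = n := by exact_mod_cast hd
  have key : ((n / K : ℕ):ℝ) - (1/K) * n = -(((n % K : ℕ):ℝ) / K) := by
    field_simp
    linarith
  rw [key, abs_neg, abs_div, abs_of_nonneg (by positivity), abs_of_pos hK', div_le_one hK']
  have : ((n % K : ℕ):ℝ) < K := by exact_mod_cast hm
  linarith

lemma ratio_shift {f : ℕ → ℕ} {c : ℝ}
    (h : Tendsto (fun n : ℕ => (f n : ℝ) / n) atTop (nhds c)) (d : ℕ) :
    Tendsto (fun n : ℕ => (f (n + d) : ℝ) / n) atTop (nhds c) := by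
  have h1 : Tendsto (fun n : ℕ => (f (n + d) : ℝ) / ((n + d : ℕ) : ℝ)) atTop (nhds c) :=
    h.comp (tendsto_add_atTop_nat d)
  have h2 : Tendsto (fun n : ℕ => ((n + d : ℕ) : ℝ) / n) atTop (nhds 1) := by
    apply tendsto_div_of_bounded_sub (C := d)
    filter_upwards with n
    have : ((n + d : ℕ):ℝ) - 1 * n = d := by push_cast; ring
    rw [this, abs_of_nonneg (by positivity)]
  have h3 := h1.mul h2
  rw [mul_one] at h3
  apply h3.congr'
  filter_upwards [eventually_ge_atTop 1] with n hn
  have hn0 : (0:ℝ) < n := by exact_mod_cast hn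
  have hnd : ((n:ℝ) + d) ≠ 0 := by positivity
  field_simp

lemma ratio_affine {f : ℕ → ℕ} {c : ℝ}
    (h : Tendsto (fun n : ℕ => (f n : ℝ) / n) atTop (nhds c)) (a d : ℕ) (ha : 0 < a) :
    Tendsto (fun N : ℕ => (f (d + N * a) : ℝ) / N) atTop (nhds (c * a)) := by
  have hg : Tendsto (fun N : ℕ => d + N * a) atTop atTop := by
    apply tendsto_atTop_atTop.2
    intro M
    refine ⟨M, fun n hn => ?_⟩
    have : n ≤ n * a := Nat.le_mul_of_pos_right n ha
    omega
  have h1 : Tendsto (fun N : ℕ => (f (d + N * a) : ℝ) / (d + N * a : ℕ)) atTop (nhds c) :=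
    h.comp hg
  have h2 : Tendsto (fun N : ℕ => ((d + N * a : ℕ) : ℝ) / N) atTop (nhds a) := by
    apply tendsto_div_of_bounded_sub (C := d)
    filter_upwards with n
    have : ((d + n * a : ℕ):ℝ) - (a:ℝ) * n = d := by push_cast; ring
    rw [this, abs_of_nonneg (by positivity)]
  have h3 := h1.mul h2
  apply h3.congr'
  filter_upwards [eventually_ge_atTop 1] with n hn
  have hpos : 0 < d + n * a := by
    have : n ≤ n * a := Nat.le_mul_of_pos_right n ha
    omega
  have hnd : ((d + n * a : ℕ):ℝ) ≠ 0 := by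
    have : (0:ℝ) < ((d + n * a : ℕ):ℝ) := by exact_mod_cast hpos
    linarith
  field_simp

lemma ratio_floordiv {f : ℕ → ℕ} {c : ℝ}
    (h : Tendsto (fun n : ℕ => (f n : ℝ) / n) atTop (nhds c)) (K : ℕ) (hK : 0 < K) :
    Tendsto (fun n : ℕ => (f (n / K) : ℝ) / n) atTop (nhds (c / K)) := by
  have hg : Tendsto (fun n : ℕ => n / K) atTop atTop := by
    apply tendsto_atTop_atTop.2
    intro M
    exact ⟨M * K, fun n hn => (Nat.le_div_iff_mul_le hK).2 hn⟩
  have h1 : Tendsto (fun n : ℕ => (f (n / K) : ℝ) / ((n / K : ℕ) : ℝ)) atTop (nhds c) :=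
    h.comp hg
  have h3 := h1.mul (tendsto_natdiv hK)
  rw [show c * (1 / K) = c / K by ring] at h3
  apply h3.congr'
  filter_upwards [eventually_ge_atTop K] with n hn
  have hpos : 0 < n / K := (Nat.one_le_div_iff hK).2 hn
  have hnd : ((n / K : ℕ):ℝ) ≠ 0 := by
    have : (0:ℝ) < ((n / K : ℕ):ℝ) := by exact_mod_cast hpos
    linarith
  field_simp

section CYL
variable {b : ℕ} (hb : 0 < b) (p : Fin b → ℝ)

lemma sum_mu_one (hsum : ∑ i, p i = 1) (L : ℕ) :
    ∑ u : Fin L → Fin b, ∏ j, p (u j) = 1 := by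
  classical
  rw [← Fintype.prod_sum (fun (_ : Fin L) (j : Fin b) => p j)]
  simp [hsum]

lemma p_le_one (hp : ∀ i, 0 < p i) (hsum : ∑ i, p i = 1) (i : Fin b) : p i ≤ 1 := by
  rw [← hsum]
  exact Finset.single_le_sum (fun j _ => (hp j).le) (mem_univ i)

lemma theta_pos (hp : ∀ i, 0 < p i) {k : ℕ} (w : Fin k → Fin b) : 0 < ∏ i, p (w i) :=
  Finset.prod_pos fun i _ => hp _

lemma theta_le_one (hp : ∀ i, 0 < p i) (hsum : ∑ i, p i = 1) {k : ℕ} (w : Fin k → Fin b) :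
    ∏ i, p (w i) ≤ 1 :=
  Finset.prod_le_one (fun i _ => (hp _).le) (fun i _ => p_le_one p hp hsum _)

lemma cylS (hsum : ∑ i, p i = 1) (L : ℕ)
    (S : Finset ℕ) (hS : ∀ i ∈ S, i < L) (φ : ℕ → Fin b) :
    ∑ u : Fin L → Fin b, (if ∀ i ∈ S, ext hb u i = φ i then ∏ j, p (u j) else 0)
      = ∏ i ∈ S, p (φ i) := by
  classical
  have key : ∀ u : Fin L → Fin b,
      (if ∀ i ∈ S, ext hb u i = φ i then ∏ j, p (u j) else 0)
        = ∏ j : Fin L,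
            (if (j : ℕ) ∈ S then (if u j = φ (j : ℕ) then p (u j) else 0) else p (u j)) := by
    intro u
    by_cases h : ∀ i ∈ S, ext hb u i = φ i
    · rw [if_pos h]
      refine (Finset.prod_congr rfl ?_).symm
      intro j _
      by_cases hj : (j : ℕ) ∈ S
      · have h2 := h j hj
        rw [ext_lt hb u j.isLt] at h2
        simp only [Fin.eta] at h2
        rw [if_pos hj, if_pos h2]
      · rw [if_neg hj]
    · rw [if_neg h]
      push_neg at h
      obtain ⟨i, hiS, hne⟩ := h
      have hiL := hS i hiS
      rw [ext_lt hb u hiL] at hne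
      refine (Finset.prod_eq_zero (Finset.mem_univ (⟨i, hiL⟩ : Fin L)) ?_).symm
      simp only [if_pos (show ((⟨i, hiL⟩ : Fin L) : ℕ) ∈ S from hiS)]
      rw [if_neg hne]
  rw [Finset.sum_congr rfl fun u _ => key u]
  rw [← Fintype.prod_sum
    (fun (j : Fin L) (v : Fin b) =>
      if (j : ℕ) ∈ S then (if v = φ (j : ℕ) then p v else 0) else p v)]
  have hfac : ∀ j : Fin L,
      (∑ v : Fin b, if (j : ℕ) ∈ S then (if v = φ (j : ℕ) then p v else 0) else p v)
        = if (j : ℕ) ∈ S then p (φ (j : ℕ)) else 1 := by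
    intro j
    by_cases hj : (j : ℕ) ∈ S
    · simp [hj]
    · simp [hj, hsum]
  rw [Finset.prod_congr rfl fun j _ => hfac j, ← Finset.prod_filter]
  refine Finset.prod_bij' (fun (j : Fin L) _ => (j : ℕ))
    (fun i hi => (⟨i, hS i hi⟩ : Fin L)) ?_ ?_ ?_ ?_ ?_
  · intro a ha
    exact (Finset.mem_filter.1 ha).2
  · intro a ha
    simp only [Finset.mem_filter]
    exact ⟨Finset.mem_univ _, ha⟩
  · intro a _
    rfl
  · intro a _
    rfl
  · intro a _
    rfl

lemma interval_cond {L k : ℕ} (w : Fin k → Fin b) (s : ℕ) (φ : ℕ → Fin b)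
    (hφs : ∀ i : Fin k, φ (s + (i : ℕ)) = w i) (u : Fin L → Fin b) :
    (∀ i ∈ (Finset.range k).image (fun a => s + a), ext hb u i = φ i)
      ↔ (∀ i : Fin k, ext hb u (s + (i : ℕ)) = w i) := by
  constructor
  · intro h i
    have hmem : s + (i : ℕ) ∈ (Finset.range k).image (fun a => s + a) :=
      Finset.mem_image.2 ⟨i, Finset.mem_range.2 i.isLt, rfl⟩
    rw [h _ hmem, hφs]
  · intro h t ht
    obtain ⟨a, ha, rfl⟩ := Finset.mem_image.1 ht
    have := h ⟨a, Finset.mem_range.1 ha⟩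
    rw [this]
    exact (hφs ⟨a, Finset.mem_range.1 ha⟩).symm

lemma interval_prod {k : ℕ} (w : Fin k → Fin b) (s : ℕ) (φ : ℕ → Fin b)
    (hφs : ∀ i : Fin k, φ (s + (i : ℕ)) = w i) :
    ∏ i ∈ (Finset.range k).image (fun a => s + a), p (φ i) = ∏ i, p (w i) := by
  rw [Finset.prod_image (by intro a _ a' _ h; simp only at h; omega)]
  rw [← Fin.prod_univ_eq_prod_range (fun a => p (φ (s + a))) k]
  exact Finset.prod_congr rfl fun i _ => by rw [hφs]

lemma cyl_one (hsum : ∑ i, p i = 1) {L k : ℕ} (hk : 0 < k) (w : Fin k → Fin b)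
    {s : ℕ} (hsk : s + k ≤ L) :
    ∑ u : Fin L → Fin b,
        (if ∀ i : Fin k, ext hb u (s + (i : ℕ)) = w i then ∏ j, p (u j) else 0)
      = ∏ i, p (w i) := by
  classical
  set φ : ℕ → Fin b := fun t => if h : t - s < k then w ⟨t - s, h⟩ else w ⟨0, hk⟩ with hφ
  have hφs : ∀ i : Fin k, φ (s + (i : ℕ)) = w i := by
    intro i
    have h1 : s + (i : ℕ) - s = (i : ℕ) := by omega
    simp only [hφ, h1, i.isLt, dif_pos, Fin.eta]
  have hS : ∀ i ∈ (Finset.range k).image (fun a => s + a), i < L := by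
    intro i hi
    obtain ⟨a, ha, rfl⟩ := Finset.mem_image.1 hi
    have := Finset.mem_range.1 ha
    omega
  have hcyl := cylS hb p hsum L ((Finset.range k).image (fun a => s + a)) hS φ
  rw [Finset.sum_congr rfl
    (fun u _ => if_congr (interval_cond hb w s φ hφs u) rfl rfl)] at hcyl
  rw [hcyl]
  exact interval_prod p w s φ hφs

lemma cyl_two (hsum : ∑ i, p i = 1) {L k : ℕ} (hk : 0 < k) (w : Fin k → Fin b)
    {s s' : ℕ} (hss : s + k ≤ s') (hs'L : s' + k ≤ L) :
    ∑ u : Fin L → Fin b,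
        (if (∀ i : Fin k, ext hb u (s + (i : ℕ)) = w i) ∧
            (∀ i : Fin k, ext hb u (s' + (i : ℕ)) = w i)
          then ∏ j, p (u j) else 0)
      = (∏ i, p (w i)) * ∏ i, p (w i) := by
  classical
  set φ : ℕ → Fin b := fun t =>
    if t < s + k then (if h : t - s < k then w ⟨t - s, h⟩ else w ⟨0, hk⟩)
    else (if h : t - s' < k then w ⟨t - s', h⟩ else w ⟨0, hk⟩) with hφ
  have hφ1 : ∀ i : Fin k, φ (s + (i : ℕ)) = w i := by
    intro i
    have hlt : s + (i : ℕ) < s + k := by have := i.isLt; omega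
    have h1 : s + (i : ℕ) - s = (i : ℕ) := by omega
    simp only [hφ, hlt, if_pos, h1, i.isLt, dif_pos, Fin.eta]
  have hφ2 : ∀ i : Fin k, φ (s' + (i : ℕ)) = w i := by
    intro i
    have hlt : ¬ (s' + (i : ℕ) < s + k) := by omega
    have h1 : s' + (i : ℕ) - s' = (i : ℕ) := by omega
    simp only [hφ, hlt, if_false, h1, i.isLt, dif_pos, Fin.eta]
  set S1 := (Finset.range k).image (fun a => s + a) with hS1
  set S2 := (Finset.range k).image (fun a => s' + a) with hS2
  have hS1mem : ∀ i ∈ S1, i < s + k := by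
    intro i hi; obtain ⟨a, ha, rfl⟩ := Finset.mem_image.1 hi
    have := Finset.mem_range.1 ha; omega
  have hS2mem : ∀ i ∈ S2, s' ≤ i := by
    intro i hi; obtain ⟨a, ha, rfl⟩ := Finset.mem_image.1 hi; omega
  have hdisj : Disjoint S1 S2 := by
    rw [Finset.disjoint_left]
    intro t ht1 ht2
    have := hS1mem t ht1
    have := hS2mem t ht2
    omega
  have hS : ∀ i ∈ S1 ∪ S2, i < L := by
    intro i hi
    rcases Finset.mem_union.1 hi with h | h
    · have := hS1mem i h; omega
    · obtain ⟨a, ha, rfl⟩ := Finset.mem_image.1 h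
      have := Finset.mem_range.1 ha; omega
  have hcyl := cylS hb p hsum L (S1 ∪ S2) hS φ
  have hcond : ∀ u : Fin L → Fin b,
      (∀ i ∈ S1 ∪ S2, ext hb u i = φ i) ↔
        ((∀ i : Fin k, ext hb u (s + (i : ℕ)) = w i) ∧
          (∀ i : Fin k, ext hb u (s' + (i : ℕ)) = w i)) := by
    intro u
    rw [Finset.forall_mem_union]
    exact and_congr (interval_cond hb w s φ hφ1 u) (interval_cond hb w s' φ hφ2 u)
  rw [Finset.sum_congr rfl (fun u _ => if_congr (hcond u) rfl rfl)] at hcyl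
  rw [hcyl, Finset.prod_union hdisj, interval_prod p w s φ hφ1, interval_prod p w s' φ hφ2]


end CYL
lemma mod_compl {k r e s₀ : ℕ} (hk : 0 < k) (hr : r < k) (he : e < k) (hs : s₀ < k)
    (h : (e + r) % k = s₀) : e = (s₀ + k - r) % k := by
  rcases Nat.lt_or_ge (e + r) k with h1 | h1
  · rw [Nat.mod_eq_of_lt h1] at h
    have h2 : s₀ + k - r = e + k := by omega
    rw [h2, Nat.add_mod_right, Nat.mod_eq_of_lt he]
  · have h2 : e + r - k < k := by omega
    have h3 : (e + r) % k = e + r - k := by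
      rw [Nat.mod_eq_sub_mod h1, Nat.mod_eq_of_lt h2]
    rw [h3] at h
    have h4 : s₀ + k - r = e := by omega
    rw [h4, Nat.mod_eq_of_lt he]

lemma card_residue_le {k : ℕ} (hk : 0 < k) (c : ℕ) (N : ℕ) :
    ((range N).filter (fun q => q % k = c)).card ≤ N / k + 1 := by
  have h := Finset.card_le_card_of_injOn (f := fun q => q / k)
    (s := (range N).filter (fun q => q % k = c)) (t := range (N / k + 1)) ?_ ?_
  · simpa using h
  · intro q hq
    simp only [Finset.mem_coe, Finset.mem_filter, Finset.mem_range] at hq ⊢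
    have := Nat.div_le_div_right (c := k) (Nat.le_of_lt_succ (Nat.lt_succ_of_lt hq.1))
    have := Nat.div_le_div_right (c := k) hq.1.le
    omega
  · intro q hq q' hq' hqq
    simp only [Finset.coe_filter, Set.mem_setOf_eq, Finset.mem_range] at hq hq'
    have h1 := Nat.div_add_mod q k
    have h2 := Nat.div_add_mod q' k
    rw [hq.2] at h1
    rw [hq'.2] at h2
    have hqq' : q / k = q' / k := hqq
    rw [hqq'] at h1
    exact h1.symm.trans h2

lemma card_residue_ge {k : ℕ} (hk : 0 < k) {s₀ : ℕ} (hs₀ : s₀ < k) (n : ℕ) :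
    (n - s₀) / k ≤ ((range n).filter (fun q => q % k = s₀)).card := by
  have h := Finset.card_le_card_of_injOn (f := fun j => s₀ + j * k)
    (s := range ((n - s₀) / k)) (t := (range n).filter (fun q => q % k = s₀)) ?_ ?_
  · simpa using h
  · intro j hj
    simp only [Finset.mem_coe, Finset.mem_range] at hj
    have h1 : (j + 1) * k ≤ ((n - s₀) / k) * k :=
      Nat.mul_le_mul_right k (Nat.succ_le_of_lt hj)
    have h2 : ((n - s₀) / k) * k ≤ n - s₀ := Nat.div_mul_le_self _ _
    rw [add_mul, one_mul] at h1
    simp only [Finset.mem_coe, Finset.mem_filter, Finset.mem_range]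
    constructor
    · omega
    · rw [Nat.add_mul_mod_self_right, Nat.mod_eq_of_lt hs₀]
  · intro j _ j' _ h
    simp only at h
    have := Nat.add_left_cancel h
    exact Nat.eq_of_mul_eq_mul_right hk this

lemma tendsto_Ccnt {k : ℕ} (hk : 0 < k) {s₀ : ℕ} (hs₀ : s₀ < k) :
    Tendsto (fun n : ℕ => (((range n).filter (fun q => q % k = s₀)).card : ℝ) / n)
      atTop (nhds (1 / k)) := by
  apply tendsto_div_of_bounded_sub (C := (s₀ : ℝ) + k + 1)
  filter_upwards with n
  have hub := card_residue_le hk s₀ n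
  have hlb := card_residue_ge hk hs₀ n
  have hk' : (0:ℝ) < k := by exact_mod_cast hk
  have h1 : ((n / k : ℕ) : ℝ) ≤ (n : ℝ) / k := Nat.cast_div_le
  -- lower bound : ↑((n - s₀)/k) ≥ ((n:ℝ) - s₀ - k)/k
  have h2 : ((n : ℝ) - s₀ - k) / k ≤ (((n - s₀) / k : ℕ) : ℝ) := by
    have hd := Nat.div_add_mod (n - s₀) k
    have hm : (n - s₀) % k < k := Nat.mod_lt _ hk
    have hc : (k : ℝ) * (((n - s₀) / k : ℕ) : ℝ) + (((n - s₀) % k : ℕ) : ℝ)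
        = ((n - s₀ : ℕ) : ℝ) := by exact_mod_cast hd
    have hc2 : (n : ℝ) - s₀ ≤ ((n - s₀ : ℕ) : ℝ) := cast_sub_ge n s₀
    have hm' : (((n - s₀) % k : ℕ) : ℝ) < k := by exact_mod_cast hm
    rw [div_le_iff₀ hk']
    nlinarith
  have hubr : (((range n).filter (fun q => q % k = s₀)).card : ℝ) ≤ (n : ℝ) / k + 1 := by
    have : (((range n).filter (fun q => q % k = s₀)).card : ℝ) ≤ ((n / k : ℕ) : ℝ) + 1 := by
      exact_mod_cast hub
    linarith
  have hlbr : ((n : ℝ) - s₀ - k) / k ≤ (((range n).filter (fun q => q % k = s₀)).card : ℝ) := by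
    have : (((n - s₀) / k : ℕ) : ℝ) ≤ (((range n).filter (fun q => q % k = s₀)).card : ℝ) := by
      exact_mod_cast hlb
    linarith
  rw [abs_le]
  constructor
  · rw [sub_div, sub_div] at hlbr
    have e1 : (n:ℝ)/k = 1/k * n := by ring
    have hk1 : (1:ℝ) ≤ k := by exact_mod_cast hk
    have hs0 : (0:ℝ) ≤ s₀ := Nat.cast_nonneg s₀
    have e2 : (s₀:ℝ)/k ≤ s₀ := by
      rw [div_le_iff₀ hk']
      nlinarith
    have e3 : (k:ℝ)/k = 1 := div_self (ne_of_gt hk')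
    nlinarith
  · have e1 : (n:ℝ)/k = 1/k * n := by ring
    nlinarith


def gct {b : ℕ} (hb : 0 < b) {r K : ℕ} (v : Fin r → Fin b) (u : Fin K → Fin b) : ℕ :=
  ((range (K + 1 - r)).filter (fun s => ∀ i : Fin r, ext hb u (s + (i : ℕ)) = v i)).card

variable {b : ℕ}
/-- grouping a sum of window-statistics by the window word -/
lemma window_sum (x : ℕ → Fin b) {L : ℕ} (g : (Fin L → Fin b) → ℕ) (S : Finset ℕ)
    (pos : ℕ → ℕ) :
    ∑ u : Fin L → Fin b,
        ((S.filter (fun a => ∀ i : Fin L, x (pos a + (i : ℕ)) = u i)).card) * g u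
      = ∑ a ∈ S, g (fun i : Fin L => x (pos a + (i : ℕ))) := by
  classical
  have step : ∀ u : Fin L → Fin b,
      ((S.filter (fun a => ∀ i : Fin L, x (pos a + (i : ℕ)) = u i)).card) * g u
        = ∑ a ∈ S, (if (fun i : Fin L => x (pos a + (i : ℕ))) = u then g u else 0) := by
    intro u
    rw [Finset.card_filter, Finset.sum_mul]
    apply Finset.sum_congr rfl
    intro a _
    have hiff : (∀ i : Fin L, x (pos a + (i : ℕ)) = u i)
        ↔ ((fun i : Fin L => x (pos a + (i : ℕ))) = u) := (funext_iff).symm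
    by_cases h : (fun i : Fin L => x (pos a + (i : ℕ))) = u
    · rw [if_pos (hiff.2 h), if_pos h, one_mul]
    · rw [if_neg (fun hc => h (hiff.1 hc)), if_neg h, zero_mul]
  rw [Finset.sum_congr rfl fun u _ => step u, Finset.sum_comm]
  apply Finset.sum_congr rfl
  intro a _
  rw [Finset.sum_ite_eq (Finset.univ) (fun i : Fin L => x (pos a + (i : ℕ))) g]
  simp

/-- Chebyshev-type variance bound for occurrences at separated positions. -/
lemma var_bound (hb : 0 < b) (p : Fin b → ℝ) (hp : ∀ i, 0 < p i) (hsum : ∑ i, p i = 1)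
    {L k : ℕ} (hk : 0 < k) (w : Fin k → Fin b) (Q : Finset ℕ)
    (hQL : ∀ q ∈ Q, q + k ≤ L)
    (hsep : ∀ q ∈ Q, ∀ q' ∈ Q, q ≠ q' → q + k ≤ q' ∨ q' + k ≤ q) :
    ∑ u : Fin L → Fin b, (∏ j, p (u j)) *
        (((Q.filter (fun s => ∀ i : Fin k, ext hb u (s + (i : ℕ)) = w i)).card : ℝ)
          - (∏ i, p (w i)) * Q.card) ^ 2
      ≤ (∏ i, p (w i)) * Q.card := by
  classical
  set θ : ℝ := ∏ i, p (w i) with hθ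
  set μ : (Fin L → Fin b) → ℝ := fun u => ∏ j, p (u j) with hμ
  set I : (Fin L → Fin b) → ℕ → ℝ :=
    fun u q => if ∀ i : Fin k, ext hb u (q + (i : ℕ)) = w i then 1 else 0 with hI
  have hθ0 : 0 ≤ θ := Finset.prod_nonneg fun i _ => (hp _).le
  have hθ1 : θ ≤ 1 := by
    apply Finset.prod_le_one (fun i _ => (hp _).le)
    intro i _
    rw [← hsum]
    exact Finset.single_le_sum (fun j _ => (hp j).le) (mem_univ _)
  set N : ℝ := (Q.card : ℝ) with hN
  have hN0 : 0 ≤ N := Nat.cast_nonneg _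
  have hS : ∀ u, ((Q.filter (fun s => ∀ i : Fin k, ext hb u (s + (i : ℕ)) = w i)).card : ℝ)
      = ∑ q ∈ Q, I u q := by
    intro u
    rw [Finset.card_filter]
    push_cast
    apply Finset.sum_congr rfl
    intro q _
    simp only [hI]
  have hE1 : ∑ u : Fin L → Fin b, μ u = 1 := sum_mu_one p hsum L
  have hEmean : ∀ q ∈ Q, ∑ u : Fin L → Fin b, μ u * I u q = θ := by
    intro q hq
    have hco := cyl_one hb p hsum hk w (hQL q hq)
    rw [hθ, ← hco]
    apply Finset.sum_congr rfl
    intro u _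
    simp only [hI, hμ, mul_ite, mul_one, mul_zero]
  have hEpair : ∀ q ∈ Q, ∀ q' ∈ Q, q ≠ q' →
      ∑ u : Fin L → Fin b, μ u * (I u q * I u q') = θ * θ := by
    intro q hq q' hq' hne
    have hstep : ∀ s s', s + k ≤ s' → s' + k ≤ L →
        ∑ u : Fin L → Fin b, μ u * (I u s * I u s') = θ * θ := by
      intro s s' h1 h2
      have hct := cyl_two hb p hsum hk w h1 h2
      rw [hθ, ← hct]
      apply Finset.sum_congr rfl
      intro u _
      simp only [hI, hμ]
      by_cases hc1 : ∀ i : Fin k, ext hb u (s + (i : ℕ)) = w i <;>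
        by_cases hc2 : ∀ i : Fin k, ext hb u (s' + (i : ℕ)) = w i <;>
        simp [hc1, hc2]
    rcases hsep q hq q' hq' hne with h | h
    · exact hstep q q' h (hQL q' hq')
    · rw [← hstep q' q h (hQL q hq)]
      apply Finset.sum_congr rfl
      intro u _
      ring
  -- expectations of S and S²
  have hES : ∑ u : Fin L → Fin b, μ u * (∑ q ∈ Q, I u q) = θ * N := by
    calc ∑ u : Fin L → Fin b, μ u * (∑ q ∈ Q, I u q)
        = ∑ u : Fin L → Fin b, ∑ q ∈ Q, μ u * I u q := by
          apply Finset.sum_congr rfl; intro u _; rw [Finset.mul_sum]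
      _ = ∑ q ∈ Q, ∑ u : Fin L → Fin b, μ u * I u q := Finset.sum_comm
      _ = ∑ q ∈ Q, θ := Finset.sum_congr rfl fun q hq => hEmean q hq
      _ = θ * N := by rw [Finset.sum_const, nsmul_eq_mul, hN]; ring
  have hES2 : ∑ u : Fin L → Fin b, μ u * (∑ q ∈ Q, I u q) ^ 2
      = θ * N + θ * θ * (N * N - N) := by
    have hsq : ∀ u, (∑ q ∈ Q, I u q) ^ 2 = ∑ q ∈ Q, ∑ q' ∈ Q, I u q * I u q' := by
      intro u
      rw [sq, Finset.sum_mul_sum]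
    calc ∑ u : Fin L → Fin b, μ u * (∑ q ∈ Q, I u q) ^ 2
        = ∑ u : Fin L → Fin b, ∑ q ∈ Q, ∑ q' ∈ Q, μ u * (I u q * I u q') := by
          apply Finset.sum_congr rfl; intro u _
          rw [hsq, Finset.mul_sum]
          apply Finset.sum_congr rfl; intro q _
          rw [Finset.mul_sum]
      _ = ∑ q ∈ Q, ∑ u : Fin L → Fin b, ∑ q' ∈ Q, μ u * (I u q * I u q') := Finset.sum_comm
      _ = ∑ q ∈ Q, ∑ q' ∈ Q, ∑ u : Fin L → Fin b, μ u * (I u q * I u q') := by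
          apply Finset.sum_congr rfl; intro q _; exact Finset.sum_comm
      _ = ∑ q ∈ Q, ∑ q' ∈ Q, (if q = q' then θ else θ * θ) := by
          apply Finset.sum_congr rfl; intro q hq
          apply Finset.sum_congr rfl; intro q' hq'
          by_cases h : q = q'
          · subst h
            rw [if_pos rfl, ← hEmean q hq]
            apply Finset.sum_congr rfl
            intro u _
            have hII : I u q * I u q = I u q := by
              simp only [hI]; split <;> simp
            rw [hII]
          · rw [if_neg h]
            exact hEpair q hq q' hq' h
      _ = ∑ q ∈ Q, (θ * θ * N + (θ - θ * θ)) := by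
          apply Finset.sum_congr rfl; intro q hq
          have : ∀ q' ∈ Q, (if q = q' then θ else θ * θ)
              = θ * θ + (if q = q' then θ - θ * θ else 0) := by
            intro q' _; split <;> ring
          rw [Finset.sum_congr rfl this, Finset.sum_add_distrib, Finset.sum_const,
            Finset.sum_ite_eq Q q (fun _ => θ - θ * θ), if_pos hq, nsmul_eq_mul, hN]
          ring
      _ = θ * N + θ * θ * (N * N - N) := by
          rw [Finset.sum_const, nsmul_eq_mul, hN]; ring
  -- expand the square
  have hexp : ∀ u : Fin L → Fin b,
      μ u * ((∑ q ∈ Q, I u q) - θ * N) ^ 2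
        = μ u * (∑ q ∈ Q, I u q) ^ 2 - 2 * θ * N * (μ u * (∑ q ∈ Q, I u q))
          + θ * θ * N * N * μ u := by
    intro u; ring
  calc ∑ u : Fin L → Fin b, μ u *
        ((((Q.filter (fun s => ∀ i : Fin k, ext hb u (s + (i : ℕ)) = w i)).card : ℝ))
          - θ * Q.card) ^ 2
      = ∑ u : Fin L → Fin b, (μ u * (∑ q ∈ Q, I u q) ^ 2
          - 2 * θ * N * (μ u * (∑ q ∈ Q, I u q)) + θ * θ * N * N * μ u) := by
        apply Finset.sum_congr rfl; intro u _
        rw [hS u, ← hexp u]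
    _ = (∑ u : Fin L → Fin b, μ u * (∑ q ∈ Q, I u q) ^ 2)
          - 2 * θ * N * (∑ u : Fin L → Fin b, μ u * (∑ q ∈ Q, I u q))
          + θ * θ * N * N * (∑ u : Fin L → Fin b, μ u) := by
        rw [Finset.sum_add_distrib, Finset.sum_sub_distrib, ← Finset.mul_sum, ← Finset.mul_sum]
    _ = θ * N * (1 - θ) := by
        rw [hES, hES2, hE1]; ring
    _ ≤ θ * N := by nlinarith
/-- number of matches of `w` in the word `u` at positions in residue class `c` mod `k` -/
def Ffun (hb : 0 < b) {k L : ℕ} (w : Fin k → Fin b) (u : Fin L → Fin b) (c : ℕ) : ℕ :=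
  ((range (L + 1 - k)).filter
    (fun s => s % k = c ∧ ∀ i : Fin k, ext hb u (s + (i : ℕ)) = w i)).card

def Gfun (hb : 0 < b) {k L : ℕ} (w : Fin k → Fin b) (u : Fin L → Fin b) : ℕ :=
  (range k).sup (Ffun hb w u)

/-- count of positions `q < n` in residue class `s₀` where `w` matches `x` -/
def Acnt (x : ℕ → Fin b) {k : ℕ} (s₀ : ℕ) (w : Fin k → Fin b) (n : ℕ) : ℕ :=
  ((range n).filter (fun q => q % k = s₀ ∧ ∀ i : Fin k, x (q + (i : ℕ)) = w i)).card

lemma bridge (hb : 0 < b) {k L : ℕ} (hk : 0 < k) (hkL : k ≤ L) (x : ℕ → Fin b)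
    (w : Fin k → Fin b) {s₀ : ℕ} (hs₀ : s₀ < k) (n : ℕ) :
    (L + 1 - k) * Acnt x s₀ w n ≤
      (∑ u : Fin L → Fin b, occ x (n + (L - 1)) u * Gfun hb w u) + (L + 1 - k) * L := by
  classical
  -- Step C : group the sum over words into window sums
  have hrange : n + (L - 1) + 1 - L = n := by omega
  have stepC : ∑ u : Fin L → Fin b, occ x (n + (L - 1)) u * Gfun hb w u
      = ∑ a ∈ Finset.range n, Gfun hb w (fun i : Fin L => x (a + (i : ℕ))) := by
    have := window_sum x (L := L) (Gfun hb w) (Finset.range n) id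
    simp only [id] at this
    rw [← this]
    apply Finset.sum_congr rfl
    intro u _
    congr 1
    unfold occ
    rw [hrange]
  rw [stepC]
  -- the "good" positions
  set A' := (range n).filter
    (fun q => (q % k = s₀ ∧ ∀ i : Fin k, x (q + (i : ℕ)) = w i) ∧ L ≤ q + k) with hA'
  have hsplit : Acnt x s₀ w n ≤ A'.card + L := by
    unfold Acnt
    have hsub : (range n).filter
        (fun q => q % k = s₀ ∧ ∀ i : Fin k, x (q + (i : ℕ)) = w i)
        ⊆ A' ∪ range L := by
      intro q hq
      simp only [Finset.mem_filter, Finset.mem_range] at hq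
      rcases Nat.lt_or_ge (q + k) L with h | h
      · apply Finset.mem_union_right
        simp only [Finset.mem_range]
        omega
      · apply Finset.mem_union_left
        simp only [hA', Finset.mem_filter, Finset.mem_range]
        exact ⟨hq.1, hq.2, h⟩
    calc ((range n).filter _).card ≤ (A' ∪ range L).card := Finset.card_le_card hsub
      _ ≤ A'.card + (range L).card := Finset.card_union_le _ _
      _ = A'.card + L := by rw [Finset.card_range]
  -- main counting step
  have key : (L + 1 - k) * A'.card ≤
      ∑ a ∈ range n, Ffun hb w (fun i : Fin L => x (a + (i : ℕ))) ((s₀ + k - a % k) % k) := by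
    have hcard : ∑ a ∈ range n, Ffun hb w (fun i : Fin L => x (a + (i : ℕ)))
        ((s₀ + k - a % k) % k)
        = ((range n).sigma (fun a => (range (L + 1 - k)).filter
            (fun s => s % k = (s₀ + k - a % k) % k ∧
              ∀ i : Fin k, ext hb (fun i : Fin L => x (a + (i : ℕ))) (s + (i : ℕ)) = w i))).card := by
      rw [Finset.card_sigma]
      rfl
    rw [hcard]
    have hprod : (L + 1 - k) * A'.card = (A' ×ˢ range (L + 1 - k)).card := by
      rw [Finset.card_product, Finset.card_range, Nat.mul_comm]
    rw [hprod]
    apply Finset.card_le_card_of_injOn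
      (f := fun qt => ⟨qt.1 + k + qt.2 - L, L - k - qt.2⟩)
    · rintro ⟨q, t⟩ hqt
      simp only [Finset.mem_coe, Finset.mem_product, hA', Finset.mem_filter, Finset.mem_range] at hqt
      obtain ⟨⟨hqn, ⟨hqmod, hqmatch⟩, hqL⟩, ht⟩ := hqt
      set a := q + k + t - L with ha
      set d := L - k - t with hd
      have had : a + d = q := by omega
      have hdk : d + k ≤ L := by omega
      simp only [Finset.mem_coe, Finset.mem_sigma, Finset.mem_filter, Finset.mem_range]
      refine ⟨by omega, by omega, ?_, ?_⟩
      · -- d % k = (s₀ + k - a % k) % k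
        apply mod_compl hk (Nat.mod_lt a hk) (Nat.mod_lt d hk) hs₀
        have h5 : (d % k + a % k) % k = (d + a) % k := (Nat.add_mod d a k).symm
        rw [h5, show d + a = q by omega, hqmod]
      · intro i
        have hlt : d + (i : ℕ) < L := by have := i.isLt; omega
        rw [ext_lt hb _ hlt]
        show x (a + (d + (i : ℕ))) = w i
        have : a + (d + (i : ℕ)) = q + (i : ℕ) := by omega
        rw [this]
        exact hqmatch i
    · rintro ⟨q, t⟩ hqt ⟨q', t'⟩ hqt' heq
      simp only [Finset.coe_product, Set.mem_prod, Finset.mem_coe, hA',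
        Finset.mem_filter, Finset.mem_range] at hqt hqt'
      obtain ⟨⟨hqn, _, hqL⟩, ht⟩ := hqt
      obtain ⟨⟨hqn', _, hqL'⟩, ht'⟩ := hqt'
      have h1 : q + k + t - L = q' + k + t' - L ∧ L - k - t = L - k - t' := by
        have := Sigma.mk.inj_iff.1 heq
        exact ⟨this.1, eq_of_heq this.2⟩
      have : t = t' := by omega
      subst this
      have : q = q' := by omega
      simp [this]
  -- conclude
  have hFG : ∀ a ∈ range n,
      Ffun hb w (fun i : Fin L => x (a + (i : ℕ))) ((s₀ + k - a % k) % k)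
        ≤ Gfun hb w (fun i : Fin L => x (a + (i : ℕ))) := by
    intro a _
    apply Finset.le_sup
    simp only [Finset.mem_range]
    exact Nat.mod_lt _ hk
  calc (L + 1 - k) * Acnt x s₀ w n ≤ (L + 1 - k) * (A'.card + L) :=
        Nat.mul_le_mul_left _ hsplit
    _ = (L + 1 - k) * A'.card + (L + 1 - k) * L := by ring
    _ ≤ (∑ a ∈ range n, Ffun hb w (fun i : Fin L => x (a + (i : ℕ))) ((s₀ + k - a % k) % k))
          + (L + 1 - k) * L := by
        exact Nat.add_le_add_right key _
    _ ≤ (∑ a ∈ range n, Gfun hb w (fun i : Fin L => x (a + (i : ℕ)))) + (L + 1 - k) * L := by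
        exact Nat.add_le_add_right (Finset.sum_le_sum hFG) _

lemma EG_bound (hb : 0 < b) (p : Fin b → ℝ) (hp : ∀ i, 0 < p i) (hsum : ∑ i, p i = 1)
    {k L : ℕ} (hk : 0 < k) (hkL : k ≤ L) (w : Fin k → Fin b)
    {ε' : ℝ} (hε' : 0 < ε') :
    ∑ u : Fin L → Fin b, (∏ j, p (u j)) * (Gfun hb w u : ℝ)
      ≤ (∏ i, p (w i) + ε') * (((L + 1 - k) / k + 1 : ℕ) : ℝ)
        + k * (∏ i, p (w i)) / ε' ^ 2 := by
  classical
  set θ : ℝ := ∏ i, p (w i) with hθ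
  have hθ0 : 0 < θ := Finset.prod_pos fun i _ => hp _
  set M : ℕ := (L + 1 - k) / k + 1 with hM
  have hM1 : 1 ≤ M := by rw [hM]; exact Nat.le_add_left 1 _
  have hM0 : (0:ℝ) < M := by exact_mod_cast hM1
  have hμ0 : ∀ u : Fin L → Fin b, 0 ≤ ∏ j, p (u j) :=
    fun u => Finset.prod_nonneg fun j _ => (hp _).le
  set Qc : ℕ → Finset ℕ := fun c => (range (L + 1 - k)).filter (fun q => q % k = c) with hQc
  have hQcM : ∀ c, (Qc c).card ≤ M := by
    intro c
    rw [hQc, hM]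
    exact card_residue_le hk c (L + 1 - k)
  have hFQ : ∀ (u : Fin L → Fin b) (c : ℕ),
      Ffun hb w u c
        = ((Qc c).filter (fun s => ∀ i : Fin k, ext hb u (s + (i : ℕ)) = w i)).card := by
    intro u c
    rw [hQc]
    unfold Ffun
    rw [Finset.filter_filter]
  have hFle : ∀ (u : Fin L → Fin b) (c : ℕ), Ffun hb w u c ≤ M := by
    intro u c
    rw [hFQ]
    exact le_trans (Finset.card_filter_le _ _) (hQcM c)
  -- Chebyshev for each class
  have cheb : ∀ c : ℕ,
      ∑ u : Fin L → Fin b, (∏ j, p (u j)) *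
          (if (θ + ε') * M < (Ffun hb w u c : ℝ) then (1:ℝ) else 0)
        ≤ θ / (ε' ^ 2 * M) := by
    intro c
    have hQL' : ∀ q ∈ Qc c, q + k ≤ L := by
      intro q hq
      rw [hQc] at hq
      simp only [Finset.mem_filter, Finset.mem_range] at hq
      omega
    have hsep : ∀ q ∈ Qc c, ∀ q' ∈ Qc c, q ≠ q' → q + k ≤ q' ∨ q' + k ≤ q := by
      intro q hq q' hq' hne
      rw [hQc] at hq hq'
      simp only [Finset.mem_filter, Finset.mem_range] at hq hq'
      have hmod : q % k = q' % k := by rw [hq.2, hq'.2]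
      rcases Nat.lt_or_ge q q' with h | h
      · left
        have hdvd : k ∣ q' - q := (Nat.modEq_iff_dvd' h.le).1 hmod
        have := Nat.le_of_dvd (by omega) hdvd
        omega
      · rcases Nat.eq_or_lt_of_le h with h2 | h2
        · exact absurd h2.symm hne
        · right
          have hdvd : k ∣ q - q' := (Nat.modEq_iff_dvd' h2.le).1 hmod.symm
          have := Nat.le_of_dvd (by omega) hdvd
          omega
    have hvar := var_bound hb p hp hsum hk w (Qc c) hQL' hsep
    have hNc : ((Qc c).card : ℝ) ≤ M := by exact_mod_cast hQcM c
    have hNc0 : (0:ℝ) ≤ ((Qc c).card : ℝ) := Nat.cast_nonneg _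
    -- pointwise : badind ≤ (F - θ Nc)² / (ε' M)²
    have hpoint : ∀ u : Fin L → Fin b,
        (∏ j, p (u j)) * (if (θ + ε') * M < (Ffun hb w u c : ℝ) then (1:ℝ) else 0)
          ≤ (∏ j, p (u j)) *
            ((((Qc c).filter (fun s => ∀ i : Fin k, ext hb u (s + (i : ℕ)) = w i)).card : ℝ)
              - θ * (Qc c).card) ^ 2 / (ε' * M) ^ 2 := by
      intro u
      rw [mul_div_assoc]
      apply mul_le_mul_of_nonneg_left _ (hμ0 u)
      have hεM : (0:ℝ) < (ε' * M) ^ 2 := by positivity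
      split_ifs with hbad
      · rw [le_div_iff₀ hεM, one_mul]
        have h1 : (Ffun hb w u c : ℝ) - θ * (Qc c).card > ε' * M := by
          have : θ * ((Qc c).card : ℝ) ≤ θ * M := by
            apply mul_le_mul_of_nonneg_left hNc hθ0.le
          nlinarith
        have h2 : (0:ℝ) ≤ ε' * M := by positivity
        rw [hFQ u c] at h1
        nlinarith
      · positivity
    calc ∑ u : Fin L → Fin b, (∏ j, p (u j)) *
            (if (θ + ε') * M < (Ffun hb w u c : ℝ) then (1:ℝ) else 0)
        ≤ ∑ u : Fin L → Fin b, (∏ j, p (u j)) *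
            ((((Qc c).filter (fun s => ∀ i : Fin k, ext hb u (s + (i : ℕ)) = w i)).card : ℝ)
              - θ * (Qc c).card) ^ 2 / (ε' * M) ^ 2 :=
          Finset.sum_le_sum fun u _ => hpoint u
      _ = (∑ u : Fin L → Fin b, (∏ j, p (u j)) *
            ((((Qc c).filter (fun s => ∀ i : Fin k, ext hb u (s + (i : ℕ)) = w i)).card : ℝ)
              - θ * (Qc c).card) ^ 2) / (ε' * M) ^ 2 := by
          rw [Finset.sum_div]
      _ ≤ θ * (Qc c).card / (ε' * M) ^ 2 := by
          apply div_le_div_of_nonneg_right hvar (by positivity)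
      _ ≤ θ / (ε' ^ 2 * M) := by
          rw [div_le_div_iff₀ (by positivity) (by positivity)]
          have : θ * ((Qc c).card : ℝ) * (ε' ^ 2 * M) ≤ θ * M * (ε' ^ 2 * M) := by
            apply mul_le_mul_of_nonneg_right _ (by positivity)
            exact mul_le_mul_of_nonneg_left hNc hθ0.le
          nlinarith
  -- pointwise bound for G
  have hGpt : ∀ u : Fin L → Fin b,
      (Gfun hb w u : ℝ) ≤ (θ + ε') * M
        + M * ∑ c ∈ range k, (if (θ + ε') * M < (Ffun hb w u c : ℝ) then (1:ℝ) else 0) := by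
    intro u
    obtain ⟨c, hc, hGc⟩ := Finset.exists_mem_eq_sup (range k)
      (Finset.nonempty_range_iff.2 (by omega)) (Ffun hb w u)
    have hsum0 : (0:ℝ) ≤ ∑ c ∈ range k,
        (if (θ + ε') * M < (Ffun hb w u c : ℝ) then (1:ℝ) else 0) := by
      apply Finset.sum_nonneg
      intro c' _
      split <;> norm_num
    rw [show Gfun hb w u = Ffun hb w u c from hGc]
    by_cases hbad : (θ + ε') * M < (Ffun hb w u c : ℝ)
    · have h1 : (1:ℝ) ≤ ∑ c' ∈ range k,
          (if (θ + ε') * M < (Ffun hb w u c' : ℝ) then (1:ℝ) else 0) := by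
        have hle := Finset.single_le_sum (f := fun c' =>
          (if (θ + ε') * M < (Ffun hb w u c' : ℝ) then (1:ℝ) else 0))
          (fun c' _ => by split <;> norm_num) hc
        rw [if_pos hbad] at hle
        exact hle
      have h2 : (Ffun hb w u c : ℝ) ≤ M := by exact_mod_cast hFle u c
      nlinarith
    · push_neg at hbad
      nlinarith
  calc ∑ u : Fin L → Fin b, (∏ j, p (u j)) * (Gfun hb w u : ℝ)
      ≤ ∑ u : Fin L → Fin b, (∏ j, p (u j)) * ((θ + ε') * M
          + M * ∑ c ∈ range k, (if (θ + ε') * M < (Ffun hb w u c : ℝ) then (1:ℝ) else 0)) :=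
        Finset.sum_le_sum fun u _ => mul_le_mul_of_nonneg_left (hGpt u) (hμ0 u)
    _ = (θ + ε') * M * (∑ u : Fin L → Fin b, ∏ j, p (u j))
        + M * ∑ c ∈ range k, ∑ u : Fin L → Fin b, (∏ j, p (u j)) *
            (if (θ + ε') * M < (Ffun hb w u c : ℝ) then (1:ℝ) else 0) := by
        simp_rw [mul_add]
        rw [Finset.sum_add_distrib]
        congr 1
        · rw [← Finset.sum_mul, mul_comm]
        · have hstep : ∀ u : Fin L → Fin b,
              (∏ j, p (u j)) * ((M:ℝ) * ∑ c ∈ range k,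
                (if (θ + ε') * M < (Ffun hb w u c : ℝ) then (1:ℝ) else 0))
              = (M:ℝ) * ∑ c ∈ range k, (∏ j, p (u j)) *
                (if (θ + ε') * M < (Ffun hb w u c : ℝ) then (1:ℝ) else 0) := by
            intro u
            rw [show (∏ j, p (u j)) * ((M:ℝ) * ∑ c ∈ range k,
                (if (θ + ε') * M < (Ffun hb w u c : ℝ) then (1:ℝ) else 0))
              = (M:ℝ) * ((∏ j, p (u j)) * ∑ c ∈ range k,
                (if (θ + ε') * M < (Ffun hb w u c : ℝ) then (1:ℝ) else 0)) from by ring]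
            rw [Finset.mul_sum]
          rw [Finset.sum_congr rfl fun u _ => hstep u, ← Finset.mul_sum]
          congr 1
          exact Finset.sum_comm
    _ ≤ (θ + ε') * M * 1 + M * ∑ c ∈ range k, θ / (ε' ^ 2 * M) := by
        have h1 : ∑ u : Fin L → Fin b, ∏ j, p (u j) = 1 := sum_mu_one p hsum L
        rw [h1]
        apply add_le_add le_rfl
        apply mul_le_mul_of_nonneg_left _ hM0.le
        exact Finset.sum_le_sum fun c _ => cheb c
    _ = (θ + ε') * M + k * θ / ε' ^ 2 := by
        rw [Finset.sum_const, Finset.card_range, mul_one, nsmul_eq_mul]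
        have : (M:ℝ) ≠ 0 := ne_of_gt hM0
        field_simp
set_option maxHeartbeats 1600000 in
lemma pillai_upper (hb : 0 < b) (p : Fin b → ℝ) (hp : ∀ i, 0 < p i)
    (hsum : ∑ i, p i = 1) (x : ℕ → Fin b)
    (hyp3 : ∀ r : ℕ, 1 ≤ r → ∀ v : Fin r → Fin b,
      Tendsto (fun n : ℕ => (occ x n v : ℝ) / n) atTop (nhds (∏ i, p (v i))))
    {k : ℕ} (hk : 0 < k) {s₀ : ℕ} (hs₀ : s₀ < k) (w : Fin k → Fin b)
    {ε : ℝ} (hε : 0 < ε) :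
    ∀ᶠ n in atTop, (Acnt x s₀ w n : ℝ) / n ≤ (∏ i, p (w i)) / k + ε := by
  classical
  set θ := ∏ i, p (w i) with hθ
  have hθ0 : 0 < θ := Finset.prod_pos fun i _ => hp _
  have hθ1 : θ ≤ 1 := theta_le_one p hp hsum w
  have hk' : (0:ℝ) < k := by exact_mod_cast hk
  set ε' : ℝ := ε * k / 4 with hε'def
  have hε'0 : 0 < ε' := by positivity
  set C : ℝ := (θ + ε') + k * θ / ε' ^ 2 + 1 with hC
  have hC0 : 0 < C := by positivity
  obtain ⟨T, hT⟩ := exists_nat_gt (4 * C / ε)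
  have hT0 : (0:ℝ) ≤ T := Nat.cast_nonneg T
  have hT1 : (0:ℝ) < (T:ℝ) + 1 := by linarith
  set L := k + T with hL
  have hkL : k ≤ L := by omega
  have hL1 : 1 ≤ L := by omega
  have hN : L + 1 - k = T + 1 := by omega
  clear_value θ ε' C L
  have hsum_t : Tendsto (fun n : ℕ => ∑ u : Fin L → Fin b,
      ((occ x (n + (L - 1)) u : ℝ) / n) * (Gfun hb w u : ℝ)) atTop
      (nhds (∑ u : Fin L → Fin b, (∏ j, p (u j)) * (Gfun hb w u : ℝ))) := by
    apply tendsto_finset_sum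
    intro u _
    exact (ratio_shift (hyp3 L hL1 u) (L - 1)).mul_const _
  have hEG := EG_bound hb p hp hsum hk hkL w hε'0
  rw [← hθ] at hEG
  set D : ℝ := (θ + ε') * (((L + 1 - k) / k + 1 : ℕ) : ℝ) + k * θ / ε' ^ 2 with hD
  clear_value D
  have hev1 : ∀ᶠ n in atTop, ∑ u : Fin L → Fin b,
      ((occ x (n + (L - 1)) u : ℝ) / n) * (Gfun hb w u : ℝ) ≤ D + 1 :=
    hsum_t.eventually (eventually_le_nhds (by linarith))
  have hev2 : ∀ᶠ n : ℕ in atTop, (L:ℝ)/(n:ℝ) ≤ ε/4 :=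
    (tendsto_const_div_atTop_nhds_zero_nat (L:ℝ)).eventually (eventually_le_nhds (by linarith))
  filter_upwards [hev1, hev2, eventually_ge_atTop 1] with n h1 h2 hn1
  have hn0 : (0:ℝ) < n := by exact_mod_cast hn1
  have hbr := bridge hb hk hkL x w hs₀ n
  rw [hN] at hbr
  set S : ℝ := ∑ u : Fin L → Fin b, (occ x (n + (L - 1)) u : ℝ) * (Gfun hb w u : ℝ) with hSdef
  clear_value S
  have hS0 : 0 ≤ S := by
    rw [hSdef]
    exact Finset.sum_nonneg fun u _ => by positivity
  have hbrR : ((T:ℝ) + 1) * (Acnt x s₀ w n : ℝ) ≤ S + ((T:ℝ) + 1) * L := by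
    rw [hSdef]
    exact_mod_cast hbr
  have hSn : S / n = ∑ u : Fin L → Fin b,
      ((occ x (n + (L - 1)) u : ℝ) / n) * (Gfun hb w u : ℝ) := by
    rw [hSdef, Finset.sum_div]
    exact Finset.sum_congr rfl fun u _ => by ring
  -- division chain
  have e1 : (Acnt x s₀ w n : ℝ) / n
      = (((T:ℝ) + 1) * (Acnt x s₀ w n : ℝ)) / ((((T:ℝ) + 1)) * n) :=
    (mul_div_mul_left _ _ (ne_of_gt hT1)).symm
  have e2 : (((T:ℝ) + 1) * (Acnt x s₀ w n : ℝ)) / ((((T:ℝ) + 1)) * n)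
      ≤ (S + ((T:ℝ) + 1) * L) / ((((T:ℝ) + 1)) * n) :=
    div_le_div_of_nonneg_right hbrR (by positivity)
  have e3 : (S + ((T:ℝ) + 1) * L) / ((((T:ℝ) + 1)) * n)
      = (S / n) / ((T:ℝ) + 1) + (L:ℝ) / n := by
    rw [add_div, mul_div_mul_left _ _ (ne_of_gt hT1), div_div, mul_comm ((T:ℝ)+1) (n:ℝ),
      ← div_div]
  have e5 : (S / n) / ((T:ℝ) + 1) ≤ (D + 1) / ((T:ℝ) + 1) := by
    apply div_le_div_of_nonneg_right _ hT1.le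
    rw [hSn]
    exact h1
  have e6 : (D + 1) / ((T:ℝ) + 1) ≤ θ / k + ε / 2 := by
    have hMle : (((L + 1 - k) / k + 1 : ℕ) : ℝ) ≤ ((T:ℝ) + 1) / k + 1 := by
      rw [hN]
      push_cast
      have hcd : ((((T + 1) : ℕ) / k : ℕ) : ℝ) ≤ ((T + 1 : ℕ) : ℝ) / (k : ℝ) := Nat.cast_div_le
      push_cast at hcd
      linarith
    have hD1 : D + 1 ≤ (θ + ε') * (((T:ℝ) + 1) / k) + C := by
      rw [hD, hC]
      have hpos : (0:ℝ) < θ + ε' := by linarith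
      nlinarith [mul_le_mul_of_nonneg_left hMle hpos.le]
    have hCT : C / ((T:ℝ) + 1) ≤ ε / 4 := by
      rw [div_le_iff₀ hT1]
      rw [div_lt_iff₀ hε] at hT
      nlinarith
    have hsplit : (D + 1) / ((T:ℝ) + 1)
        ≤ ((θ + ε') * (((T:ℝ) + 1) / k)) / ((T:ℝ) + 1) + C / ((T:ℝ) + 1) := by
      rw [← add_div]
      exact div_le_div_of_nonneg_right hD1 hT1.le
    have hcancel : ((θ + ε') * (((T:ℝ) + 1) / k)) / ((T:ℝ) + 1) = (θ + ε') / k := by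
      field_simp
    have hε'k : ε' / k = ε / 4 := by
      rw [hε'def]
      field_simp
    have hfin : (θ + ε') / k = θ / k + ε / 4 := by
      rw [add_div, hε'k]
    rw [hcancel, hfin] at hsplit
    linarith
  calc (Acnt x s₀ w n : ℝ) / n ≤ (S / n) / ((T:ℝ) + 1) + (L:ℝ) / n := by
        rw [e1]; rw [e3] at e2; exact e2
    _ ≤ (D + 1) / ((T:ℝ) + 1) + ε / 4 := add_le_add e5 h2
    _ ≤ θ / k + ε / 2 + ε / 4 := by linarith
    _ ≤ θ / k + ε := by linarith

lemma Acnt_sum (x : ℕ → Fin b) {k : ℕ} (s₀ : ℕ) (n : ℕ) :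
    ∑ w : Fin k → Fin b, Acnt x s₀ w n
      = ((range n).filter (fun q => q % k = s₀)).card := by
  classical
  unfold Acnt
  simp_rw [Finset.card_filter]
  rw [Finset.sum_comm]
  apply Finset.sum_congr rfl
  intro q _
  by_cases hq : q % k = s₀
  · simp only [hq, true_and]
    have hiff : ∀ w : Fin k → Fin b,
        (∀ i : Fin k, x (q + (i : ℕ)) = w i) ↔ ((fun i : Fin k => x (q + (i : ℕ))) = w) :=
      fun w => (funext_iff).symm
    rw [Finset.sum_congr rfl fun w _ => if_congr (hiff w) rfl rfl]
    rw [Finset.sum_ite_eq (Finset.univ) (fun i : Fin k => x (q + (i : ℕ))) (fun _ => 1)]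
    simp
  · simp [hq]

lemma pillai (hb : 0 < b) (p : Fin b → ℝ) (hp : ∀ i, 0 < p i)
    (hsum : ∑ i, p i = 1) (x : ℕ → Fin b)
    (hyp3 : ∀ r : ℕ, 1 ≤ r → ∀ v : Fin r → Fin b,
      Tendsto (fun n : ℕ => (occ x n v : ℝ) / n) atTop (nhds (∏ i, p (v i))))
    {k : ℕ} (hk : 0 < k) {s₀ : ℕ} (hs₀ : s₀ < k) (w : Fin k → Fin b) :
    Tendsto (fun n : ℕ => (Acnt x s₀ w n : ℝ) / n) atTop
      (nhds ((∏ i, p (w i)) / k)) := by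
  classical
  set θ := ∏ i, p (w i) with hθ
  apply tendsto_of_abs_le
  intro ε hε
  have hk' : (0:ℝ) < k := by exact_mod_cast hk
  set B : ℕ := (Finset.univ : Finset (Fin k → Fin b)).card with hB
  set δ : ℝ := ε / (B + 1) with hδ
  have hB0 : (0:ℝ) ≤ B := Nat.cast_nonneg _
  have hδ0 : 0 < δ := by positivity
  have hδε : ((B:ℝ) + 1) * δ = ε := by
    rw [hδ]
    field_simp
  have hδle : δ ≤ ε := by nlinarith
  have hups : ∀ w' ∈ (Finset.univ : Finset (Fin k → Fin b)),
      ∀ᶠ n in atTop, (Acnt x s₀ w' n : ℝ) / n ≤ (∏ i, p (w' i)) / k + δ :=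
    fun w' _ => pillai_upper hb p hp hsum x hyp3 hk hs₀ w' hδ0
  have hall : ∀ᶠ n in atTop, ∀ w' ∈ (Finset.univ : Finset (Fin k → Fin b)),
      (Acnt x s₀ w' n : ℝ) / n ≤ (∏ i, p (w' i)) / k + δ :=
    (eventually_all_finset _).2 hups
  have hcc : ∀ᶠ n in atTop,
      1 / (k:ℝ) - δ ≤ (((range n).filter (fun q => q % k = s₀)).card : ℝ) / n :=
    (tendsto_Ccnt hk hs₀).eventually (eventually_ge_nhds (by linarith))
  filter_upwards [hall, hcc] with n hall' hcc'
  -- upper bound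
  have hup : (Acnt x s₀ w n : ℝ) / n ≤ θ / k + δ := hall' w (mem_univ w)
  -- identity
  have hid : (Acnt x s₀ w n : ℝ)
      = (((range n).filter (fun q => q % k = s₀)).card : ℝ)
        - ∑ w' ∈ (Finset.univ : Finset (Fin k → Fin b)).erase w, (Acnt x s₀ w' n : ℝ) := by
    have h0 : Acnt x s₀ w n + ∑ w' ∈ (Finset.univ : Finset (Fin k → Fin b)).erase w,
        Acnt x s₀ w' n = ((range n).filter (fun q => q % k = s₀)).card := by
      have haux := Finset.add_sum_erase (Finset.univ)
        (fun w2 : Fin k → Fin b => Acnt x s₀ w2 n) (mem_univ w)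
      rw [Acnt_sum x s₀ n] at haux
      exact haux
    have := congrArg (fun m : ℕ => (m : ℝ)) h0
    push_cast at this
    linarith
  -- sum of thetas over the erased set
  have hth : ∑ w' ∈ (Finset.univ : Finset (Fin k → Fin b)).erase w, ∏ i, p (w' i)
      = 1 - θ := by
    have h0 := Finset.add_sum_erase (Finset.univ : Finset (Fin k → Fin b))
      (fun w' => ∏ i, p (w' i)) (mem_univ w)
    rw [sum_mu_one p hsum k] at h0
    simp only [hθ]
    linarith
  have hcard : ((Finset.univ : Finset (Fin k → Fin b)).erase w).card ≤ B := by
    rw [hB]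
    exact Finset.card_le_card (Finset.erase_subset _ _)
  have hsumub : ∑ w' ∈ (Finset.univ : Finset (Fin k → Fin b)).erase w,
      (Acnt x s₀ w' n : ℝ) / n ≤ (1 - θ) / k + B * δ := by
    calc ∑ w' ∈ (Finset.univ : Finset (Fin k → Fin b)).erase w, (Acnt x s₀ w' n : ℝ) / n
        ≤ ∑ w' ∈ (Finset.univ : Finset (Fin k → Fin b)).erase w,
            ((∏ i, p (w' i)) / k + δ) :=
          Finset.sum_le_sum fun w' hw' => hall' w' (mem_univ w')
      _ = (∑ w' ∈ (Finset.univ : Finset (Fin k → Fin b)).erase w, ∏ i, p (w' i)) / k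
          + ((Finset.univ : Finset (Fin k → Fin b)).erase w).card * δ := by
          rw [Finset.sum_add_distrib, Finset.sum_const, ← Finset.sum_div, nsmul_eq_mul]
      _ ≤ (1 - θ) / k + B * δ := by
          rw [hth]
          have : (((Finset.univ : Finset (Fin k → Fin b)).erase w).card : ℝ) ≤ B := by
            exact_mod_cast hcard
          nlinarith
  have hlow : θ / k - ε ≤ (Acnt x s₀ w n : ℝ) / n := by
    have hdiv : (Acnt x s₀ w n : ℝ) / n
        = (((range n).filter (fun q => q % k = s₀)).card : ℝ) / n
          - ∑ w' ∈ (Finset.univ : Finset (Fin k → Fin b)).erase w,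
              (Acnt x s₀ w' n : ℝ) / n := by
      rw [hid, sub_div, Finset.sum_div]
    rw [hdiv]
    have h1 : 1 / (k:ℝ) - δ - ((1 - θ) / k + B * δ)
        ≤ (((range n).filter (fun q => q % k = s₀)).card : ℝ) / n
          - ∑ w' ∈ (Finset.univ : Finset (Fin k → Fin b)).erase w,
              (Acnt x s₀ w' n : ℝ) / n := by
      apply sub_le_sub hcc' hsumub
    have h2 : 1 / (k:ℝ) - δ - ((1 - θ) / k + B * δ) = θ / k - ((B:ℝ) + 1) * δ := by
      field_simp
      ring
    rw [h2, hδε] at h1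
    exact h1
  rw [abs_le]
  constructor
  · linarith
  · linarith [hup, hδle]
lemma divmod_helper {K : ℕ} (hK : 0 < K) {s : ℕ} (hs : s < K) (j : ℕ) :
    (j * K + s) / K = j ∧ (j * K + s) % K = s := by
  constructor
  · rw [add_comm, Nat.add_mul_div_right _ _ hK, Nat.div_eq_of_lt hs, zero_add]
  · rw [add_comm, Nat.add_mul_mod_self_right, Nat.mod_eq_of_lt hs]

set_option maxHeartbeats 1600000 in
/-- direction (3) → (1) -/
lemma three_imp_one (hb : 0 < b) (p : Fin b → ℝ) (hp : ∀ i, 0 < p i)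
    (hsum : ∑ i, p i = 1) (x : ℕ → Fin b)
    (hyp3 : ∀ r : ℕ, 1 ≤ r → ∀ v : Fin r → Fin b,
      Tendsto (fun n : ℕ => (occ x n v : ℝ) / n) atTop (nhds (∏ i, p (v i)))) :
    ∀ k : ℕ, 1 ≤ k → ∀ m : ℕ, ∀ w : Fin k → Fin b,
      Tendsto
        (fun N : ℕ =>
          (((Finset.range N).filter
            (fun j => ∀ i : Fin k, x (m + j * k + i) = w i)).card : ℝ) / N)
        atTop (nhds (∏ i, p (w i))) := by
  intro k hk m w
  have hk0 : 0 < k := hk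
  have hpil := pillai hb p hp hsum x hyp3 hk0 (Nat.mod_lt m hk0) w
  -- counting identity
  have key : ∀ N : ℕ, Acnt x (m % k) w (m + N * k)
      = Acnt x (m % k) w m
        + ((Finset.range N).filter
            (fun j => ∀ i : Fin k, x (m + j * k + (i : ℕ)) = w i)).card := by
    intro N
    unfold Acnt
    have hsplit : range (m + N * k) = range m ∪ Finset.Ico m (m + N * k) := by
      rw [Finset.range_eq_Ico, Finset.range_eq_Ico]
      exact (Finset.Ico_union_Ico_eq_Ico (Nat.zero_le m) (Nat.le_add_right m _)).symm
    rw [hsplit, Finset.filter_union, Finset.card_union_of_disjoint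
      (Finset.disjoint_filter_filter (by
        rw [Finset.range_eq_Ico]
        exact Finset.Ico_disjoint_Ico_consecutive 0 m (m + N * k)))]
    congr 1
    apply Finset.card_bij' (fun q _ => (q - m) / k) (fun j _ => m + j * k)
    · intro q hq
      simp only [Finset.mem_filter, Finset.mem_Ico] at hq
      obtain ⟨⟨hmq, hqn⟩, hqmod, hqmatch⟩ := hq
      have hdvd : k ∣ q - m := by
        have : m % k = q % k := by rw [hqmod]
        exact (Nat.modEq_iff_dvd' hmq).1 this
      obtain ⟨j, hj⟩ := hdvd
      have hj2 : q - m = j * k := hj.trans (Nat.mul_comm k j)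
      have hqm : q = m + j * k := by omega
      have hdivj : (q - m) / k = j := by
        rw [hj, Nat.mul_div_cancel_left _ hk0]
      simp only [Finset.mem_filter, Finset.mem_range]
      constructor
      · rw [hdivj]
        by_contra hcon
        push_neg at hcon
        have : N * k ≤ j * k := Nat.mul_le_mul_right k hcon
        omega
      · intro i
        rw [hdivj, show m + j * k + (i : ℕ) = q + (i : ℕ) by omega]
        exact hqmatch i
    · intro j hj
      simp only [Finset.mem_filter, Finset.mem_range] at hj
      obtain ⟨hjN, hmatch⟩ := hj
      simp only [Finset.mem_filter, Finset.mem_Ico]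
      have hjk : j * k + k ≤ N * k := by
        have h9 : (j + 1) * k ≤ N * k := Nat.mul_le_mul_right k hjN
        rw [Nat.add_mul, Nat.one_mul] at h9
        exact h9
      refine ⟨⟨by omega, by omega⟩, ?_, ?_⟩
      · rw [Nat.add_mul_mod_self_right]
      · intro i
        rw [show m + j * k + (i : ℕ) = m + j * k + (i : ℕ) by rfl]
        exact hmatch i
    · intro q hq
      simp only [Finset.mem_filter, Finset.mem_Ico] at hq
      obtain ⟨⟨hmq, hqn⟩, hqmod, _⟩ := hq
      have hdvd : k ∣ q - m := by
        have : m % k = q % k := by rw [hqmod]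
        exact (Nat.modEq_iff_dvd' hmq).1 this
      obtain ⟨j, hj⟩ := hdvd
      have hj2 : q - m = j * k := hj.trans (Nat.mul_comm k j)
      have hdivj : (q - m) / k = j := by
        rw [hj, Nat.mul_div_cancel_left _ hk0]
      rw [hdivj]
      omega
    · intro j hj
      rw [Nat.add_sub_cancel_left, Nat.mul_div_cancel _ hk0]
  -- limits
  have h1 : Tendsto (fun N : ℕ => (Acnt x (m % k) w (m + N * k) : ℝ) / N) atTop
      (nhds ((∏ i, p (w i)) / k * k)) := ratio_affine hpil k m hk0
  have hkne : ((k:ℝ)) ≠ 0 := by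
    have : (0:ℝ) < k := by exact_mod_cast hk0
    linarith
  rw [div_mul_cancel₀ _ hkne] at h1
  have h2 := h1.sub (tendsto_const_div_atTop_nhds_zero_nat ((Acnt x (m % k) w m : ℕ) : ℝ))
  rw [sub_zero] at h2
  apply h2.congr
  intro N
  rw [key N]
  push_cast
  ring

set_option maxHeartbeats 1600000 in
/-- direction (2) → (3) -/
lemma two_imp_three (hb : 0 < b) (p : Fin b → ℝ) (hp : ∀ i, 0 < p i)
    (hsum : ∑ i, p i = 1) (x : ℕ → Fin b)
    (hyp2 : ∀ k : ℕ, 1 ≤ k → ∀ w : Fin k → Fin b,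
      Tendsto
        (fun ℓ : ℕ =>
          (((Finset.range ℓ).filter
            (fun j => ∀ i : Fin k, x (j * k + i) = w i)).card : ℝ) / ℓ)
        atTop (nhds (∏ i, p (w i)))) :
    ∀ r : ℕ, 1 ≤ r → ∀ v : Fin r → Fin b,
      Tendsto (fun n : ℕ => (occ x n v : ℝ) / n) atTop (nhds (∏ i, p (v i))) := by
  intro r hr v
  have hr0 : 0 < r := hr
  set θv := ∏ i, p (v i) with hθv
  have hθ0 : 0 < θv := Finset.prod_pos fun i _ => hp _
  have hθ1 : θv ≤ 1 := theta_le_one p hp hsum v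
  apply tendsto_of_abs_le
  intro ε hε
  obtain ⟨K₀, hK₀⟩ := exists_nat_gt ((4 * r : ℝ) / ε)
  set K := K₀ + r with hKdef
  have hrK : r ≤ K := by omega
  have hK0 : 0 < K := by
    rcases Nat.eq_zero_or_pos K₀ with h | h
    · have : (0:ℝ) < (4 * r : ℝ) / ε := by positivity
      rw [h] at hK₀
      simp at hK₀
      omega
    · omega
  have hK1 : 1 ≤ K := hK0
  have hK' : (0:ℝ) < K := by exact_mod_cast hK0
  have hrK4 : (r : ℝ) / K ≤ ε / 4 := by
    rw [div_le_iff₀ hK']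
    have : (4 * r : ℝ) / ε < K := by
      have : (K₀ : ℝ) ≤ K := by exact_mod_cast Nat.le_add_right K₀ r
      linarith
    rw [div_lt_iff₀ hε] at this
    nlinarith
  -- nat bridges
  have blow : ∀ n : ℕ,
      (∑ u : Fin K → Fin b,
        ((range (n / K)).filter
          (fun j => ∀ i : Fin K, x (j * K + (i : ℕ)) = u i)).card * gct hb v u)
      ≤ occ x n v := by
    intro n
    rw [window_sum x (L := K) (gct hb v) (range (n / K)) (fun j => j * K)]
    have hsig : ∑ j ∈ range (n / K), gct hb v (fun i : Fin K => x (j * K + (i : ℕ)))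
        = ((range (n / K)).sigma (fun j => (range (K + 1 - r)).filter
            (fun s => ∀ i : Fin r,
              ext hb (fun i2 : Fin K => x (j * K + (i2 : ℕ))) (s + (i : ℕ)) = v i))).card := by
      rw [Finset.card_sigma]
      rfl
    rw [hsig]
    unfold occ
    apply Finset.card_le_card_of_injOn (f := fun js => js.1 * K + js.2)
    · rintro ⟨j, s⟩ hjs
      simp only [Finset.mem_coe, Finset.mem_sigma, Finset.mem_filter, Finset.mem_range] at hjs
      obtain ⟨hj, hs, hmatch⟩ := hjs
      simp only [Finset.mem_coe, Finset.mem_filter, Finset.mem_range]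
      have hjK : (j + 1) * K ≤ (n / K) * K := Nat.mul_le_mul_right K hj
      have hK2 : (n / K) * K ≤ n := Nat.div_mul_le_self n K
      have hjK' : j * K + K ≤ n := by
        rw [add_mul, one_mul] at hjK
        omega
      constructor
      · omega
      · intro i
        have hlt : s + (i : ℕ) < K := by have := i.isLt; omega
        have := hmatch i
        rw [ext_lt hb _ hlt] at this
        show x (j * K + s + (i : ℕ)) = v i
        rw [show j * K + s + (i : ℕ) = j * K + (s + (i : ℕ)) by omega]
        exact this
    · rintro ⟨j, s⟩ hjs ⟨j', s'⟩ hjs' heq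
      simp only [Finset.coe_sigma, Set.mem_sigma_iff, Finset.mem_coe, Finset.mem_filter,
        Finset.mem_range] at hjs hjs'
      have hs : s < K := by omega
      have hs' : s' < K := by omega
      simp only at heq
      have hj : j = j' := by
        have e1 := (divmod_helper hK0 hs j).1
        have e2 := (divmod_helper hK0 hs' j').1
        rw [← e1, ← e2, heq]
      subst hj
      have hss : s = s' := by
        have e1 := (divmod_helper hK0 hs j).2
        have e2 := (divmod_helper hK0 hs' j).2
        rw [← e1, ← e2, heq]
      subst hss
      rfl
  have bup : ∀ n : ℕ, occ x n v ≤
      (∑ u : Fin K → Fin b,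
        ((range (n / K + 1)).filter
          (fun j => ∀ i : Fin K, x (j * K + (i : ℕ)) = u i)).card * gct hb v u)
      + (n / K + 1) * (r - 1) := by
    intro n
    rw [window_sum x (L := K) (gct hb v) (range (n / K + 1)) (fun j => j * K)]
    have hsig : ∑ j ∈ range (n / K + 1), gct hb v (fun i : Fin K => x (j * K + (i : ℕ)))
        = ((range (n / K + 1)).sigma (fun j => (range (K + 1 - r)).filter
            (fun s => ∀ i : Fin r,
              ext hb (fun i2 : Fin K => x (j * K + (i2 : ℕ))) (s + (i : ℕ)) = v i))).card := by
      rw [Finset.card_sigma]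
      rfl
    rw [hsig]
    unfold occ
    rw [← Finset.card_filter_add_card_filter_not
      (p := fun q => q % K + r ≤ K) (s := (range (n + 1 - r)).filter
        (fun m => ∀ i : Fin r, x (m + (i : ℕ)) = v i))]
    apply Nat.add_le_add
    · -- within-window occurrences
      apply Finset.card_le_card_of_injOn (f := fun q => ⟨q / K, q % K⟩)
      · intro q hq
        simp only [Finset.mem_coe, Finset.mem_filter, Finset.mem_range] at hq
        obtain ⟨⟨hqn, hmatch⟩, hcross⟩ := hq
        have hdm : q / K * K + q % K = q := by
          rw [Nat.mul_comm]
          exact Nat.div_add_mod q K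
        have hqmK : q % K < K := Nat.mod_lt q hK0
        simp only [Finset.mem_coe, Finset.mem_sigma, Finset.mem_filter, Finset.mem_range]
        refine ⟨by
          have := Nat.div_le_div_right (c := K) (show q ≤ n by omega)
          omega, by omega, ?_⟩
        intro i
        have hlt : q % K + (i : ℕ) < K := by have := i.isLt; omega
        rw [ext_lt hb _ hlt]
        show x (q / K * K + (q % K + (i : ℕ))) = v i
        rw [show q / K * K + (q % K + (i : ℕ)) = q + (i : ℕ) by omega]
        exact hmatch i
      · intro q hq q' hq' heq
        simp only [Finset.mem_coe, Finset.mem_filter, Finset.mem_range] at hq hq'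
        have e1 := Nat.div_add_mod q K
        have e2 := Nat.div_add_mod q' K
        have h1 : q / K = q' / K := congrArg Sigma.fst heq
        have h2 : q % K = q' % K := by
          have := (Sigma.mk.inj_iff.1 heq).2
          exact eq_of_heq this
        rw [h1, h2] at e1
        omega
    · -- boundary-crossing occurrences
      have hcard : ((range (n / K + 1)) ×ˢ (range (r - 1))).card = (n / K + 1) * (r - 1) := by
        rw [Finset.card_product, Finset.card_range, Finset.card_range]
      rw [← hcard]
      apply Finset.card_le_card_of_injOn (f := fun q => (q / K, q % K + r - K - 1))
      · intro q hq
        simp only [Finset.mem_coe, Finset.mem_filter, Finset.mem_range] at hq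
        obtain ⟨⟨hqn, _⟩, hcross⟩ := hq
        push_neg at hcross
        have hmod : q % K < K := Nat.mod_lt q hK0
        simp only [Finset.mem_coe, Finset.mem_product, Finset.mem_range]
        constructor
        · have := Nat.div_le_div_right (c := K) (show q ≤ n by omega)
          omega
        · omega
      · intro q hq q' hq' heq
        simp only [Finset.mem_coe, Finset.mem_filter, Finset.mem_range] at hq hq'
        obtain ⟨_, hcross⟩ := hq
        obtain ⟨_, hcross'⟩ := hq'
        push_neg at hcross hcross'
        have e1 := Nat.div_add_mod q K
        have e2 := Nat.div_add_mod q' K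
        have hmod : q % K < K := Nat.mod_lt q hK0
        have hmod' : q' % K < K := Nat.mod_lt q' hK0
        have h1 : q / K = q' / K := congrArg Prod.fst heq
        have h2 : q % K + r - K - 1 = q' % K + r - K - 1 := congrArg Prod.snd heq
        have h3 : q % K = q' % K := by omega
        rw [h1, h3] at e1
        omega
  -- the constant
  have hcK : ∑ u : Fin K → Fin b, (∏ j, p (u j)) * (gct hb v u : ℝ)
      = ((K + 1 - r : ℕ) : ℝ) * θv := by
    have hg : ∀ u : Fin K → Fin b, (gct hb v u : ℝ)
        = ∑ s ∈ range (K + 1 - r),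
            (if ∀ i : Fin r, ext hb u (s + (i : ℕ)) = v i then (1:ℝ) else 0) := by
      intro u
      unfold gct
      rw [Finset.card_filter]
      push_cast
      rfl
    calc ∑ u : Fin K → Fin b, (∏ j, p (u j)) * (gct hb v u : ℝ)
        = ∑ u : Fin K → Fin b, ∑ s ∈ range (K + 1 - r),
            (if ∀ i : Fin r, ext hb u (s + (i : ℕ)) = v i then ∏ j, p (u j) else 0) := by
          apply Finset.sum_congr rfl
          intro u _
          rw [hg, Finset.mul_sum]
          apply Finset.sum_congr rfl
          intro s _
          rw [mul_ite, mul_one, mul_zero]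
      _ = ∑ s ∈ range (K + 1 - r), ∑ u : Fin K → Fin b,
            (if ∀ i : Fin r, ext hb u (s + (i : ℕ)) = v i then ∏ j, p (u j) else 0) :=
          Finset.sum_comm
      _ = ∑ s ∈ range (K + 1 - r), θv := by
          apply Finset.sum_congr rfl
          intro s hs
          rw [Finset.mem_range] at hs
          rw [hθv]
          exact cyl_one hb p hsum hr0 v (by omega)
      _ = ((K + 1 - r : ℕ) : ℝ) * θv := by
          rw [Finset.sum_const, Finset.card_range, nsmul_eq_mul]
  -- limits of the two window sums
  have hlowt : Tendsto (fun n : ℕ => ∑ u : Fin K → Fin b,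
      (((range (n / K)).filter
        (fun j => ∀ i : Fin K, x (j * K + (i : ℕ)) = u i)).card : ℝ) / n * (gct hb v u : ℝ))
      atTop (nhds (∑ u : Fin K → Fin b, (∏ j, p (u j)) / K * (gct hb v u : ℝ))) := by
    apply tendsto_finset_sum
    intro u _
    exact (ratio_floordiv (hyp2 K hK1 u) K hK0).mul_const _
  have hupt : Tendsto (fun n : ℕ => ∑ u : Fin K → Fin b,
      (((range (n / K + 1)).filter
        (fun j => ∀ i : Fin K, x (j * K + (i : ℕ)) = u i)).card : ℝ) / n * (gct hb v u : ℝ))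
      atTop (nhds (∑ u : Fin K → Fin b, (∏ j, p (u j)) / K * (gct hb v u : ℝ))) := by
    apply tendsto_finset_sum
    intro u _
    exact (ratio_floordiv (ratio_shift (hyp2 K hK1 u) 1) K hK0).mul_const _
  have herrt : Tendsto (fun n : ℕ => (((n / K + 1) * (r - 1) : ℕ) : ℝ) / n)
      atTop (nhds (((r - 1 : ℕ) : ℝ) / K)) := by
    have hbase : Tendsto (fun m : ℕ => (((fun z : ℕ => (z + 1) * (r - 1)) m : ℕ) : ℝ) / m)
        atTop (nhds ((r - 1 : ℕ) : ℝ)) := by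
      apply tendsto_div_of_bounded_sub (C := ((r - 1 : ℕ) : ℝ))
      filter_upwards with m
      have he9 : (((fun z : ℕ => (z + 1) * (r - 1)) m : ℕ) : ℝ)
          - ((r - 1 : ℕ) : ℝ) * m = ((r - 1 : ℕ) : ℝ) := by
        push_cast
        ring
      rw [he9, abs_of_nonneg (by positivity)]
    exact ratio_floordiv (f := fun z : ℕ => (z + 1) * (r - 1)) hbase K hK0
  -- the limit constant
  set cst : ℝ := ∑ u : Fin K → Fin b, (∏ j, p (u j)) / K * (gct hb v u : ℝ) with hcst
  have hcstval : cst = ((K + 1 - r : ℕ) : ℝ) * θv / K := by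
    rw [hcst, ← hcK, Finset.sum_div]
    apply Finset.sum_congr rfl
    intro u _
    ring
  have hKr_cast : ((K + 1 - r : ℕ) : ℝ) = (K : ℝ) + 1 - r := by
    have : r ≤ K + 1 := by omega
    push_cast [this]
    ring
  have hrK4' : (r : ℝ) ≤ ε / 4 * K := by
    rw [div_le_iff₀ hK'] at hrK4
    linarith
  have hr1 : (1:ℝ) ≤ (r:ℝ) := by exact_mod_cast hr
  have hcst_low : θv - ε / 4 ≤ cst := by
    rw [hcstval, hKr_cast, le_div_iff₀ hK']
    nlinarith [mul_le_mul_of_nonneg_right hθ1 (show (0:ℝ) ≤ r by linarith)]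
  have hcst_up : cst ≤ θv := by
    rw [hcstval, hKr_cast, div_le_iff₀ hK']
    nlinarith
  have herr_le : ((r - 1 : ℕ) : ℝ) / K ≤ ε / 4 := by
    have : ((r - 1 : ℕ) : ℝ) ≤ (r : ℝ) := by
      have : ((r - 1 : ℕ) : ℝ) ≤ ((r : ℕ) : ℝ) := by exact_mod_cast Nat.sub_le r 1
      exact this
    rw [div_le_iff₀ hK'] at hrK4 ⊢
    linarith
  -- eventual bounds
  have hev1 : ∀ᶠ n : ℕ in atTop, cst - ε / 4 ≤ ∑ u : Fin K → Fin b,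
      (((range (n / K)).filter
        (fun j => ∀ i : Fin K, x (j * K + (i : ℕ)) = u i)).card : ℝ) / n * (gct hb v u : ℝ) :=
    hlowt.eventually (eventually_ge_nhds (by linarith))
  have hev2 : ∀ᶠ n : ℕ in atTop, ∑ u : Fin K → Fin b,
      (((range (n / K + 1)).filter
        (fun j => ∀ i : Fin K, x (j * K + (i : ℕ)) = u i)).card : ℝ) / n * (gct hb v u : ℝ)
      ≤ cst + ε / 4 :=
    hupt.eventually (eventually_le_nhds (by linarith))
  have hev3 : ∀ᶠ n : ℕ in atTop, (((n / K + 1) * (r - 1) : ℕ) : ℝ) / n ≤ ε / 2 :=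
    herrt.eventually (eventually_le_nhds (by linarith))
  filter_upwards [hev1, hev2, hev3, eventually_ge_atTop 1] with n h1 h2 h3 hn1
  have hn0 : (0:ℝ) < n := by exact_mod_cast hn1
  -- cast the nat bridges and divide by n
  have hblow := blow n
  have hbup := bup n
  have hlowr : (∑ u : Fin K → Fin b,
      (((range (n / K)).filter
        (fun j => ∀ i : Fin K, x (j * K + (i : ℕ)) = u i)).card : ℝ) / n * (gct hb v u : ℝ))
      ≤ (occ x n v : ℝ) / n := by
    have hcst2 : (∑ u : Fin K → Fin b,
        (((range (n / K)).filter
          (fun j => ∀ i : Fin K, x (j * K + (i : ℕ)) = u i)).card : ℝ) / n * (gct hb v u : ℝ))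
        = ((∑ u : Fin K → Fin b,
          ((range (n / K)).filter
            (fun j => ∀ i : Fin K, x (j * K + (i : ℕ)) = u i)).card * gct hb v u : ℕ) : ℝ) / n := by
      push_cast
      rw [Finset.sum_div]
      apply Finset.sum_congr rfl
      intro u _
      ring
    rw [hcst2]
    apply div_le_div_of_nonneg_right _ hn0.le
    exact_mod_cast hblow
  have hupr : (occ x n v : ℝ) / n ≤ (∑ u : Fin K → Fin b,
      (((range (n / K + 1)).filter
        (fun j => ∀ i : Fin K, x (j * K + (i : ℕ)) = u i)).card : ℝ) / n * (gct hb v u : ℝ))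
      + (((n / K + 1) * (r - 1) : ℕ) : ℝ) / n := by
    have hcst2 : (∑ u : Fin K → Fin b,
        (((range (n / K + 1)).filter
          (fun j => ∀ i : Fin K, x (j * K + (i : ℕ)) = u i)).card : ℝ) / n * (gct hb v u : ℝ))
        + (((n / K + 1) * (r - 1) : ℕ) : ℝ) / n
        = (((∑ u : Fin K → Fin b,
          ((range (n / K + 1)).filter
            (fun j => ∀ i : Fin K, x (j * K + (i : ℕ)) = u i)).card * gct hb v u : ℕ) : ℝ)
          + (((n / K + 1) * (r - 1) : ℕ) : ℝ)) / n := by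
      rw [add_div]
      congr 1
      push_cast
      rw [Finset.sum_div]
      apply Finset.sum_congr rfl
      intro u _
      ring
    rw [hcst2]
    apply div_le_div_of_nonneg_right _ hn0.le
    exact_mod_cast hbup
  rw [abs_le]
  constructor
  · linarith
  · linarith
end BN

/-- **Equivalent characterizations of biased normality.** For a base `b ≥ 2`, positive
biases `p` summing to `1`, and `x : ℕ → Fin b`, the following are equivalent:
(1) `x` is biased normal: for every `k ≥ 1`, offset `m`, and block `w` of length `k`, the
frequency of `w` among consecutive length-`k` blocks starting at `m, m+k, m+2k, …` is
`∏_{i<k} p_{w i}`;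
(2) for every `k ≥ 1`, `x` is biased simply normal in base `b^k` with the product biases;
(3) every block `v` of length `r ≥ 1` occurs in `x` (overlapping count) with limiting
frequency `∏_{i<r} p_{v i}`. -/
theorem biased_normal_tfae (b : ℕ) (hb : 2 ≤ b)
    (p : Fin b → ℝ) (hp : ∀ i, 0 < p i) (hsum : ∑ i, p i = 1) (x : ℕ → Fin b) :
    [(∀ k : ℕ, 1 ≤ k → ∀ m : ℕ, ∀ w : Fin k → Fin b,
        Tendsto
          (fun N : ℕ =>
            (((Finset.range N).filter
              (fun j => ∀ i : Fin k, x (m + j * k + i) = w i)).card : ℝ) / N)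
          atTop (nhds (∏ i, p (w i)))),
      (∀ k : ℕ, 1 ≤ k → ∀ w : Fin k → Fin b,
        Tendsto
          (fun ℓ : ℕ =>
            (((Finset.range ℓ).filter
              (fun j => ∀ i : Fin k, x (j * k + i) = w i)).card : ℝ) / ℓ)
          atTop (nhds (∏ i, p (w i)))),
      (∀ r : ℕ, 1 ≤ r → ∀ v : Fin r → Fin b,
        Tendsto (fun n : ℕ => (occ x n v : ℝ) / n) atTop (nhds (∏ i, p (v i))))].TFAE := by
  have hb0 : 0 < b := by omega
  tfae_have 1 → 2 := by
    intro h1 k hk w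
    simpa using h1 k hk 0 w
  tfae_have 2 → 3 := fun h2 => BN.two_imp_three hb0 p hp hsum x h2
  tfae_have 3 → 1 := fun h3 => BN.three_imp_one hb0 p hp hsum x h3
  tfae_finish
end

section
/- Fix an integer base b ≥ 2 and positive real biases p_0, …, p_{b−1} with Σ_{i<b} p_i = 1. Let μ_p be the Bernoulli (infinite product) measure on b^ω with parameters p_0, …, p_{b−1}. Then the set of sequences x ∈ b^ω that are biased normal with respect to p_0, …, p_{b−1} — equivalently, the set of x such that for every r ≥ 1 and every block v of length r, lim_{n→∞} occ(x[0:n−1], v)/n = ∏_{i<r} p_{v(i)} — has μ_p-measure 1. -/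
open Filter Finset MeasureTheory ProbabilityTheory Topology

lemma sum_prod_filter_eq {b N : ℕ} (p : Fin b → ℝ) (hsum : ∑ i, p i = 1)
    (S : Finset ℕ) (f : ℕ → Fin b) :
    ∑ w ∈ Finset.univ.filter (fun w : Fin N → Fin b => ∀ i : Fin N, (i : ℕ) ∈ S → w i = f i),
      ∏ i, p (w i) = ∏ i ∈ Finset.univ.filter (fun i : Fin N => (i : ℕ) ∈ S), p (f i) := by
  classical
  set g : Fin N → Fin b → ℝ := fun i j => if (i : ℕ) ∈ S then (if j = f i then p j else 0) else p j
    with hg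
  have key : ∀ w : Fin N → Fin b,
      ∏ i, g i (w i) =
        if (∀ i : Fin N, (i : ℕ) ∈ S → w i = f i) then ∏ i, p (w i) else 0 := by
    intro w
    split_ifs with hc
    · refine Finset.prod_congr rfl fun i _ => ?_
      by_cases hi : (i : ℕ) ∈ S
      · simp [hg, hi, hc i hi]
      · simp [hg, hi]
    · push_neg at hc
      obtain ⟨i, hi, hne⟩ := hc
      exact Finset.prod_eq_zero (Finset.mem_univ i) (by simp [hg, hi, hne])
  have lhs : ∑ w ∈ Finset.univ.filter (fun w : Fin N → Fin b =>
      ∀ i : Fin N, (i : ℕ) ∈ S → w i = f i), ∏ i, p (w i)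
      = ∑ w : Fin N → Fin b, ∏ i, g i (w i) := by
    rw [Finset.sum_filter]
    refine Finset.sum_congr rfl fun w _ => (key w).symm
  rw [lhs]
  have rhs : ∑ w : Fin N → Fin b, ∏ i, g i (w i)
      = ∏ i : Fin N, ∑ j, g i j := by
    rw [Finset.prod_univ_sum (fun _ => Finset.univ) g]
    rw [Fintype.piFinset_univ]
  rw [rhs]
  have : ∀ i : Fin N, ∑ j, g i j = if (i : ℕ) ∈ S then p (f i) else 1 := by
    intro i
    by_cases hi : (i : ℕ) ∈ S
    · simp [hg, hi, Finset.sum_ite_eq' Finset.univ (f i) p]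
    · simp [hg, hi, hsum]
  rw [Finset.prod_congr rfl fun i _ => this i, ← Finset.prod_filter]

lemma cyl_measure {b : ℕ} (p : Fin b → ℝ) (hp : ∀ i, 0 < p i)
    (hsum : ∑ i, p i = 1) (μ : Measure (ℕ → Fin b))
    (hμ : ∀ (k : ℕ) (w : Fin k → Fin b),
      μ {x | ∀ i : Fin k, x (i : ℕ) = w i} = ENNReal.ofReal (∏ i, p (w i)))
    (S : Finset ℕ) (f : ℕ → Fin b) :
    μ {x | ∀ s ∈ S, x s = f s} = ENNReal.ofReal (∏ s ∈ S, p (f s)) := by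
  classical
  set N := S.sup id + 1 with hN
  have hS : ∀ s ∈ S, s < N := fun s hs =>
    Nat.lt_succ_of_le (Finset.le_sup (f := id) hs)
  set T : Finset (Fin N → Fin b) :=
    Finset.univ.filter (fun w : Fin N → Fin b => ∀ i : Fin N, (i : ℕ) ∈ S → w i = f i) with hT
  have hset : {x : ℕ → Fin b | ∀ s ∈ S, x s = f s}
      = ⋃ w ∈ T, {x : ℕ → Fin b | ∀ i : Fin N, x (i : ℕ) = w i} := by
    ext x
    simp only [Set.mem_setOf_eq, Set.mem_iUnion, hT, Finset.mem_filter, Finset.mem_univ, true_and]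
    constructor
    · intro h
      exact ⟨fun i => x i, fun i hi => h _ hi, fun i => rfl⟩
    · rintro ⟨w, hw, hx⟩ s hs
      have := hx ⟨s, hS s hs⟩
      rw [this, hw _ hs]
  have hmeas : ∀ w : Fin N → Fin b, MeasurableSet {x : ℕ → Fin b | ∀ i : Fin N, x (i : ℕ) = w i} := by
    intro w
    have : {x : ℕ → Fin b | ∀ i : Fin N, x (i : ℕ) = w i}
        = ⋂ i : Fin N, (fun x : ℕ → Fin b => x (i : ℕ)) ⁻¹' {w i} := by
      ext x; simp [Set.mem_iInter]
    rw [this]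
    exact MeasurableSet.iInter fun i => (measurable_pi_apply _) (measurableSet_singleton _)
  have hdisj : (↑T : Set (Fin N → Fin b)).PairwiseDisjoint
      (fun w => {x : ℕ → Fin b | ∀ i : Fin N, x (i : ℕ) = w i}) := by
    intro w _ w' _ hne
    refine Set.disjoint_left.mpr fun x hx hx' => hne ?_
    funext i
    rw [← hx i, ← hx' i]
  rw [hset, measure_biUnion_finset hdisj fun w _ => hmeas w]
  have : ∀ w ∈ T, μ {x : ℕ → Fin b | ∀ i : Fin N, x (i : ℕ) = w i}
      = ENNReal.ofReal (∏ i, p (w i)) := fun w _ => hμ N w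
  rw [Finset.sum_congr rfl this, ← ENNReal.ofReal_sum_of_nonneg
    (fun w _ => Finset.prod_nonneg fun i _ => (hp _).le)]
  congr 1
  rw [hT, sum_prod_filter_eq p hsum S f]
  refine Finset.prod_nbij (fun i => (i : ℕ)) ?_ ?_ ?_ ?_
  · intro i hi; simpa using (Finset.mem_filter.mp hi).2
  · intro i hi j hj hij; exact Fin.val_injective hij
  · intro s hs
    exact ⟨⟨s, hS s hs⟩, by simpa using hs, rfl⟩
  · intro i _; rfl

lemma block_prod {b r : ℕ} (p : Fin b → ℝ) (v : Fin r → Fin b) (t : ℕ) (f : ℕ → Fin b)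
    (hf : ∀ i : Fin r, f (t + (i : ℕ)) = v i) :
    ∏ s ∈ (Finset.range r).image (fun i => t + i), p (f s) = ∏ i, p (v i) := by
  rw [Finset.prod_image (fun a _ c _ h => by omega)]
  rw [← Fin.prod_univ_eq_prod_range (fun i => p (f (t + i)))]
  exact Finset.prod_congr rfl fun i _ => by rw [hf i]

lemma identDistrib_indicator_of_measure_eq {Ω : Type*} [MeasurableSpace Ω]
    (μ : Measure Ω) [IsProbabilityMeasure μ] {E F : Set Ω}
    (hE : MeasurableSet E) (hF : MeasurableSet F) (h : μ E = μ F) :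
    IdentDistrib (E.indicator fun _ => (1 : ℝ)) (F.indicator fun _ => (1 : ℝ)) μ μ := by
  classical
  refine ⟨(measurable_const.indicator hE).aemeasurable,
    (measurable_const.indicator hF).aemeasurable, ?_⟩
  ext s hs
  rw [Measure.map_apply (measurable_const.indicator hE) hs,
    Measure.map_apply (measurable_const.indicator hF) hs,
    Set.indicator_const_preimage_eq_union, Set.indicator_const_preimage_eq_union]
  have key : ∀ (G : Set Ω), MeasurableSet G → μ G = μ E →
      μ ((if (1:ℝ) ∈ s then G else ∅) ∪ if (0:ℝ) ∈ s then Gᶜ else ∅)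
      = (if (1:ℝ) ∈ s then μ E else 0) + (if (0:ℝ) ∈ s then 1 - μ E else 0) := by
    intro G hG hGE
    have hc : μ Gᶜ = 1 - μ E := by
      rw [measure_compl hG (measure_ne_top μ G), measure_univ, hGE]
    split_ifs with h1 h0 h0
    · rw [measure_union _ hG.compl, hGE, hc]
      exact disjoint_compl_right
    · simp [hGE]
    · simp [hc]
    · simp
  rw [key E hE rfl, key F hF h.symm]

section blocks
variable {b r : ℕ} (v : Fin r → Fin b)

/-- the event that block `v` occurs at position `t` -/
def Ev (v : Fin r → Fin b) (t : ℕ) : Set (ℕ → Fin b) :=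
  {x | ∀ i : Fin r, x (t + (i : ℕ)) = v i}

lemma Ev_meas (t : ℕ) : MeasurableSet (Ev v t) := by
  have : Ev v t = ⋂ i : Fin r, (fun x : ℕ → Fin b => x (t + (i : ℕ))) ⁻¹' {v i} := by
    ext x; simp [Ev, Set.mem_iInter]
  rw [this]
  exact MeasurableSet.iInter fun i => (measurable_pi_apply _) (measurableSet_singleton _)

variable (hr : 0 < r) {p : Fin b → ℝ} (hp : ∀ i, 0 < p i) (hsum : ∑ i, p i = 1)
  (μ : Measure (ℕ → Fin b))
  (hμ : ∀ (k : ℕ) (w : Fin k → Fin b),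
      μ {x | ∀ i : Fin k, x (i : ℕ) = w i} = ENNReal.ofReal (∏ i, p (w i)))

include hr hp hsum hμ

lemma Ev_measure (t : ℕ) : μ (Ev v t) = ENNReal.ofReal (∏ i, p (v i)) := by
  classical
  set f : ℕ → Fin b := fun s => v ⟨(s - t) % r, Nat.mod_lt _ hr⟩ with hfdef
  have hf : ∀ i : Fin r, f (t + (i : ℕ)) = v i := by
    intro i
    simp only [hfdef]
    congr 1
    ext
    simp [Nat.add_sub_cancel_left, Nat.mod_eq_of_lt i.isLt]
  have hset : Ev v t = {x | ∀ s ∈ (Finset.range r).image (fun i => t + i), x s = f s} := by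
    ext x
    simp only [Ev, Set.mem_setOf_eq, Finset.mem_image, Finset.mem_range]
    constructor
    · rintro h s ⟨i, hi, rfl⟩
      rw [hf ⟨i, hi⟩]; exact h ⟨i, hi⟩
    · intro h i
      rw [← hf i]; exact h _ ⟨i, i.isLt, rfl⟩
  rw [hset, cyl_measure p hp hsum μ hμ, block_prod p v t f hf]

lemma Ev_iInter_measure (j : ℕ) (T : Finset ℕ) :
    μ (⋂ m ∈ T, Ev v (j + m * r)) = ENNReal.ofReal ((∏ i, p (v i)) ^ T.card) := by
  classical
  set f : ℕ → Fin b := fun s => v ⟨(s - j) % r, Nat.mod_lt _ hr⟩ with hfdef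
  have hf : ∀ m (i : Fin r), f (j + m * r + (i : ℕ)) = v i := by
    intro m i
    simp only [hfdef]
    congr 1
    ext
    simp only
    have : j + m * r + (i : ℕ) - j = (i : ℕ) + m * r := by omega
    rw [this, Nat.add_mul_mod_self_right, Nat.mod_eq_of_lt i.isLt]
  set S : Finset ℕ := T.biUnion (fun m => (Finset.range r).image (fun i => j + m * r + i))
    with hSdef
  have hset : (⋂ m ∈ T, Ev v (j + m * r)) = {x | ∀ s ∈ S, x s = f s} := by
    ext x
    simp only [Set.mem_iInter, Ev, Set.mem_setOf_eq, hSdef, Finset.mem_biUnion,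
      Finset.mem_image, Finset.mem_range]
    constructor
    · rintro h s ⟨m, hm, i, hi, rfl⟩
      rw [hf m ⟨i, hi⟩]; exact h m hm ⟨i, hi⟩
    · intro h m hm i
      rw [← hf m i]; exact h _ ⟨m, hm, i, i.isLt, rfl⟩
  have hdisj : (↑T : Set ℕ).PairwiseDisjoint
      (fun m => (Finset.range r).image (fun i => j + m * r + i)) := by
    intro m _ m' _ hne
    refine Finset.disjoint_left.mpr ?_
    rintro s hs hs'
    simp only [Finset.mem_image, Finset.mem_range] at hs hs'
    obtain ⟨i, hi, rfl⟩ := hs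
    obtain ⟨i', hi', he⟩ := hs'
    apply hne
    have h1 : m' * r + i' = m * r + i := by omega
    rcases Nat.lt_trichotomy m m' with h | h | h
    · exfalso
      have : m * r + r ≤ m' * r := by
        calc m * r + r = (m + 1) * r := by ring
        _ ≤ m' * r := Nat.mul_le_mul_right r h
      omega
    · exact h
    · exfalso
      have : m' * r + r ≤ m * r := by
        calc m' * r + r = (m' + 1) * r := by ring
        _ ≤ m * r := Nat.mul_le_mul_right r h
      omega
  rw [hset, cyl_measure p hp hsum μ hμ]
  congr 1
  rw [hSdef, Finset.prod_biUnion hdisj]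
  rw [Finset.prod_congr rfl fun m _ => block_prod p v (j + m * r) f (hf m)]
  exact Finset.prod_const _

lemma Ev_iIndep (j : ℕ) [IsProbabilityMeasure μ] :
    iIndepSet (fun m : ℕ => Ev v (j + m * r)) μ := by
  rw [iIndepSet_iff_meas_biInter (fun m => Ev_meas v _)]
  intro T
  rw [Ev_iInter_measure v hr hp hsum μ hμ j T]
  have : ∀ m ∈ T, μ (Ev v (j + m * r)) = ENNReal.ofReal (∏ i, p (v i)) :=
    fun m _ => Ev_measure v hr hp hsum μ hμ _
  rw [Finset.prod_congr rfl this, Finset.prod_const]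
  exact ENNReal.ofReal_pow (Finset.prod_nonneg fun i _ => (hp (v i)).le) _

lemma slln_block (j : ℕ) [IsProbabilityMeasure μ] :
    ∀ᵐ x ∂μ, Tendsto (fun N : ℕ =>
        (∑ m ∈ Finset.range N, (Ev v (j + m * r)).indicator (fun _ => (1:ℝ)) x) / N)
      atTop (𝓝 (∏ i, p (v i))) := by
  set X : ℕ → (ℕ → Fin b) → ℝ := fun m => (Ev v (j + m * r)).indicator fun _ => 1 with hX
  have hint : Integrable (X 0) μ := (integrable_const (1:ℝ)).indicator (Ev_meas v _)
  have hindep : Pairwise (Function.onFun (IndepFun · · μ) X) := fun m m' hmm' =>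
    ((Ev_iIndep v hr hp hsum μ hμ j).iIndepFun_indicator).indepFun hmm'
  have hident : ∀ m, IdentDistrib (X m) (X 0) μ μ := fun m =>
    identDistrib_indicator_of_measure_eq μ (Ev_meas v _) (Ev_meas v _)
      (by rw [Ev_measure v hr hp hsum μ hμ, Ev_measure v hr hp hsum μ hμ])
  have key := strong_law_ae_real X hint hindep hident
  have hmean : (μ[X 0]) = ∏ i, p (v i) := by
    rw [hX]
    simp only
    rw [integral_indicator_const (1:ℝ) (Ev_meas v _), Measure.real, Ev_measure v hr hp hsum μ hμ,
      smul_eq_mul, mul_one, ENNReal.toReal_ofReal (Finset.prod_nonneg fun i _ => (hp (v i)).le)]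
  rwa [hmean] at key

end blocks

lemma det_combine (r : ℕ) (hr : 1 ≤ r) (q : ℝ) (c : ℕ → ℝ)
    (hc0 : ∀ t, 0 ≤ c t) (hc1 : ∀ t, c t ≤ 1)
    (h : ∀ j, j < r → Tendsto (fun N : ℕ => (∑ m ∈ Finset.range N, c (j + m * r)) / N)
      atTop (𝓝 q)) :
    Tendsto (fun n : ℕ => (∑ t ∈ Finset.range (n + 1 - r), c t) / n) atTop (𝓝 q) := by
  have hr0 : (0:ℝ) < r := by exact_mod_cast hr
  set A : ℕ → ℝ := fun T => ∑ t ∈ Finset.range T, c t with hA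
  set M : ℕ → ℕ := fun n => (n + 1 - r) / r with hM
  -- Step 1: splitting into residue classes
  have h1 : ∀ Mv : ℕ, A (r * Mv) = ∑ j ∈ Finset.range r, ∑ m ∈ Finset.range Mv, c (j + m * r) := by
    intro Mv
    induction Mv with
    | zero => simp [hA]
    | succ Mv ih =>
      have e : r * (Mv + 1) = r * Mv + r := by ring
      have : A (r * (Mv + 1)) = A (r * Mv) + ∑ i ∈ Finset.range r, c (r * Mv + i) := by
        rw [hA]; simp only [e, Finset.sum_range_add]
      rw [this, ih]
      have : ∀ j ∈ Finset.range r, ∑ m ∈ Finset.range (Mv+1), c (j + m * r)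
          = ∑ m ∈ Finset.range Mv, c (j + m * r) + c (j + Mv * r) := fun j _ => by
        rw [Finset.sum_range_succ]
      rw [Finset.sum_congr rfl this, Finset.sum_add_distrib]
      congr 1
      refine Finset.sum_congr rfl fun i _ => ?_
      congr 1
      ring
  -- Step 2: averages along multiples of r
  have hB : Tendsto (fun Mv : ℕ => A (r * Mv) / ((r * Mv : ℕ) : ℝ)) atTop (𝓝 q) := by
    have e : ∀ Mv : ℕ, A (r * Mv) / ((r * Mv : ℕ) : ℝ)
        = (∑ j ∈ Finset.range r, (∑ m ∈ Finset.range Mv, c (j + m * r)) / Mv) / r := by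
      intro Mv
      rw [h1, Nat.cast_mul, ← Finset.sum_div]
      rw [div_div, mul_comm (r:ℝ) (Mv:ℝ), ← div_div]
    simp only [e]
    have h2 : Tendsto (fun Mv : ℕ =>
        (∑ j ∈ Finset.range r, (∑ m ∈ Finset.range Mv, c (j + m * r)) / Mv) / r)
        atTop (𝓝 ((r * q) / r)) := by
      apply Tendsto.div_const
      have := tendsto_finset_sum (Finset.range r) (fun j hj => h j (Finset.mem_range.mp hj))
      simpa [Finset.sum_const, nsmul_eq_mul] using this
    rwa [mul_div_cancel_left₀ q (ne_of_gt hr0)] at h2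
  -- M n → ∞
  have hMtop : Tendsto M atTop atTop := by
    rw [tendsto_atTop_atTop]
    intro K
    refine ⟨K * r + 2 * r, fun n hn => ?_⟩
    simp only [hM]
    rw [Nat.le_div_iff_mul_le (by omega : 0 < r)]
    set kr := K * r
    omega
  have hub : ∀ n, r * M n ≤ n + 1 - r := by
    intro n
    calc r * M n = (n + 1 - r) / r * r := by simp only [hM]; ring
    _ ≤ n + 1 - r := Nat.div_mul_le_self _ _
  have hlb : ∀ n, n + 1 - r < r * M n + r := by
    intro n
    have h2 := Nat.lt_div_mul_add (by omega : 0 < r) (a := n + 1 - r)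
    have h3 : (n + 1 - r) / r * r = r * M n := by simp only [hM]; ring
    omega
  -- ratio r*M n / n → 1
  have hratio : Tendsto (fun n : ℕ => ((r * M n : ℕ) : ℝ) / n) atTop (𝓝 1) := by
    have hlow : Tendsto (fun n : ℕ => 1 + ((2 - 2 * r) / n : ℝ)) atTop (𝓝 1) := by
      have := tendsto_const_div_atTop_nhds_zero_nat (2 - 2 * (r:ℝ))
      simpa using (tendsto_const_nhds (x := (1:ℝ)) (f := atTop)).add this
    refine tendsto_of_tendsto_of_tendsto_of_le_of_le' hlow tendsto_const_nhds ?_ ?_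
    · filter_upwards [eventually_ge_atTop (2 * r)] with n hn
      have hn0 : (0:ℝ) < n := by
        have : 0 < n := by omega
        exact_mod_cast this
      have hge : n + 2 - 2 * r ≤ r * M n := by
        have := hlb n
        omega
      have hcast : ((n:ℝ) + 2 - 2 * r) ≤ ((r * M n : ℕ) : ℝ) := by
        have h4 : 2 * r ≤ n + 2 := by omega
        calc ((n:ℝ) + 2 - 2 * r) = ((n + 2 - 2 * r : ℕ) : ℝ) := by
              push_cast [h4]; ring
        _ ≤ _ := Nat.cast_le.mpr hge
      have e1 : 1 + (2 - 2 * (r:ℝ)) / n = ((n:ℝ) + 2 - 2 * r) / n := by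
        field_simp
        ring
      rw [e1]
      gcongr
    · filter_upwards [eventually_ge_atTop 1] with n hn
      have hn0 : (0:ℝ) < n := by exact_mod_cast Nat.lt_of_lt_of_le Nat.zero_lt_one hn
      rw [div_le_one hn0]
      have : r * M n ≤ n := le_trans (hub n) (by omega)
      exact_mod_cast this
  -- lower sequence
  have hL : Tendsto (fun n : ℕ => A (r * M n) / n) atTop (𝓝 q) := by
    have e : ∀ n : ℕ, A (r * M n) / n
        = A (r * M n) / ((r * M n : ℕ) : ℝ) * (((r * M n : ℕ) : ℝ) / n) := by
      intro n
      by_cases h0 : r * M n = 0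
      · rw [h0]
        simp [hA]
      · have hm0 : ((r * M n : ℕ) : ℝ) ≠ 0 := by
          exact_mod_cast h0
        rw [div_mul_div_comm, mul_comm (A (r * M n)) _, mul_div_mul_left _ _ hm0]
    simp only [e]
    have := (hB.comp hMtop).mul hratio
    simpa using this
  -- upper sequence
  have hU : Tendsto (fun n : ℕ => (A (r * M n) + r) / n) atTop (𝓝 q) := by
    have := hL.add (tendsto_const_div_atTop_nhds_zero_nat (r : ℝ))
    simp only [← add_div] at this
    simpa using this
  -- squeeze
  refine tendsto_of_tendsto_of_tendsto_of_le_of_le' hL hU ?_ ?_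
  · filter_upwards [eventually_ge_atTop 1] with n hn
    have hn0 : (0:ℝ) < n := by exact_mod_cast Nat.lt_of_lt_of_le Nat.zero_lt_one hn
    gcongr
    exact Finset.sum_le_sum_of_subset_of_nonneg
      (Finset.range_subset_range.mpr (hub n)) (fun t _ _ => hc0 t)
  · filter_upwards [eventually_ge_atTop 1] with n hn
    have hn0 : (0:ℝ) < n := by exact_mod_cast Nat.lt_of_lt_of_le Nat.zero_lt_one hn
    gcongr
    have hsplit : A (n + 1 - r) = A (r * M n) + ∑ t ∈ Finset.Ico (r * M n) (n + 1 - r), c t := by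
      rw [hA]
      simp only [Finset.range_eq_Ico]
      exact (Finset.sum_Ico_consecutive c (Nat.zero_le _) (hub n)).symm
    show A (n + 1 - r) ≤ A (r * M n) + (r:ℝ)
    rw [hsplit]
    have hcard : ∑ t ∈ Finset.Ico (r * M n) (n + 1 - r), c t ≤ r := by
      calc ∑ t ∈ Finset.Ico (r * M n) (n + 1 - r), c t
          ≤ (Finset.Ico (r * M n) (n + 1 - r)).card • (1:ℝ) :=
            Finset.sum_le_card_nsmul _ _ _ (fun t _ => hc1 t)
      _ = ((n + 1 - r) - r * M n : ℕ) := by rw [Nat.card_Ico, nsmul_eq_mul, mul_one]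
      _ ≤ r := by
          have h5 := hlb n
          have : (n + 1 - r) - r * M n ≤ r := by omega
          exact_mod_cast this
    linarith [hcard]

/-- **Almost every sequence is biased normal.** Fix a base `b ≥ 2` and positive biases `p`
summing to `1`.  Let `μ` be the Bernoulli measure on `b^ω`, i.e. the probability measure
giving each cylinder `[w]`, `w : Fin k → Fin b`, measure `∏_{i<k} p_{w i}` (this determines
the infinite product measure uniquely).  Then the set of sequences that are biased normal
with respect to `p` — equivalently, such that every block `v` of length `r ≥ 1` occurs with
limiting frequency `∏_{i<r} p_{v i}` — has `μ`-measure `1`. -/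
theorem biased_normal_full_measure (b : ℕ) (hb : 2 ≤ b)
    (p : Fin b → ℝ) (hp : ∀ i, 0 < p i) (hsum : ∑ i, p i = 1)
    (μ : Measure (ℕ → Fin b)) [IsProbabilityMeasure μ]
    (hμ : ∀ (k : ℕ) (w : Fin k → Fin b),
      μ {x | ∀ i : Fin k, x (i : ℕ) = w i} = ENNReal.ofReal (∏ i, p (w i))) :
    μ {x | ∀ r : ℕ, 1 ≤ r → ∀ v : Fin r → Fin b,
        Tendsto (fun n : ℕ => (occ x n v : ℝ) / n) atTop (nhds (∏ i, p (v i)))} = 1 := by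
  classical
  have main : ∀ᵐ x ∂μ, ∀ r : ℕ, 1 ≤ r → ∀ v : Fin r → Fin b,
      Tendsto (fun n : ℕ => (occ x n v : ℝ) / n) atTop (𝓝 (∏ i, p (v i))) := by
    rw [ae_all_iff]
    intro r
    by_cases hr : 1 ≤ r
    swap
    · filter_upwards with x
      exact fun h => absurd h hr
    have hr0 : 0 < r := hr
    have inner : ∀ᵐ x ∂μ, ∀ v : Fin r → Fin b,
        Tendsto (fun n : ℕ => (occ x n v : ℝ) / n) atTop (𝓝 (∏ i, p (v i))) := by
      rw [ae_all_iff]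
      intro v
      have hj : ∀ᵐ x ∂μ, ∀ j : ℕ, j < r →
          Tendsto (fun N : ℕ =>
            (∑ m ∈ Finset.range N, (Ev v (j + m * r)).indicator (fun _ => (1:ℝ)) x) / N)
          atTop (𝓝 (∏ i, p (v i))) := by
        rw [ae_all_iff]
        intro j
        by_cases hjr : j < r
        · filter_upwards [slln_block v hr0 hp hsum μ hμ j] with x hx
          exact fun _ => hx
        · filter_upwards with x
          exact fun h => absurd h hjr
      filter_upwards [hj] with x hx
      have hc0 : ∀ t, 0 ≤ (Ev v t).indicator (fun _ => (1:ℝ)) x :=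
        fun t => Set.indicator_nonneg (fun _ _ => zero_le_one) x
      have hc1 : ∀ t, (Ev v t).indicator (fun _ => (1:ℝ)) x ≤ 1 := by
        intro t
        by_cases hm : x ∈ Ev v t
        · simp [Set.indicator_of_mem hm]
        · simp [Set.indicator_of_notMem hm]
      have key := det_combine r hr (∏ i, p (v i))
        (fun t => (Ev v t).indicator (fun _ => (1:ℝ)) x) hc0 hc1 hx
      refine key.congr fun n => ?_
      congr 1
      have : ∀ t, (Ev v t).indicator (fun _ => (1:ℝ)) x
          = if (∀ i : Fin r, x (t + (i : ℕ)) = v i) then (1:ℝ) else 0 := by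
        intro t
        rw [Set.indicator_apply]
        congr 1
      rw [Finset.sum_congr rfl fun t _ => this t, Finset.sum_boole]
      unfold occ
      norm_cast
    filter_upwards [inner] with x hx
    exact fun _ => hx
  have hae : {x : ℕ → Fin b | ∀ r : ℕ, 1 ≤ r → ∀ v : Fin r → Fin b,
      Tendsto (fun n : ℕ => (occ x n v : ℝ) / n) atTop (𝓝 (∏ i, p (v i)))}
      =ᵐ[μ] (Set.univ : Set (ℕ → Fin b)) := by
    rw [Filter.eventuallyEq_univ]
    exact main
  rw [measure_congr hae, measure_univ]
end

section
/- Fix an integer base n ≥ 2 and positive rational biases p_0, …, p_{n−1} summing to 1, and let d be a positive integer such that each p_i·d is a positive integer a_i (so Σ_{i<n} a_i = d, e.g., d is the least common multiple of the denominators of the p_i). Let g : {0,…,d−1} → {0,…,n−1} be any map such that for each digit i < n, #{ j < d : g(j) = i } = a_i. Let ν : ℕ → {0,…,d−1} be a sequence that is normal in base d, i.e., for every ℓ ≥ 1 and every block u of length ℓ in base d, lim_{k→∞} occ(ν[0:k−1], u)/k = 1/d^ℓ. Define β : ℕ → {0,…,n−1} by β(m) = g(ν(m)). Then β is biased normal with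 respect to p_0, …, p_{n−1}: for every ℓ ≥ 1 and every block w of length ℓ in base n, lim_{k→∞} occ(β[0:k−1], w)/k = ∏_{i<ℓ} p_{w(i)}. -/
open Filter Finset

/-- **Construction of biased normal sequences.** Fix a base `n ≥ 2` and positive rational
biases `p₀, …, p_{n-1}` summing to `1`, and a positive integer `d` such that each `p i * d`
is a positive integer `a i`.  Let `g : Fin d → Fin n` be a map taking the value `i` exactly
`a i` times, and let `ν : ℕ → Fin d` be normal in base `d` (every block `u` of length
`ℓ ≥ 1` occurs in `ν` with limiting frequency `1 / d^ℓ`).  Then `β := g ∘ ν` is biased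
normal with respect to `p`: every block `w` of length `ℓ ≥ 1` in base `n` occurs in `β`
with limiting frequency `∏_{i<ℓ} p_{w i}`. -/
theorem construction_biased_normal (n : ℕ) (hn : 2 ≤ n)
    (p : Fin n → ℚ) (hp : ∀ i, 0 < p i) (hsum : ∑ i, p i = 1)
    (d : ℕ) (hd : 0 < d) (a : Fin n → ℕ) (ha_pos : ∀ i, 0 < a i)
    (ha : ∀ i, p i * (d : ℚ) = (a i : ℚ))
    (g : Fin d → Fin n)
    (hg : ∀ i : Fin n, (univ.filter (fun j : Fin d => g j = i)).card = a i)
    (ν : ℕ → Fin d)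
    (hν : ∀ ℓ : ℕ, 1 ≤ ℓ → ∀ u : Fin ℓ → Fin d,
      Tendsto (fun k : ℕ => (occ ν k u : ℝ) / k) atTop (nhds (1 / (d : ℝ) ^ ℓ)))
    (β : ℕ → Fin n) (hβ : ∀ m, β m = g (ν m)) :
    ∀ ℓ : ℕ, 1 ≤ ℓ → ∀ w : Fin ℓ → Fin n,
      Tendsto (fun k : ℕ => (occ β k w : ℝ) / k) atTop (nhds (∏ i, (p (w i) : ℝ))) := by
  intro ℓ hℓ w
  -- the set of d-ary blocks mapping to w
  set S : Finset (Fin ℓ → Fin d) :=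
    Fintype.piFinset (fun i => univ.filter (fun j : Fin d => g j = w i)) with hS
  have hmem : ∀ u : Fin ℓ → Fin d, u ∈ S ↔ ∀ i, g (u i) = w i := by
    intro u
    simp [hS, Fintype.mem_piFinset]
  -- occ decomposition
  have hocc : ∀ k, occ β k w = ∑ u ∈ S, occ ν k u := by
    intro k
    unfold occ
    rw [Finset.card_eq_sum_card_fiberwise
      (f := fun m => (fun i : Fin ℓ => ν (m + i))) (t := S)]
    · apply Finset.sum_congr rfl
      intro u hu
      congr 1
      ext m
      simp only [Finset.mem_filter]
      constructor
      · rintro ⟨⟨hm, _⟩, h2⟩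
        exact ⟨hm, fun i => congrFun h2 i⟩
      · rintro ⟨hm, h2⟩
        refine ⟨⟨hm, fun i => ?_⟩, funext h2⟩
        rw [hβ, h2 i, (hmem u).mp hu i]
    · intro m hm
      simp only [Finset.coe_filter, Set.mem_setOf_eq] at hm
      rw [Finset.mem_coe, hmem]
      intro i
      rw [← hβ]
      exact hm.2 i
  -- card of S
  have hcard : S.card = ∏ i, a (w i) := by
    rw [hS, Fintype.card_piFinset]
    exact Finset.prod_congr rfl (fun i _ => hg (w i))
  -- limit
  have hlim : Tendsto (fun k : ℕ => (occ β k w : ℝ) / k) atTop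
      (nhds (∑ _u ∈ S, 1 / (d : ℝ) ^ ℓ)) := by
    have := tendsto_finset_sum S (fun u _ => hν ℓ hℓ u)
    apply this.congr
    intro k
    rw [hocc k]
    push_cast
    rw [Finset.sum_div]
  convert hlim using 2
  rw [Finset.sum_const, hcard, nsmul_eq_mul]
  have hd0 : (d : ℝ) ≠ 0 := Nat.cast_ne_zero.mpr hd.ne'
  have hpa : ∀ i : Fin n, (p i : ℝ) = (a i : ℝ) / d := by
    intro i
    have := ha i
    have : (p i : ℝ) * d = (a i : ℝ) := by exact_mod_cast congrArg (Rat.cast : ℚ → ℝ) this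
    field_simp [← this]
    exact this
  rw [Finset.prod_congr rfl (fun i _ => hpa (w i))]
  push_cast
  rw [Finset.prod_div_distrib, Finset.prod_const]
  simp [Finset.card_univ]
  ring
end
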